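/- arXiv:0706.2720 — 8 statements merged into one kernel-verified Lean document; each statement's English description precedes it below -/
import Mathlib

section
/- If Ψ: (0,∞) → (0,∞) is non-increasing and satisfies C₁·Ψ(ε) ≤ Ψ(ε/2) for all 0 < ε ≤ σ with some constant C₁ > 1, then for h = log C₁ / log 2 one has ∫_ε^σ Ψ(u)/u du ≤ C₁ h⁻¹ Ψ(ε) for all 0 < ε ≤ σ. -/
open MeasureTheory

private lemma stmt0_intgr (Ψ : ℝ → ℝ) (hcont : ContinuousOn Ψ (Set.Ioi 0))
    {a b : ℝ} (ha : 0 < a) (hab : a ≤ b) :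
    IntervalIntegrable (fun u => Ψ u / u) volume a b := by
  apply ContinuousOn.intervalIntegrable
  apply ContinuousOn.div (hcont.mono ?_) continuousOn_id ?_
  · intro x hx
    rw [Set.uIcc_of_le hab] at hx
    exact lt_of_lt_of_le ha hx.1
  · intro x hx
    rw [Set.uIcc_of_le hab] at hx
    exact ne_of_gt (lt_of_lt_of_le ha hx.1)

/-- On an interval `[a,b]` with `b ≤ 2a`, the integral is bounded by `Ψ a * log 2`. -/
private lemma stmt0_step (Ψ : ℝ → ℝ)
    (hanti : ∀ x y, 0 < x → x ≤ y → Ψ y ≤ Ψ x)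
    (hcont : ContinuousOn Ψ (Set.Ioi 0))
    {a b : ℝ} (ha : 0 < a) (hab : a ≤ b) (hb2 : b ≤ 2 * a) (hΨpos : 0 ≤ Ψ a) :
    (∫ u in a..b, Ψ u / u) ≤ Ψ a * Real.log 2 := by
  have hzero : (0:ℝ) ∉ Set.uIcc a b := by
    rw [Set.uIcc_of_le hab]
    intro h
    exact absurd h.1 (not_le.2 ha)
  have h1 : (∫ u in a..b, Ψ u / u) ≤ ∫ u in a..b, Ψ a / u := by
    apply intervalIntegral.integral_mono_on hab (stmt0_intgr Ψ hcont ha hab)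
    · apply ContinuousOn.intervalIntegrable
      apply ContinuousOn.div continuousOn_const continuousOn_id
      intro x hx
      rw [Set.uIcc_of_le hab] at hx
      exact ne_of_gt (lt_of_lt_of_le ha hx.1)
    · intro x hx
      exact div_le_div_of_nonneg_right (hanti a x ha hx.1) (lt_of_lt_of_le ha hx.1).le
  have h2 : (∫ u in a..b, Ψ a / u) = Ψ a * Real.log (b / a) := by
    simp_rw [div_eq_mul_inv]
    rw [intervalIntegral.integral_const_mul, integral_inv hzero, ← div_eq_mul_inv]
  have h3 : Real.log (b / a) ≤ Real.log 2 := by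
    apply Real.log_le_log (div_pos (ha.trans_le hab) ha)
    rw [div_le_iff₀ ha]
    linarith
  calc (∫ u in a..b, Ψ u / u) ≤ Ψ a * Real.log (b / a) := h2 ▸ h1
    _ ≤ Ψ a * Real.log 2 := mul_le_mul_of_nonneg_left h3 hΨpos

private lemma stmt0_dyadic (Ψ : ℝ → ℝ) (σ C₁ : ℝ) (hσ : 0 < σ) (hC₁ : 1 < C₁)
    (hpos : ∀ x, 0 < x → 0 < Ψ x)
    (hanti : ∀ x y, 0 < x → x ≤ y → Ψ y ≤ Ψ x)
    (hcont : ContinuousOn Ψ (Set.Ioi 0))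
    (hreg : ∀ ε, 0 < ε → ε ≤ σ → C₁ * Ψ ε ≤ Ψ (ε / 2)) :
    ∀ n : ℕ, ∀ ε, 0 < ε → ε ≤ σ → σ ≤ 2 ^ n * ε →
      (∫ u in ε..σ, Ψ u / u) ≤
        Real.log 2 * Ψ ε * ∑ k ∈ Finset.range n, (C₁⁻¹) ^ k := by
  intro n
  induction n with
  | zero =>
    intro ε hε hεσ hσε
    simp only [pow_zero, one_mul] at hσε
    have : ε = σ := le_antisymm hεσ hσε
    simp [this]
  | succ n ih =>
    intro ε hε hεσ hσε
    have hlog2 : (0:ℝ) < Real.log 2 := Real.log_pos one_lt_two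
    have hΨε : 0 < Ψ ε := hpos ε hε
    have hsum1 : (1:ℝ) ≤ ∑ k ∈ Finset.range (n+1), (C₁⁻¹) ^ k := by
      have h0 : ∀ k ∈ Finset.range (n+1), (0:ℝ) ≤ (C₁⁻¹) ^ k := by
        intro k _; positivity
      calc (1:ℝ) = (C₁⁻¹) ^ 0 := by simp
        _ ≤ _ := Finset.single_le_sum h0 (by simp)
    by_cases h2 : σ ≤ 2 * ε
    · calc (∫ u in ε..σ, Ψ u / u) ≤ Ψ ε * Real.log 2 :=
          stmt0_step Ψ hanti hcont hε hεσ h2 hΨε.le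
        _ = Real.log 2 * Ψ ε * 1 := by ring
        _ ≤ _ := by
          apply mul_le_mul_of_nonneg_left hsum1 (by positivity)
    · push_neg at h2
      have h2ε : (0:ℝ) < 2 * ε := by linarith
      have h2εσ : 2 * ε ≤ σ := h2.le
      have hsplit : (∫ u in ε..σ, Ψ u / u) =
          (∫ u in ε..(2*ε), Ψ u / u) + ∫ u in (2*ε)..σ, Ψ u / u := by
        rw [intervalIntegral.integral_add_adjacent_intervals
          (stmt0_intgr Ψ hcont hε (by linarith))
          (stmt0_intgr Ψ hcont h2ε h2εσ)]
      have hIH : (∫ u in (2*ε)..σ, Ψ u / u) ≤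
          Real.log 2 * Ψ (2*ε) * ∑ k ∈ Finset.range n, (C₁⁻¹) ^ k := by
        apply ih (2*ε) h2ε h2εσ
        calc σ ≤ 2 ^ (n+1) * ε := hσε
          _ = 2 ^ n * (2 * ε) := by ring
      have hΨ2ε : Ψ (2*ε) ≤ C₁⁻¹ * Ψ ε := by
        have := hreg (2*ε) h2ε h2εσ
        have h2e : 2 * ε / 2 = ε := by ring
        rw [h2e] at this
        rw [inv_mul_eq_div, le_div_iff₀ (by linarith : (0:ℝ) < C₁)]
        linarith
      have hfirst : (∫ u in ε..(2*ε), Ψ u / u) ≤ Ψ ε * Real.log 2 :=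
        stmt0_step Ψ hanti hcont hε (by linarith) le_rfl hΨε.le
      have hsumnn : (0:ℝ) ≤ ∑ k ∈ Finset.range n, (C₁⁻¹) ^ k :=
        Finset.sum_nonneg fun k _ => by positivity
      have hIH2 : (∫ u in (2*ε)..σ, Ψ u / u) ≤
          Real.log 2 * (C₁⁻¹ * Ψ ε) * ∑ k ∈ Finset.range n, (C₁⁻¹) ^ k := by
        refine le_trans hIH ?_
        apply mul_le_mul_of_nonneg_right _ hsumnn
        exact mul_le_mul_of_nonneg_left hΨ2ε hlog2.le
      rw [hsplit, geom_sum_succ]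
      calc (∫ u in ε..(2*ε), Ψ u / u) + ∫ u in (2*ε)..σ, Ψ u / u
          ≤ Ψ ε * Real.log 2 +
            Real.log 2 * (C₁⁻¹ * Ψ ε) * ∑ k ∈ Finset.range n, (C₁⁻¹) ^ k :=
            add_le_add hfirst hIH2
        _ = Real.log 2 * Ψ ε * (C₁⁻¹ * ∑ k ∈ Finset.range n, (C₁⁻¹) ^ k + 1) := by
            ring

/-- If `Ψ` is non-increasing, positive on `(0,∞)` and satisfies `C₁·Ψ(ε) ≤ Ψ(ε/2)`
for all `0 < ε ≤ σ` with `C₁ > 1`, then with `h = log C₁ / log 2` one has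
`∫_ε^σ Ψ(u)/u du ≤ C₁ h⁻¹ Ψ(ε)` for all `0 < ε ≤ σ`. -/
theorem stmt0 (Ψ : ℝ → ℝ) (σ C₁ : ℝ) (hσ : 0 < σ) (hC₁ : 1 < C₁)
    (hpos : ∀ x, 0 < x → 0 < Ψ x)
    (hanti : ∀ x y, 0 < x → x ≤ y → Ψ y ≤ Ψ x)
    (hcont : ContinuousOn Ψ (Set.Ioi 0))
    (hreg : ∀ ε, 0 < ε → ε ≤ σ → C₁ * Ψ ε ≤ Ψ (ε / 2)) :
    ∀ ε, 0 < ε → ε ≤ σ →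
      (∫ u in ε..σ, Ψ u / u) ≤ C₁ * (Real.log C₁ / Real.log 2)⁻¹ * Ψ ε := by
  intro ε hε hεσ
  obtain ⟨n, hn⟩ := pow_unbounded_of_one_lt (σ / ε) (one_lt_two : (1:ℝ) < 2)
  have hσε : σ ≤ 2 ^ n * ε := by
    rw [div_lt_iff₀ hε] at hn
    linarith
  have key := stmt0_dyadic Ψ σ C₁ hσ hC₁ hpos hanti hcont hreg n ε hε hεσ hσε
  have hlog2 : (0:ℝ) < Real.log 2 := Real.log_pos one_lt_two
  have hlogC₁ : (0:ℝ) < Real.log C₁ := Real.log_pos hC₁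
  have hΨε : 0 < Ψ ε := hpos ε hε
  have hC₁0 : (0:ℝ) < C₁ := by linarith
  have hr : C₁⁻¹ < 1 := inv_lt_one_of_one_lt₀ hC₁
  have hr0 : (0:ℝ) < C₁⁻¹ := by positivity
  -- geometric sum bound
  have hsum : ∑ k ∈ Finset.range n, (C₁⁻¹) ^ k ≤ C₁ / (C₁ - 1) := by
    have h := hasSum_geometric_of_lt_one hr0.le hr
    calc ∑ k ∈ Finset.range n, (C₁⁻¹) ^ k ≤ (1 - C₁⁻¹)⁻¹ :=
        sum_le_hasSum _ (fun k _ => by positivity) h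
      _ = C₁ / (C₁ - 1) := by
          rw [inv_eq_one_div]
          field_simp
  have hlogle : Real.log C₁ ≤ C₁ - 1 := Real.log_le_sub_one_of_pos hC₁0
  have hfinal : Real.log 2 * Ψ ε * (C₁ / (C₁ - 1)) ≤
      C₁ * (Real.log C₁ / Real.log 2)⁻¹ * Ψ ε := by
    have hdiv : C₁ / (C₁ - 1) ≤ C₁ / Real.log C₁ := by
      gcongr
    rw [inv_div]
    calc Real.log 2 * Ψ ε * (C₁ / (C₁ - 1))
        ≤ Real.log 2 * Ψ ε * (C₁ / Real.log C₁) :=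
          mul_le_mul_of_nonneg_left hdiv (by positivity)
      _ = C₁ * (Real.log 2 / Real.log C₁) * Ψ ε := by ring
  calc (∫ u in ε..σ, Ψ u / u)
      ≤ Real.log 2 * Ψ ε * ∑ k ∈ Finset.range n, (C₁⁻¹) ^ k := key
    _ ≤ Real.log 2 * Ψ ε * (C₁ / (C₁ - 1)) :=
        mul_le_mul_of_nonneg_left hsum (by positivity)
    _ ≤ _ := hfinal
end

section
/- Let ξ₁, ξ₂, … be i.i.d. standard Gaussian random variables. There is a universal constant c₁ > 0 such that for all real L > 0 and all integers N ≥ 1 with 2L ≤ N, one has −log E[exp(−L·max_{1≤i≤N} |ξᵢ|)] ≤ c₁·L·√(log(N/L)). -/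
open MeasureTheory ProbabilityTheory Real Filter
open scoped ENNReal NNReal

lemma aux_deriv {t : ℝ} (ht : 1 ≤ t) :
    (∀ x ∈ Set.Ici t, HasDerivAt (fun y : ℝ => -Real.exp (-(y^2/2)))
      (x * Real.exp (-(x^2/2))) x) := by
  intro x _
  have h1 : HasDerivAt (fun y : ℝ => -(y^2/2)) (-x) x := by
    have := ((hasDerivAt_pow 2 x).div_const 2).neg
    refine this.congr_deriv ?_
    ring
  have := (h1.exp).neg
  refine this.congr_deriv ?_
  ring

lemma aux_tend : Tendsto (fun y : ℝ => -Real.exp (-(y^2/2))) atTop (nhds 0) := by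
  rw [show (0:ℝ) = -0 by ring]
  refine Tendsto.neg ?_
  refine Real.tendsto_exp_atBot.comp ?_
  refine Filter.tendsto_neg_atTop_atBot.comp ?_
  exact (tendsto_pow_atTop (two_ne_zero)).atTop_div_const (by norm_num)

lemma aux_pos {t : ℝ} (ht : 1 ≤ t) : ∀ x ∈ Set.Ioi t, 0 ≤ x * Real.exp (-(x^2/2)) := by
  intro x hx
  have : (0:ℝ) < x := by have := hx.out; linarith
  positivity

lemma tail_integral {t : ℝ} (ht : 1 ≤ t) :
    ∫ x in Set.Ioi t, x * Real.exp (-(x^2/2)) = Real.exp (-(t^2/2)) := by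
  have := integral_Ioi_of_hasDerivAt_of_nonneg' (aux_deriv ht) (aux_pos ht) aux_tend
  simpa using this

lemma tail_integrable {t : ℝ} (ht : 1 ≤ t) :
    IntegrableOn (fun x => x * Real.exp (-(x^2/2))) (Set.Ioi t) :=
  integrableOn_Ioi_deriv_of_nonneg' (aux_deriv ht) (aux_pos ht) aux_tend

lemma pdf_tail {t : ℝ} (ht : 1 ≤ t) :
    ∫ x in Set.Ioi t, gaussianPDFReal 0 1 x ≤ Real.exp (-(t^2/2)) / 2 := by
  have key : ∫ x in Set.Ioi t, gaussianPDFReal 0 1 x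
      ≤ ∫ x in Set.Ioi t, (1/2) * (x * Real.exp (-(x^2/2))) := by
    refine setIntegral_mono_on ((integrable_gaussianPDFReal 0 1).integrableOn)
      ((tail_integrable ht).const_mul _) measurableSet_Ioi ?_
    intro x hx
    have hx1 : 1 ≤ x := le_trans ht hx.out.le
    have hpdf : gaussianPDFReal 0 1 x = (Real.sqrt (2*π))⁻¹ * Real.exp (-(x^2/2)) := by
      unfold gaussianPDFReal
      norm_num
      left; ring
    rw [hpdf]
    have h2 : (Real.sqrt (2*π))⁻¹ ≤ 1/2 := by
      rw [inv_le_comm₀ (by positivity) (by norm_num)]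
      rw [show ((1:ℝ)/2)⁻¹ = 2 by norm_num, Real.le_sqrt' (by norm_num)]
      nlinarith [Real.pi_gt_three]
    have h3 : Real.exp (-(x^2/2)) ≤ x * Real.exp (-(x^2/2)) :=
      le_mul_of_one_le_left (Real.exp_pos _).le hx1
    have := Real.exp_pos (-(x^2/2))
    nlinarith [Real.sqrt_nonneg (2*π), inv_nonneg.2 (Real.sqrt_nonneg (2*π))]
  rw [integral_const_mul, tail_integral ht] at key
  linarith

lemma gauss_compl {t : ℝ} (ht : 1 ≤ t) :
    gaussianReal 0 1 (Set.Icc (-t) t)ᶜ ≤ ENNReal.ofReal (Real.exp (-(t^2/2))) := by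
  have hcompl : (Set.Icc (-t) t)ᶜ = Set.Iio (-t) ∪ Set.Ioi t := by
    ext x
    simp only [Set.mem_compl_iff, Set.mem_Icc, Set.mem_union, Set.mem_Iio, Set.mem_Ioi,
      not_and_or, not_le]
  rw [hcompl]
  refine le_trans (measure_union_le _ _) ?_
  have hIoi : gaussianReal 0 1 (Set.Ioi t) ≤ ENNReal.ofReal (Real.exp (-(t^2/2)) / 2) := by
    rw [gaussianReal_apply_eq_integral 0 one_ne_zero]
    exact ENNReal.ofReal_le_ofReal (pdf_tail ht)
  have hIio : gaussianReal 0 1 (Set.Iio (-t)) = gaussianReal 0 1 (Set.Ioi t) := by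
    have hmap := gaussianReal_map_const_mul (μ := 0) (v := 1) (-1)
    have h1 : (⟨(-1:ℝ)^2, sq_nonneg _⟩ : NNReal) * 1 = 1 := by
      ext; norm_num
    rw [show (-1:ℝ)*0 = 0 by ring] at hmap
    erw [h1] at hmap
    calc gaussianReal 0 1 (Set.Iio (-t))
        = gaussianReal 0 1 (((-1 : ℝ) * ·) ⁻¹' (Set.Ioi t)) := by
          congr 1
          ext x
          simp only [Set.mem_Iio, Set.mem_preimage, Set.mem_Ioi]
          constructor <;> intro h <;> linarith
      _ = ((gaussianReal 0 1).map ((-1 : ℝ) * ·)) (Set.Ioi t) := by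
          rw [Measure.map_apply (measurable_const_mul _) measurableSet_Ioi]
      _ = gaussianReal 0 1 (Set.Ioi t) := by rw [hmap]; rfl
  rw [hIio]
  refine le_trans (add_le_add hIoi hIoi) ?_
  rw [← ENNReal.ofReal_add (by positivity) (by positivity)]
  apply ENNReal.ofReal_le_ofReal
  linarith


lemma exp_neg_two_le {x : ℝ} (h0 : 0 ≤ x) (h2 : x ≤ 1/2) : Real.exp (-(2*x)) ≤ 1 - x := by
  have hmul : Real.exp (-(2*x)) * Real.exp (2*x) = 1 := by
    rw [← Real.exp_add]; norm_num
  nlinarith [Real.add_one_le_exp (2*x), Real.exp_pos (-(2*x)), sq_nonneg x]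

/-- There is a universal constant `c₁ > 0` such that for i.i.d. standard Gaussians
`ξ₁, ξ₂, …`, all `L > 0` and all integers `N ≥ 1` with `2L ≤ N`:
`-log E[exp(-L·max_{1≤i≤N} |ξᵢ|)] ≤ c₁·L·√(log(N/L))`. -/
theorem stmt6 :
    ∃ c₁ : ℝ, 0 < c₁ ∧
      ∀ (Ω : Type) [MeasurableSpace Ω] (P : Measure Ω), IsProbabilityMeasure P →
      ∀ ξ : ℕ → Ω → ℝ,
        iIndepFun ξ P →
        (∀ i, Measure.map (ξ i) P = gaussianReal 0 1) →
        ∀ (L : ℝ) (N : ℕ), 0 < L → 1 ≤ N → 2 * L ≤ (N : ℝ) →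
          -Real.log (∫ ω, Real.exp (-(L * ⨆ i : Fin N, |ξ i ω|)) ∂P) ≤
            c₁ * L * Real.sqrt (Real.log (N / L)) := by
  refine ⟨5, by norm_num, ?_⟩
  intro Ω mΩ P hP ξ hind hmap L N hL hN1 hLN
  haveI := hP
  haveI hne : Nonempty (Fin N) := ⟨⟨0, hN1⟩⟩
  have hN0 : (0:ℝ) < N := by
    have : (1:ℝ) ≤ N := by exact_mod_cast hN1
    linarith
  have hR2 : (2:ℝ) ≤ N / L := (le_div_iff₀ hL).2 (by linarith)
  have hlog2 : (0.6931471803:ℝ) < Real.log 2 := Real.log_two_gt_d9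
  have hlogR : Real.log 2 ≤ Real.log ((N:ℝ) / L) := Real.log_le_log (by norm_num) hR2
  set t : ℝ := Real.sqrt (2 * Real.log (2 * ((N:ℝ) / L))) with htdef
  have hlog2R : Real.log (2*((N:ℝ)/L)) = Real.log 2 + Real.log ((N:ℝ)/L) :=
    Real.log_mul (by norm_num) (by positivity)
  have hargnn : (0:ℝ) ≤ 2 * Real.log (2 * ((N:ℝ)/L)) := by
    rw [hlog2R]; linarith
  have ht1 : 1 ≤ t := by
    rw [htdef, show (1:ℝ) = Real.sqrt 1 by rw [Real.sqrt_one]]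
    apply Real.sqrt_le_sqrt
    rw [hlog2R]; linarith
  have htsq : t^2 = 2 * Real.log (2*((N:ℝ)/L)) := Real.sq_sqrt hargnn
  have hexp_eq : Real.exp (-(t^2/2)) = L / (2*N) := by
    rw [htsq, show -(2 * Real.log (2*((N:ℝ)/L)) / 2) = -Real.log (2*((N:ℝ)/L)) by ring,
      Real.exp_neg, Real.exp_log (by positivity),
      show 2*((N:ℝ)/L) = (2*(N:ℝ))/L by ring, inv_div]
  -- measurable versions
  have hAEM : ∀ i, AEMeasurable (ξ i) P := by
    intro i
    by_contra h
    have h0 := Measure.map_of_not_aemeasurable h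
    rw [hmap i] at h0
    exact (IsProbabilityMeasure.ne_zero (gaussianReal 0 1)) h0
  set g : ℕ → Ω → ℝ := fun i => (hAEM i).mk (ξ i) with hgdef
  have hg : ∀ i, Measurable (g i) := fun i => (hAEM i).measurable_mk
  have hge : ∀ i, ξ i =ᵐ[P] g i := fun i => (hAEM i).ae_eq_mk
  have hae : ∀ᵐ ω ∂P, ∀ i : Fin N, ξ (i:ℕ) ω = g (i:ℕ) ω :=
    ae_all_iff.mpr fun i => hge (i:ℕ)
  set M : Ω → ℝ := fun ω => ⨆ i : Fin N, |g (i:ℕ) ω| with hMdef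
  have hMmeas : Measurable M := by
    have hF := Finset.measurable_sup' (Finset.univ_nonempty (α := Fin N))
      (f := fun i : Fin N => fun ω => |g (i:ℕ) ω|) (fun i _ => (hg (i:ℕ)).abs)
    convert hF using 1
    funext ω
    rw [Finset.sup'_apply]
    exact (Finset.sup'_univ_eq_ciSup _).symm
  have hMnonneg : ∀ ω, 0 ≤ M ω := by
    intro ω
    show 0 ≤ ⨆ i : Fin N, |g (i:ℕ) ω|
    exact (abs_nonneg _).trans (le_ciSup (Set.Finite.bddAbove (Set.finite_range
      (fun i : Fin N => |g (i:ℕ) ω|))) (Classical.arbitrary (Fin N)))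
  have hcongr : (fun ω => Real.exp (-(L * ⨆ i : Fin N, |ξ (i:ℕ) ω|))) =ᵐ[P]
      (fun ω => Real.exp (-(L * M ω))) := by
    filter_upwards [hae] with ω hω
    have h9 : (⨆ i : Fin N, |ξ (i:ℕ) ω|) = M ω := by
      show _ = ⨆ i : Fin N, |g (i:ℕ) ω|
      exact iSup_congr fun i => by rw [hω i]
    rw [h9]
  set A : Set Ω := ⋂ i ∈ Finset.range N, (g i) ⁻¹' (Set.Icc (-t) t) with hAdef
  have hA : MeasurableSet A :=
    Finset.measurableSet_biInter _ fun i _ => (hg i) measurableSet_Icc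
  -- lower bound on P A
  have hfac : ∀ i, ENNReal.ofReal (Real.exp (-(L/N))) ≤ P ((ξ i) ⁻¹' (Set.Icc (-t) t)) := by
    intro i
    have h1 : P ((ξ i) ⁻¹' (Set.Icc (-t) t)) = gaussianReal 0 1 (Set.Icc (-t) t) := by
      rw [← hmap i, Measure.map_apply_of_aemeasurable (hAEM i) measurableSet_Icc]
    rw [h1]
    have h2 : gaussianReal 0 1 (Set.Icc (-t) t)ᶜ ≤ ENNReal.ofReal (L/(2*N)) := by
      have h := gauss_compl ht1
      rwa [hexp_eq] at h
    have hx0 : (0:ℝ) ≤ L/(2*N) := by positivity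
    have hx2 : L/(2*N) ≤ 1/2 := by
      rw [div_le_div_iff₀ (by linarith) (by norm_num)]
      linarith
    have h4 : Real.exp (-(L/N)) ≤ 1 - L/(2*N) := by
      have h5 := exp_neg_two_le hx0 hx2
      rw [show 2*(L/(2*(N:ℝ))) = L/N by field_simp] at h5
      exact h5
    calc ENNReal.ofReal (Real.exp (-(L/N)))
        ≤ ENNReal.ofReal (1 - L/(2*N)) := ENNReal.ofReal_le_ofReal h4
      _ = 1 - ENNReal.ofReal (L/(2*N)) := by
          rw [ENNReal.ofReal_sub _ hx0, ENNReal.ofReal_one]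
      _ ≤ gaussianReal 0 1 (Set.Icc (-t) t) := by
          rw [tsub_le_iff_right]
          calc (1:ℝ≥0∞) = gaussianReal 0 1 (Set.Icc (-t) t)
                + gaussianReal 0 1 (Set.Icc (-t) t)ᶜ := by
                rw [measure_add_measure_compl measurableSet_Icc, measure_univ]
            _ ≤ gaussianReal 0 1 (Set.Icc (-t) t) + ENNReal.ofReal (L/(2*N)) :=
                add_le_add_right h2 _
  have hAxi : P (⋂ i ∈ Finset.range N, (ξ i) ⁻¹' (Set.Icc (-t) t)) =
      ∏ i ∈ Finset.range N, P ((ξ i) ⁻¹' (Set.Icc (-t) t)) :=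
    hind.meas_biInter (fun i _ => ⟨Set.Icc (-t) t, measurableSet_Icc, rfl⟩)
  have hPA1 : ENNReal.ofReal (Real.exp (-L)) ≤
      P (⋂ i ∈ Finset.range N, (ξ i) ⁻¹' (Set.Icc (-t) t)) := by
    rw [hAxi]
    calc ENNReal.ofReal (Real.exp (-L))
        = ENNReal.ofReal (Real.exp (-(L/N)) ^ N) := by
          rw [← Real.exp_nat_mul]
          congr 2
          field_simp
      _ = ENNReal.ofReal (Real.exp (-(L/N))) ^ N := ENNReal.ofReal_pow (Real.exp_pos _).le N
      _ = ∏ _i ∈ Finset.range N, ENNReal.ofReal (Real.exp (-(L/N))) := by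
          rw [Finset.prod_const, Finset.card_range]
      _ ≤ ∏ i ∈ Finset.range N, P ((ξ i) ⁻¹' (Set.Icc (-t) t)) :=
          Finset.prod_le_prod' fun i _ => hfac i
  have hPA : ENNReal.ofReal (Real.exp (-L)) ≤ P A := by
    have heq : P (⋂ i ∈ Finset.range N, (ξ i) ⁻¹' (Set.Icc (-t) t)) = P A := by
      apply measure_congr
      rw [Filter.eventuallyEq_set]
      filter_upwards [hae] with ω hω
      simp only [hAdef, Set.mem_iInter, Set.mem_preimage]
      constructor
      · intro h i hi
        have h2 : ξ i ω = g i ω := hω ⟨i, Finset.mem_range.mp hi⟩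
        rw [← h2]; exact h i hi
      · intro h i hi
        have h2 : ξ i ω = g i ω := hω ⟨i, Finset.mem_range.mp hi⟩
        rw [h2]; exact h i hi
    rw [← heq]; exact hPA1
  -- integral lower bound
  set f : Ω → ℝ := fun ω => Real.exp (-(L * M ω)) with hfdef
  have hfmeas : Measurable f := Real.measurable_exp.comp ((hMmeas.const_mul L).neg)
  have hfint : Integrable f P := by
    refine Integrable.mono' (integrable_const 1) hfmeas.aestronglyMeasurable
      (ae_of_all _ fun ω => ?_)
    rw [Real.norm_eq_abs, abs_of_pos (Real.exp_pos _), Real.exp_le_one_iff]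
    have := hMnonneg ω
    nlinarith
  have hlow : ∀ ω, A.indicator (fun _ => Real.exp (-(L*t))) ω ≤ f ω := by
    intro ω
    by_cases hω : ω ∈ A
    · rw [Set.indicator_of_mem hω]
      apply Real.exp_le_exp.mpr
      have hMle : M ω ≤ t := by
        apply ciSup_le
        intro i
        simp only [hAdef, Set.mem_iInter, Set.mem_preimage, Set.mem_Icc] at hω
        have h := hω (i:ℕ) (Finset.mem_range.mpr i.isLt)
        exact abs_le.mpr h
      nlinarith
    · rw [Set.indicator_of_notMem hω]
      exact (Real.exp_pos _).le
  have hE1 : Real.exp (-(L*t+L)) ≤ ∫ ω, f ω ∂P := by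
    have h5 := integral_mono ((integrable_const _).indicator hA) hfint hlow
    rw [integral_indicator_const _ hA, smul_eq_mul] at h5
    have h6 : Real.exp (-L) ≤ (P A).toReal := by
      have h7 := ENNReal.toReal_mono (measure_ne_top P A) hPA
      rwa [ENNReal.toReal_ofReal (Real.exp_pos _).le] at h7
    calc Real.exp (-(L*t+L)) = Real.exp (-L) * Real.exp (-(L*t)) := by
          rw [← Real.exp_add]; ring_nf
      _ ≤ (P A).toReal * Real.exp (-(L*t)) :=
          mul_le_mul_of_nonneg_right h6 (Real.exp_pos _).le
      _ ≤ ∫ ω, f ω ∂P := h5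
  have hE : Real.exp (-(L*t+L)) ≤ ∫ ω, Real.exp (-(L * ⨆ i : Fin N, |ξ (i:ℕ) ω|)) ∂P := by
    rw [integral_congr_ae hcongr]; exact hE1
  have hloglb : -(L*t+L) ≤ Real.log (∫ ω, Real.exp (-(L * ⨆ i : Fin N, |ξ (i:ℕ) ω|)) ∂P) :=
    calc -(L*t+L) = Real.log (Real.exp (-(L*t+L))) := (Real.log_exp _).symm
      _ ≤ _ := Real.log_le_log (Real.exp_pos _) hE
  have hs2 : t ≤ 2 * Real.sqrt (Real.log ((N:ℝ)/L)) := by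
    rw [htdef, show 2 * Real.sqrt (Real.log ((N:ℝ)/L)) = Real.sqrt (4 * Real.log ((N:ℝ)/L)) by
      rw [show (4:ℝ) * Real.log ((N:ℝ)/L) = 2^2 * Real.log ((N:ℝ)/L) by norm_num,
        Real.sqrt_mul (by positivity), Real.sqrt_sq (by norm_num)]]
    apply Real.sqrt_le_sqrt
    rw [hlog2R]
    linarith
  have hs3 : 1 ≤ 3 * Real.sqrt (Real.log ((N:ℝ)/L)) := by
    have h8 : Real.sqrt (1/9) ≤ Real.sqrt (Real.log ((N:ℝ)/L)) :=
      Real.sqrt_le_sqrt (by linarith)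
    rw [show (1/9:ℝ) = (1/3)^2 by norm_num, Real.sqrt_sq (by norm_num)] at h8
    linarith
  have hfinal : L*t + L ≤ 5 * L * Real.sqrt (Real.log ((N:ℝ)/L)) := by
    have h1 : L * t ≤ L * (2*Real.sqrt (Real.log ((N:ℝ)/L))) :=
      mul_le_mul_of_nonneg_left hs2 hL.le
    have h2 : L ≤ L * (3*Real.sqrt (Real.log ((N:ℝ)/L))) := by nlinarith
    nlinarith
  linarith
end

section
/- Let ξ₁, ξ₂, … be i.i.d. standard Gaussian random variables. There is a universal constant c₂ > 0 such that for all L ≥ 1 and all integers N ≥ 1 with 2L ≤ N, one has −log E[exp(−L·max_{1≤i≤N} |ξᵢ|)] ≥ c₂·L·√(log(N/L)). -/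
open MeasureTheory ProbabilityTheory Real Set

namespace Stmt7Aux

noncomputable def pdf1 (x : ℝ) : ℝ := (Real.sqrt (2 * π))⁻¹ * Real.exp (-x ^ 2 / 2)

lemma gaussianPDFReal_one (x : ℝ) : gaussianPDFReal 0 1 x = pdf1 x := by
  simp [gaussianPDFReal, pdf1]

lemma γ_Ioc (a b : ℝ) :
    ((gaussianReal 0 1) (Ioc a b)).toReal = ∫ x in Ioc a b, pdf1 x := by
  rw [gaussianReal_apply_eq_integral 0 one_ne_zero, ENNReal.toReal_ofReal]
  · exact integral_congr_ae (ae_of_all _ fun x => gaussianPDFReal_one x)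
  · exact setIntegral_nonneg measurableSet_Ioc fun x _ => gaussianPDFReal_nonneg _ _ _

lemma pdf1_integrableOn (s : Set ℝ) : IntegrableOn pdf1 s := by
  have h : pdf1 = gaussianPDFReal 0 1 := funext fun x => (gaussianPDFReal_one x).symm
  rw [h]
  exact (integrable_gaussianPDFReal 0 1).integrableOn

lemma γ_Ioc_le {a b c : ℝ} (hab : a ≤ b) (hc : ∀ x ∈ Ioc a b, pdf1 x ≤ c) :
    ((gaussianReal 0 1) (Ioc a b)).toReal ≤ (b - a) * c := by
  rw [γ_Ioc]
  have h1 : ∫ x in Ioc a b, pdf1 x ≤ ∫ _x in Ioc a b, c :=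
    setIntegral_mono_on (pdf1_integrableOn _)
      (integrableOn_const measure_Ioc_lt_top.ne) measurableSet_Ioc hc
  have h2 : ∫ _x in Ioc a b, c = (b - a) * c := by
    rw [setIntegral_const, measureReal_def, Real.volume_Ioc, smul_eq_mul, ENNReal.toReal_ofReal (by linarith)]
  linarith

lemma γ_Ioc_ge {a b c : ℝ} (hab : a ≤ b) (hc : ∀ x ∈ Ioc a b, c ≤ pdf1 x) :
    (b - a) * c ≤ ((gaussianReal 0 1) (Ioc a b)).toReal := by
  rw [γ_Ioc]
  have h1 : ∫ _x in Ioc a b, c ≤ ∫ x in Ioc a b, pdf1 x :=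
    setIntegral_mono_on (integrableOn_const measure_Ioc_lt_top.ne)
      (pdf1_integrableOn _) measurableSet_Ioc hc
  have h2 : ∫ _x in Ioc a b, c = (b - a) * c := by
    rw [setIntegral_const, measureReal_def, Real.volume_Ioc, smul_eq_mul, ENNReal.toReal_ofReal (by linarith)]
  linarith

lemma pdf1_le {x m : ℝ} (h : m ≤ |x|) (hm : 0 ≤ m) :
    pdf1 x ≤ (Real.sqrt (2 * π))⁻¹ * Real.exp (-m ^ 2 / 2) := by
  unfold pdf1
  have hx2 : m ^ 2 ≤ x ^ 2 := by
    have := sq_abs x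
    nlinarith [abs_nonneg x]
  have := Real.exp_le_exp.2 (by linarith : -x ^ 2 / 2 ≤ -m ^ 2 / 2)
  have hs : (0:ℝ) ≤ (Real.sqrt (2 * π))⁻¹ := by positivity
  nlinarith [Real.exp_pos (-x ^ 2 / 2)]

lemma pdf1_ge {x m : ℝ} (h : |x| ≤ m) :
    (Real.sqrt (2 * π))⁻¹ * Real.exp (-m ^ 2 / 2) ≤ pdf1 x := by
  unfold pdf1
  have hx2 : x ^ 2 ≤ m ^ 2 := by
    have := sq_abs x
    nlinarith [abs_nonneg x]
  have := Real.exp_le_exp.2 (by linarith : -m ^ 2 / 2 ≤ -x ^ 2 / 2)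
  have hs : (0:ℝ) ≤ (Real.sqrt (2 * π))⁻¹ := by positivity
  nlinarith [Real.exp_pos (-m ^ 2 / 2)]

lemma sqrt_two_pi_lb : (2.5066 : ℝ) ≤ Real.sqrt (2 * π) := by
  rw [show (2.5066:ℝ) = Real.sqrt (2.5066 ^ 2) from (Real.sqrt_sq (by norm_num)).symm]
  apply Real.sqrt_le_sqrt
  nlinarith [Real.pi_gt_d6]

lemma sqrt_two_pi_ub : Real.sqrt (2 * π) ≤ 8 / 3 := by
  rw [show (8/3:ℝ) = Real.sqrt ((8/3) ^ 2) from (Real.sqrt_sq (by norm_num)).symm]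
  apply Real.sqrt_le_sqrt
  nlinarith [Real.pi_lt_d2]

lemma exp_neg_le_inv {u : ℝ} (hu : 0 ≤ u) : Real.exp (-u) ≤ (1 + u)⁻¹ := by
  have h1 : 1 + u ≤ Real.exp u := by linarith [Real.add_one_le_exp u]
  rw [Real.exp_neg]
  exact inv_anti₀ (by linarith) h1

lemma exp_neg_le_pow4 {u : ℝ} (hu : 0 ≤ u) : Real.exp (-u) ≤ ((1 + u / 4)⁻¹) ^ 4 := by
  have h : Real.exp (-u) = (Real.exp (-(u / 4))) ^ 4 := by
    rw [← Real.exp_nat_mul]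
    congr 1
    push_cast
    ring
  rw [h]
  exact pow_le_pow_left₀ (Real.exp_pos _).le (exp_neg_le_inv (by linarith)) 4

lemma γ_split (a b c : ℝ) :
    ((gaussianReal 0 1) (Ioc a c)).toReal ≤
      ((gaussianReal 0 1) (Ioc a b)).toReal + ((gaussianReal 0 1) (Ioc b c)).toReal := by
  have h : Ioc a c ⊆ Ioc a b ∪ Ioc b c := Ioc_subset_Ioc_union_Ioc
  have h2 : (gaussianReal 0 1) (Ioc a c) ≤
      (gaussianReal 0 1) (Ioc a b) + (gaussianReal 0 1) (Ioc b c) :=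
    (measure_mono h).trans (measure_union_le _ _)
  have := ENNReal.toReal_mono (ENNReal.add_ne_top.2 ⟨measure_ne_top _ _, measure_ne_top _ _⟩) h2
  rwa [ENNReal.toReal_add (measure_ne_top _ _) (measure_ne_top _ _)] at this


lemma w1_le : ((gaussianReal 0 1) (Ioo (-1:ℝ) 1)).toReal ≤ 0.72121 := by
  have h0 : ((gaussianReal 0 1) (Ioo (-1:ℝ) 1)).toReal
      ≤ ((gaussianReal 0 1) (Ioc (-1:ℝ) 1)).toReal :=
    ENNReal.toReal_mono (measure_ne_top _ _) (measure_mono Ioo_subset_Ioc_self)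
  have s1 := γ_split (-1:ℝ) (-3/4) 1
  have s2 := γ_split (-3/4:ℝ) (-1/2) 1
  have s3 := γ_split (-1/2:ℝ) (-1/4) 1
  have s4 := γ_split (-1/4:ℝ) 0 1
  have s5 := γ_split (0:ℝ) (1/4) 1
  have s6 := γ_split (1/4:ℝ) (1/2) 1
  have s7 := γ_split (1/2:ℝ) (3/4) 1
  set C : ℝ → ℝ := fun m => (Real.sqrt (2*π))⁻¹ * Real.exp (-m^2/2) with hC
  have p1 : ((gaussianReal 0 1) (Ioc (-1:ℝ) (-3/4))).toReal ≤ (-3/4 - (-1)) * C (3/4) :=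
    γ_Ioc_le (by norm_num) (fun x hx => pdf1_le
      (by rw [abs_of_nonpos (by linarith [hx.2])]; linarith [hx.2]) (by norm_num))
  have p2 : ((gaussianReal 0 1) (Ioc (-3/4:ℝ) (-1/2))).toReal ≤ (-1/2 - (-3/4)) * C (1/2) :=
    γ_Ioc_le (by norm_num) (fun x hx => pdf1_le
      (by rw [abs_of_nonpos (by linarith [hx.2])]; linarith [hx.2]) (by norm_num))
  have p3 : ((gaussianReal 0 1) (Ioc (-1/2:ℝ) (-1/4))).toReal ≤ (-1/4 - (-1/2)) * C (1/4) :=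
    γ_Ioc_le (by norm_num) (fun x hx => pdf1_le
      (by rw [abs_of_nonpos (by linarith [hx.2])]; linarith [hx.2]) (by norm_num))
  have p4 : ((gaussianReal 0 1) (Ioc (-1/4:ℝ) 0)).toReal ≤ (0 - (-1/4)) * C 0 :=
    γ_Ioc_le (by norm_num) (fun x _hx => pdf1_le (abs_nonneg x) le_rfl)
  have p5 : ((gaussianReal 0 1) (Ioc (0:ℝ) (1/4))).toReal ≤ (1/4 - 0) * C 0 :=
    γ_Ioc_le (by norm_num) (fun x _hx => pdf1_le (abs_nonneg x) le_rfl)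
  have p6 : ((gaussianReal 0 1) (Ioc (1/4:ℝ) (1/2))).toReal ≤ (1/2 - 1/4) * C (1/4) :=
    γ_Ioc_le (by norm_num) (fun x hx => pdf1_le
      (by rw [abs_of_pos (by linarith [hx.1])]; linarith [hx.1]) (by norm_num))
  have p7 : ((gaussianReal 0 1) (Ioc (1/2:ℝ) (3/4))).toReal ≤ (3/4 - 1/2) * C (1/2) :=
    γ_Ioc_le (by norm_num) (fun x hx => pdf1_le
      (by rw [abs_of_pos (by linarith [hx.1])]; linarith [hx.1]) (by norm_num))
  have p8 : ((gaussianReal 0 1) (Ioc (3/4:ℝ) 1)).toReal ≤ (1 - 3/4) * C (3/4) :=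
    γ_Ioc_le (by norm_num) (fun x hx => pdf1_le
      (by rw [abs_of_pos (by linarith [hx.1])]; linarith [hx.1]) (by norm_num))
  -- numeric bounds on C
  have hsp : (0:ℝ) < Real.sqrt (2*π) := lt_of_lt_of_le (by norm_num) sqrt_two_pi_lb
  have hinv : (Real.sqrt (2*π))⁻¹ ≤ (2.5066:ℝ)⁻¹ := inv_anti₀ (by norm_num) sqrt_two_pi_lb
  have hCm : ∀ m : ℝ, C m ≤ (2.5066:ℝ)⁻¹ * Real.exp (-m^2/2) := fun m =>
    mul_le_mul_of_nonneg_right hinv (Real.exp_pos _).le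
  have e34 : Real.exp (-((3:ℝ)/4)^2/2) ≤ ((128:ℝ)/137)^4 := by
    have h := exp_neg_le_pow4 (u := (9/32:ℝ)) (by norm_num)
    norm_num at h ⊢
    try exact h
    try linarith
  have e12 : Real.exp (-((1:ℝ)/2)^2/2) ≤ ((32:ℝ)/33)^4 := by
    have h := exp_neg_le_pow4 (u := (1/8:ℝ)) (by norm_num)
    norm_num at h ⊢
    try exact h
    try linarith
  have e14 : Real.exp (-((1:ℝ)/4)^2/2) ≤ ((128:ℝ)/129)^4 := by
    have h := exp_neg_le_pow4 (u := (1/32:ℝ)) (by norm_num)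
    norm_num at h ⊢
    try exact h
    try linarith
  have e0 : Real.exp (-(0:ℝ)^2/2) = 1 := by norm_num
  have c34 : C (3/4) ≤ (2.5066:ℝ)⁻¹ * ((128:ℝ)/137)^4 :=
    (hCm _).trans (by gcongr <;> norm_num)
  have c12 : C (1/2) ≤ (2.5066:ℝ)⁻¹ * ((32:ℝ)/33)^4 :=
    (hCm _).trans (by gcongr <;> norm_num)
  have c14 : C (1/4) ≤ (2.5066:ℝ)⁻¹ * ((128:ℝ)/129)^4 :=
    (hCm _).trans (by gcongr <;> norm_num)
  have c0 : C 0 ≤ (2.5066:ℝ)⁻¹ * 1 := (hCm _).trans (by rw [e0])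
  have final : (2.5066:ℝ)⁻¹ * (1/2) * (((128:ℝ)/137)^4 + ((32:ℝ)/33)^4 + ((128:ℝ)/129)^4 + 1)
      ≤ 0.72121 := by norm_num
  linarith

lemma tail_ge_pos {t : ℝ} (ht : 0 ≤ t) :
    (Real.sqrt (2*π))⁻¹ * Real.exp (-(t+1)^2/2)
      ≤ ((gaussianReal 0 1) (Ioc t (t+1))).toReal := by
  have := γ_Ioc_ge (a := t) (b := t+1) (c := (Real.sqrt (2*π))⁻¹ * Real.exp (-(t+1)^2/2))
    (by linarith) (fun x hx => pdf1_ge (by rw [abs_of_pos (by linarith [hx.1])]; exact hx.2))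
  linarith

lemma tail_ge_neg {t : ℝ} (ht : 0 ≤ t) :
    (Real.sqrt (2*π))⁻¹ * Real.exp (-(t+1)^2/2)
      ≤ ((gaussianReal 0 1) (Ioc (-(t+1)) (-t))).toReal := by
  have := γ_Ioc_ge (a := -(t+1)) (b := -t) (c := (Real.sqrt (2*π))⁻¹ * Real.exp (-(t+1)^2/2))
    (by linarith) (fun x hx => pdf1_ge (by rw [abs_of_nonpos (by linarith [hx.2])]; linarith [hx.1]))
  linarith

lemma w_le_compl {t : ℝ} (ht : 0 ≤ t) :
    ((gaussianReal 0 1) (Ioo (-t) t)).toReal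
      ≤ 1 - (((gaussianReal 0 1) (Ioc t (t+1))).toReal
          + ((gaussianReal 0 1) (Ioc (-(t+1)) (-t))).toReal) := by
  set μ := gaussianReal 0 1 with hμ
  have hd1 : Disjoint (Ioo (-t) t) (Ioc t (t+1)) := by
    rw [Set.disjoint_left]
    rintro x ⟨_, h2⟩ ⟨h3, _⟩
    linarith
  have hd2 : Disjoint (Ioo (-t) t ∪ Ioc t (t+1)) (Ioc (-(t+1)) (-t)) := by
    rw [Set.disjoint_left]
    rintro x (⟨h1, _⟩ | ⟨h1, _⟩) ⟨_, h4⟩ <;> linarith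
  have hu1 : μ (Ioo (-t) t ∪ Ioc t (t+1)) = μ (Ioo (-t) t) + μ (Ioc t (t+1)) :=
    measure_union hd1 measurableSet_Ioc
  have hu2 : μ ((Ioo (-t) t ∪ Ioc t (t+1)) ∪ Ioc (-(t+1)) (-t))
      = μ (Ioo (-t) t ∪ Ioc t (t+1)) + μ (Ioc (-(t+1)) (-t)) :=
    measure_union hd2 measurableSet_Ioc
  have hle : μ (Ioo (-t) t) + μ (Ioc t (t+1)) + μ (Ioc (-(t+1)) (-t)) ≤ 1 := by
    rw [← hu1, ← hu2]
    exact prob_le_one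
  have h1 : (μ (Ioo (-t) t) + μ (Ioc t (t+1)) + μ (Ioc (-(t+1)) (-t))).toReal
      = (μ (Ioo (-t) t)).toReal + (μ (Ioc t (t+1))).toReal + (μ (Ioc (-(t+1)) (-t))).toReal := by
    rw [ENNReal.toReal_add (ENNReal.add_ne_top.2 ⟨measure_ne_top _ _, measure_ne_top _ _⟩)
      (measure_ne_top _ _), ENNReal.toReal_add (measure_ne_top _ _) (measure_ne_top _ _)]
  have h2 := ENNReal.toReal_mono (by norm_num) hle
  rw [h1] at h2
  simp only [ENNReal.toReal_one] at h2
  linarith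




end Stmt7Aux

open Stmt7Aux

set_option maxHeartbeats 1000000 in
/-- There is a universal constant `c₂ > 0` such that for i.i.d. standard Gaussians
`ξ₁, ξ₂, …`, all `L ≥ 1` and all integers `N ≥ 1` with `2L ≤ N`:
`-log E[exp(-L·max_{1≤i≤N} |ξᵢ|)] ≥ c₂·L·√(log(N/L))`. -/
theorem stmt7 :
    ∃ c₂ : ℝ, 0 < c₂ ∧
      ∀ (Ω : Type) [MeasurableSpace Ω] (P : Measure Ω), IsProbabilityMeasure P →
      ∀ ξ : ℕ → Ω → ℝ,
        iIndepFun ξ P →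
        (∀ i, Measure.map (ξ i) P = gaussianReal 0 1) →
        ∀ (L : ℝ) (N : ℕ), 1 ≤ L → 1 ≤ N → 2 * L ≤ (N : ℝ) →
          c₂ * L * Real.sqrt (Real.log (N / L)) ≤
            -Real.log (∫ ω, Real.exp (-(L * ⨆ i : Fin N, |ξ i ω|)) ∂P) := by
  classical
  refine ⟨1/16, by norm_num, ?_⟩
  intro Ω mΩ P hP ξ hind hmap L N hL hN h2L
  have hL0 : (0:ℝ) < L := lt_of_lt_of_le one_pos hL
  have hN0 : (0:ℝ) < N := by
    have : (1:ℝ) ≤ N := by exact_mod_cast hN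
    linarith
  have hN2 : 2 ≤ N := by
    have : (2:ℝ) ≤ (N:ℝ) := by linarith
    exact_mod_cast this
  have hratio : (2:ℝ) ≤ (N:ℝ) / L := (le_div_iff₀ hL0).2 (by linarith)
  set x := Real.log ((N:ℝ) / L) with hx
  have hx2 : Real.log 2 ≤ x := Real.log_le_log (by norm_num) hratio
  have hxpos : (0:ℝ) < x := lt_of_lt_of_le (Real.log_pos (by norm_num)) hx2
  set u := Real.sqrt x with hud
  have hu2 : u^2 = x := Real.sq_sqrt hxpos.le
  have hupos : 0 < u := Real.sqrt_pos.2 hxpos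
  have hAE : ∀ i, AEMeasurable (ξ i) P := by
    intro i
    by_contra h
    have h2 := hmap i
    rw [Measure.map_of_not_aemeasurable h] at h2
    exact (IsProbabilityMeasure.ne_zero (gaussianReal 0 1)) h2.symm
  set ζ : ℕ → Ω → ℝ := fun i => (hAE i).mk (ξ i) with hζd
  have hζm : ∀ i, Measurable (ζ i) := fun i => (hAE i).measurable_mk
  have hζae : ∀ᵐ ω ∂P, ∀ i, ξ i ω = ζ i ω := ae_all_iff.2 fun i => (hAE i).ae_eq_mk
  haveI hne : Nonempty (Fin N) := Fin.pos_iff_nonempty.1 hN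
  set M : Ω → ℝ := fun ω => Finset.univ.sup' Finset.univ_nonempty
    (fun i : Fin N => |ζ i ω|) with hMd
  have hMme : Measurable M := by
    rw [hMd]
    have h := Finset.measurable_sup' (s := (Finset.univ : Finset (Fin N)))
      Finset.univ_nonempty (f := fun i => fun ω => |ζ i ω|) (fun i _ => (hζm i).abs)
    convert h using 1
    funext ω
    rw [Finset.sup'_apply]
  have hIeq : ∫ ω, Real.exp (-(L * ⨆ i : Fin N, |ξ i ω|)) ∂P
      = ∫ ω, Real.exp (-(L * M ω)) ∂P := by
    refine integral_congr_ae ?_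
    filter_upwards [hζae] with ω hω
    have h1 : (⨆ i : Fin N, |ξ i ω|) = M ω := by
      simp only [hMd]
      rw [← Finset.sup'_univ_eq_ciSup]
      exact Finset.sup'_congr _ rfl fun i _ => by rw [hω i]
    rw [h1]
  set I := ∫ ω, Real.exp (-(L * M ω)) ∂P with hId
  have hMnn : ∀ ω, 0 ≤ M ω := by
    intro ω
    simp only [hMd]
    exact le_trans (abs_nonneg (ζ 0 ω))
      (Finset.le_sup' (fun i : Fin N => |ζ i ω|) (Finset.mem_univ (⟨0, hN⟩ : Fin N)))
  have hexpm : Measurable fun ω => Real.exp (-(L * M ω)) :=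
    Real.measurable_exp.comp (hMme.const_mul L).neg
  have hint : Integrable (fun ω => Real.exp (-(L * M ω))) P := by
    refine Integrable.mono' (integrable_const 1) hexpm.aestronglyMeasurable
      (ae_of_all _ fun ω => ?_)
    rw [Real.norm_eq_abs, abs_of_pos (Real.exp_pos _), ← Real.exp_zero]
    apply Real.exp_le_exp.2
    nlinarith [hMnn ω]
  have hIpos : 0 < I := by
    rw [hId, integral_pos_iff_support_of_nonneg_ae
      (ae_of_all _ fun ω => (Real.exp_pos _).le) hint]
    have hs : Function.support (fun ω => Real.exp (-(L * M ω))) = Set.univ :=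
      Set.eq_univ_of_forall fun ω => (Real.exp_pos _).ne'
    rw [hs]
    simp
  have key : ∀ t : ℝ, 0 < t → ∀ F : Finset ℕ, (∀ i ∈ F, i < N) →
      I ≤ Real.exp (-(L*t)) + ((gaussianReal 0 1) (Ioo (-t) t)).toReal ^ F.card := by
    intro t ht F hF
    set E : Set Ω := ⋂ i ∈ F, ζ i ⁻¹' (Ioo (-t) t) with hE
    have hEm : MeasurableSet E :=
      MeasurableSet.biInter F.countable_toSet fun i _ => (hζm i) measurableSet_Ioo
    have hpt : ∀ ω, Real.exp (-(L * M ω))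
        ≤ Real.exp (-(L*t)) + E.indicator (fun _ => (1:ℝ)) ω := by
      intro ω
      by_cases hω : ω ∈ E
      · rw [Set.indicator_of_mem hω]
        have h1 : Real.exp (-(L * M ω)) ≤ 1 := by
          rw [← Real.exp_zero]
          apply Real.exp_le_exp.2
          nlinarith [hMnn ω]
        linarith [(Real.exp_pos (-(L*t))).le]
      · rw [Set.indicator_of_notMem hω]
        rw [hE, Set.mem_iInter₂] at hω
        push_neg at hω
        obtain ⟨i, hiF, hi⟩ := hω
        rw [Set.mem_preimage, Set.mem_Ioo] at hi
        push_neg at hi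
        have hit : t ≤ |ζ i ω| := by
          rcases le_or_gt (ζ i ω) (-t) with h | h
          · exact le_abs.2 (Or.inr (by linarith))
          · exact le_abs.2 (Or.inl (hi h))
        have hMt : t ≤ M ω := by
          simp only [hMd]
          exact hit.trans
            (Finset.le_sup' (fun j : Fin N => |ζ j ω|) (Finset.mem_univ (⟨i, hF i hiF⟩ : Fin N)))
        have h3 := Real.exp_le_exp.2 (neg_le_neg (mul_le_mul_of_nonneg_left hMt hL0.le))
        have h4 : (0:ℝ) ≤ 0 := le_rfl
        linarith [h3]
    have hind2 : Integrable (fun ω => Real.exp (-(L*t)) + E.indicator (fun _ => (1:ℝ)) ω) P :=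
      (integrable_const _).add ((integrable_const 1).indicator hEm)
    have hmono := integral_mono hint hind2 hpt
    have hconst : ∫ _ω, Real.exp (-(L*t)) ∂P = Real.exp (-(L*t)) := by
      simp
    have hic : ∫ ω, E.indicator (fun _ => (1:ℝ)) ω ∂P = (P E).toReal := by
      rw [integral_indicator hEm, setIntegral_const, smul_eq_mul, mul_one, measureReal_def]
    rw [integral_add (integrable_const _) ((integrable_const 1).indicator hEm),
      hconst, hic] at hmono
    have hEae : P E = P (⋂ i ∈ F, ξ i ⁻¹' (Ioo (-t) t)) := by
      apply measure_congr
      apply Filter.eventuallyEq_set.2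
      filter_upwards [hζae] with ω hω
      simp only [hE, Set.mem_iInter, Set.mem_preimage]
      constructor
      · intro h i hi
        rw [hω i]
        exact h i hi
      · intro h i hi
        have h5 := h i hi
        rwa [hω i] at h5
    have hprod : P (⋂ i ∈ F, ξ i ⁻¹' (Ioo (-t) t)) = ∏ i ∈ F, P (ξ i ⁻¹' (Ioo (-t) t)) :=
      hind.meas_biInter fun i _ => ⟨Ioo (-t) t, measurableSet_Ioo, rfl⟩
    have hfac : ∀ i ∈ F, P (ξ i ⁻¹' (Ioo (-t) t)) = (gaussianReal 0 1) (Ioo (-t) t) :=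
      fun i _ => by
        rw [← hmap i, Measure.map_apply_of_aemeasurable (hAE i) measurableSet_Ioo]
    have hpe : P E = ((gaussianReal 0 1) (Ioo (-t) t)) ^ F.card := by
      rw [hEae, hprod, Finset.prod_congr rfl hfac, Finset.prod_const]
    rw [hpe, ENNReal.toReal_pow] at hmono
    exact hmono
  rw [hIeq]
  have hfin : I ≤ Real.exp (-(1/16 * (L * u))) := by
    rcases le_or_gt (L * u) 1.872 with hS | hS
    · -- small case
      have hF : ∀ i ∈ ({0, 1} : Finset ℕ), i < N := by
        intro i hi
        simp only [Finset.mem_insert, Finset.mem_singleton] at hi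
        rcases hi with h | h <;> omega
      have hk := key 1 one_pos {0,1} hF
      have hcard : ({0,1} : Finset ℕ).card = 2 := rfl
      rw [hcard] at hk
      have hw := w1_le
      have hexpL : Real.exp (-(L*1)) ≤ Real.exp (-1) := Real.exp_le_exp.2 (by linarith)
      have he1 : Real.exp (-1:ℝ) ≤ 0.36788 := by
        rw [show (-1:ℝ) = -(1:ℝ) by norm_num, Real.exp_neg]
        have h1 : ((2.7182818283:ℝ))⁻¹ ≤ 0.36788 := by norm_num
        exact le_trans (inv_anti₀ (by norm_num) Real.exp_one_gt_d9.le) h1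
      have hwpow : ((gaussianReal 0 1) (Ioo (-(1:ℝ)) 1)).toReal ^ 2 ≤ (0.72121:ℝ)^2 :=
        pow_le_pow_left₀ ENNReal.toReal_nonneg hw 2
      have hlow : (0.985375:ℝ)^8 ≤ Real.exp (-(1/16 * (L*u))) := by
        have h1 : Real.exp (-(0.117:ℝ)) ≤ Real.exp (-(1/16 * (L*u))) :=
          Real.exp_le_exp.2 (by nlinarith)
        have h2 : Real.exp (-(0.117:ℝ)) = (Real.exp (-(0.0146250:ℝ)))^8 := by
          rw [← Real.exp_nat_mul]
          congr 1
          norm_num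
        have h3 : (0.985375:ℝ) ≤ Real.exp (-(0.0146250:ℝ)) := by
          have h4 := Real.add_one_le_exp (-(0.0146250:ℝ))
          linarith
        calc (0.985375:ℝ)^8 ≤ (Real.exp (-(0.0146250:ℝ)))^8 :=
              pow_le_pow_left₀ (by norm_num) h3 8
          _ = Real.exp (-(0.117:ℝ)) := h2.symm
          _ ≤ _ := h1
      have hnum : (0.36788:ℝ) + (0.72121:ℝ)^2 ≤ (0.985375:ℝ)^8 := by norm_num
      linarith
    · -- large case
      set t := u/2 with htd
      have ht : 0 < t := by positivity
      have hk := key t ht (Finset.range N) (fun i hi => Finset.mem_range.1 hi)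
      rw [Finset.card_range] at hk
      set w := ((gaussianReal 0 1) (Ioo (-t) t)).toReal with hwd
      set φ := (Real.sqrt (2*π))⁻¹ * Real.exp (-(t+1)^2/2) with hφd
      have hsp : (0:ℝ) < Real.sqrt (2*π) := lt_of_lt_of_le (by norm_num) sqrt_two_pi_lb
      have hφpos : 0 < φ := by
        rw [hφd]
        positivity
      have hwle : w ≤ 1 - 2*φ := by
        have h0 := w_le_compl ht.le
        have h1 := tail_ge_pos ht.le
        have h2 := tail_ge_neg ht.le
        rw [hwd, hφd]
        linarith
      have hwexp : w ≤ Real.exp (-(2*φ)) := by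
        have h1 := Real.add_one_le_exp (-(2*φ))
        linarith
      have hwN : w ^ N ≤ Real.exp ((N:ℝ) * (-(2*φ))) := by
        rw [show Real.exp ((N:ℝ) * (-(2*φ))) = Real.exp (-(2*φ)) ^ N by
          rw [← Real.exp_nat_mul]]
        exact pow_le_pow_left₀ ENNReal.toReal_nonneg hwexp N
      -- lower bound N * 2φ
      have hNx : (N:ℝ) = L * Real.exp x := by
        rw [hx, Real.exp_log (by positivity)]
        field_simp
      have hinv38 : (3/8:ℝ) ≤ (Real.sqrt (2*π))⁻¹ := by
        rw [show (3/8:ℝ) = ((8:ℝ)/3)⁻¹ by norm_num]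
        exact inv_anti₀ hsp sqrt_two_pi_ub
      have hexp12 : (3/5:ℝ) ≤ Real.exp (-((1:ℝ)/2)) := by
        have hsq : Real.exp ((1:ℝ)/2) * Real.exp ((1:ℝ)/2) = Real.exp 1 := by
          rw [← Real.exp_add]
          norm_num
        have h1 : Real.exp ((1:ℝ)/2) ≤ 5/3 := by
          nlinarith [Real.exp_pos ((1:ℝ)/2), Real.exp_one_lt_d9]
        rw [Real.exp_neg, show (3/5:ℝ) = ((5:ℝ)/3)⁻¹ by norm_num]
        exact inv_anti₀ (Real.exp_pos _) h1
      have hpoly : u ≤ Real.exp (7*u^2/8 - u/2) := by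
        have h1 := Real.add_one_le_exp (7*u^2/8 - u/2)
        nlinarith [sq_nonneg (u - 6/7)]
      have hNe : (N:ℝ) * Real.exp (-(t+1)^2/2)
          = L * (Real.exp (-((1:ℝ)/2)) * Real.exp (7*u^2/8 - u/2)) := by
        rw [hNx, mul_assoc, ← Real.exp_add, ← Real.exp_add]
        congr 2
        rw [htd, ← hu2]
        ring
      have hB : L * ((3/5)*u) ≤ (N:ℝ) * Real.exp (-(t+1)^2/2) := by
        rw [hNe]
        have h1 : (3/5)*u ≤ Real.exp (-((1:ℝ)/2)) * Real.exp (7*u^2/8 - u/2) := by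
          nlinarith [Real.exp_pos (-((1:ℝ)/2)), hupos.le]
        nlinarith [hL0.le]
      have hA0 : (0:ℝ) ≤ (N:ℝ) * Real.exp (-(t+1)^2/2) := by positivity
      have hNφ : (9/20) * (L * u) ≤ (N:ℝ) * (2*φ) := by
        have h4 : (N:ℝ) * (2*φ) = (2*(Real.sqrt (2*π))⁻¹) * ((N:ℝ) * Real.exp (-(t+1)^2/2)) := by
          rw [hφd]
          ring
        rw [h4]
        nlinarith [hB, hinv38, hA0, hupos.le, hL0.le]
      have hterm1 : Real.exp (-(L*t)) ≤ Real.exp (-(9/20 * (L*u))) := by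
        apply Real.exp_le_exp.2
        rw [htd]
        nlinarith [hL0.le, hupos.le]
      have hterm2 : Real.exp ((N:ℝ) * (-(2*φ))) ≤ Real.exp (-(9/20 * (L*u))) := by
        apply Real.exp_le_exp.2
        nlinarith [hNφ]
      have hsum : I ≤ 2 * Real.exp (-(9/20 * (L*u))) := by
        calc I ≤ Real.exp (-(L*t)) + w ^ N := hk
          _ ≤ Real.exp (-(9/20 * (L*u))) + Real.exp (-(9/20 * (L*u))) := by
              have := hwN.trans hterm2
              linarith
          _ = 2 * Real.exp (-(9/20 * (L*u))) := by ring
      have h2e : 2 * Real.exp (-(9/20 * (L*u))) = Real.exp (Real.log 2 - 9/20 * (L*u)) := by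
        rw [Real.exp_sub, Real.exp_log two_pos, Real.exp_neg, div_eq_mul_inv]
        ring
      have hfinal : Real.exp (Real.log 2 - 9/20 * (L*u)) ≤ Real.exp (-(1/16 * (L*u))) := by
        apply Real.exp_le_exp.2
        have hl2 := Real.log_two_lt_d9
        nlinarith
      rw [h2e] at hsum
      exact hsum.trans hfinal
  have hlog := Real.log_le_log hIpos hfin
  rw [Real.log_exp] at hlog
  linarith
end

section
/- Let ξ₁, ξ₂, … be i.i.d. standard Gaussian random variables. There exist constants c₃, c₄ > 0 such that for all integers N ≥ 1 and all L ≥ 2N, c₃·N·log(L/N) ≤ −log E[exp(−L·max_{1≤i≤N} |ξᵢ|)] ≤ c₄·N·log(L/N). -/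
open MeasureTheory ProbabilityTheory

section auxiliary

open Real Set Filter

section aux

variable {Ω : Type*} [MeasurableSpace Ω] {P : Measure Ω}

lemma preimage_ae_eq_of_ae_eq {f g : Ω → ℝ} (h : f =ᵐ[P] g) (t : Set ℝ) :
    (f ⁻¹' t : Set Ω) =ᵐ[P] (g ⁻¹' t) := by
  filter_upwards [h] with ω hω
  show (f ω ∈ t) = (g ω ∈ t)
  rw [hω]

lemma biInter_ae_eq' {S : Finset ℕ} {A B : ℕ → Set Ω} (h : ∀ i ∈ S, A i =ᵐ[P] B i) :
    (⋂ i ∈ S, A i) =ᵐ[P] (⋂ i ∈ S, B i) := by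
  classical
  induction S using Finset.induction_on with
  | empty => simp
  | @insert j s hj ih =>
    simp only [Finset.set_biInter_insert]
    exact (h j (Finset.mem_insert_self _ _)).inter
      (ih fun i hi => h i (Finset.mem_insert_of_mem hi))

lemma iIndepFun_of_ae_eq {f g : ℕ → Ω → ℝ}
    (h : iIndepFun f P) (hfg : ∀ i, f i =ᵐ[P] g i) :
    iIndepFun g P := by
  rw [iIndepFun_iff_measure_inter_preimage_eq_mul] at h ⊢
  intro S sets hsets
  calc P (⋂ i ∈ S, g i ⁻¹' sets i) = P (⋂ i ∈ S, f i ⁻¹' sets i) :=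
        measure_congr (biInter_ae_eq' fun i _ =>
          (preimage_ae_eq_of_ae_eq (hfg i) (sets i)).symm)
    _ = ∏ i ∈ S, P (f i ⁻¹' sets i) := h S hsets
    _ = ∏ i ∈ S, P (g i ⁻¹' sets i) := Finset.prod_congr rfl fun i _ =>
          measure_congr (preimage_ae_eq_of_ae_eq (hfg i) (sets i))

lemma integral_prod_of_indep [IsProbabilityMeasure P] {f : ℕ → Ω → ℝ}
    (hindep : iIndepFun f P) (hmeas : ∀ i, Measurable (f i))
    (hpos : ∀ i ω, 0 ≤ f i ω) (n : ℕ) :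
    ∫ ω, ∏ i ∈ Finset.range n, f i ω ∂P = ∏ i ∈ Finset.range n, ∫ ω, f i ω ∂P := by
  induction n with
  | zero => simp
  | succ n ih =>
    have hX : (0 : Ω → ℝ) ≤ ∏ i ∈ Finset.range n, f i := by
      intro ω
      simp only [Finset.prod_apply, Pi.zero_apply]
      exact Finset.prod_nonneg fun i _ => hpos i ω
    have hXm : Measurable (∏ i ∈ Finset.range n, f i) := by
      rw [show (∏ i ∈ Finset.range n, f i) = fun ω => ∏ i ∈ Finset.range n, f i ω from
        funext fun ω => Finset.prod_apply ω _ _]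
      exact Finset.measurable_prod _ fun i _ => hmeas i
    have hmul := (hindep.indepFun_prod_range_succ hmeas n).integral_mul_eq_mul_integral
      hXm.aestronglyMeasurable (hmeas n).aestronglyMeasurable
    calc ∫ ω, ∏ i ∈ Finset.range (n + 1), f i ω ∂P
        = ∫ ω, ((∏ i ∈ Finset.range n, f i) * f n) ω ∂P := by
          congr 1; funext ω; simp [Finset.prod_range_succ, Finset.prod_apply]
      _ = (∫ ω, (∏ i ∈ Finset.range n, f i) ω ∂P) * ∫ ω, f n ω ∂P := hmul
      _ = ∏ i ∈ Finset.range (n + 1), ∫ ω, f i ω ∂P := by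
          rw [Finset.prod_range_succ, ← ih]
          congr 1
          · congr 1; funext ω; simp [Finset.prod_apply]

end aux

lemma integrable_exp_neg_mul_abs {lam : ℝ} (hlam : 0 < lam) :
    Integrable (fun x : ℝ => rexp (-(lam * |x|))) volume := by
  have hIoi : IntegrableOn (fun x : ℝ => rexp (-(lam * |x|))) (Ioi 0) volume := by
    refine (exp_neg_integrableOn_Ioi 0 hlam).congr_fun ?_ measurableSet_Ioi
    intro x hx
    simp only [abs_of_pos (mem_Ioi.mp hx)]
    ring_nf
  have hIic : IntegrableOn (fun x : ℝ => rexp (-(lam * |x|))) (Iic 0) volume := by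
    rw [← Measure.map_neg_eq_self (volume : Measure ℝ)]
    have m : MeasurableEmbedding fun x : ℝ => -x := (Homeomorph.neg ℝ).measurableEmbedding
    rw [m.integrableOn_map_iff]
    simp_rw [Function.comp_def, abs_neg]
    rw [show (fun x : ℝ => -x) ⁻¹' Iic 0 = Ici 0 by ext x; simp]
    exact (integrableOn_Ici_iff_integrableOn_Ioi).mpr hIoi
  rw [← integrableOn_univ, ← Iic_union_Ioi (a := (0:ℝ))]
  exact hIic.union hIoi

lemma integral_exp_neg_mul_abs {lam : ℝ} (hlam : 0 < lam) :
    ∫ x : ℝ, rexp (-(lam * |x|)) = 2 * lam⁻¹ := by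
  rw [integral_comp_abs (f := fun y => rexp (-(lam * y)))]
  have h := integral_comp_mul_left_Ioi (fun y => rexp (-y)) 0 hlam
  simp only [mul_zero] at h
  rw [h, integral_exp_neg_Ioi_zero, smul_eq_mul, mul_one]

lemma gauss_exp_abs_bound {lam : ℝ} (hlam : 0 < lam) :
    ∫ x, rexp (-(lam * |x|)) ∂(gaussianReal 0 1) ≤ lam⁻¹ := by
  set φ : ℝ → ℝ := fun x => rexp (-(lam * |x|)) with hφ
  have hφ_meas : Measurable φ :=
    (Real.continuous_exp.comp ((continuous_const.mul continuous_abs).neg)).measurable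
  have hφ_nonneg : ∀ x, 0 ≤ φ x := fun x => (exp_pos _).le
  set c : ℝ := (Real.sqrt (2 * π))⁻¹ with hc
  have hc_nonneg : 0 ≤ c := inv_nonneg.mpr (Real.sqrt_nonneg _)
  have hpdf_le : ∀ x, gaussianPDFReal 0 1 x ≤ c := by
    intro x
    unfold gaussianPDFReal
    simp only [NNReal.coe_one, mul_one, sub_zero]
    rw [hc]
    exact mul_le_of_le_one_right (inv_nonneg.mpr (Real.sqrt_nonneg _))
      (Real.exp_le_one_iff.mpr (by nlinarith [sq_nonneg x]))
  have h1 : ∫ x, φ x ∂(gaussianReal 0 1)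
      = (∫⁻ x, ENNReal.ofReal (φ x) ∂(gaussianReal 0 1)).toReal :=
    integral_eq_lintegral_of_nonneg_ae (ae_of_all _ hφ_nonneg) hφ_meas.aestronglyMeasurable
  have h2 : ∫⁻ x, ENNReal.ofReal (φ x) ∂(gaussianReal 0 1)
      = ∫⁻ x, gaussianPDF 0 1 x * ENNReal.ofReal (φ x) := by
    have hg : Measurable fun x => ENNReal.ofReal (φ x) :=
      ENNReal.measurable_ofReal.comp hφ_meas
    rw [gaussianReal_of_var_ne_zero 0 one_ne_zero,
      lintegral_withDensity_eq_lintegral_mul _ (measurable_gaussianPDF 0 1) hg]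
    rfl
  have h3 : ∫⁻ x, gaussianPDF 0 1 x * ENNReal.ofReal (φ x)
      ≤ ∫⁻ x, ENNReal.ofReal (c * φ x) := by
    apply lintegral_mono
    intro x
    dsimp only
    rw [show gaussianPDF 0 1 x = ENNReal.ofReal (gaussianPDFReal 0 1 x) from rfl,
      ← ENNReal.ofReal_mul (gaussianPDFReal_nonneg 0 1 x)]
    exact ENNReal.ofReal_le_ofReal
      (mul_le_mul_of_nonneg_right (hpdf_le x) (hφ_nonneg x))
  have h4 : ∫⁻ x, ENNReal.ofReal (c * φ x)
      = ENNReal.ofReal (∫ x, c * φ x) := by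
    rw [ofReal_integral_eq_lintegral_ofReal ((integrable_exp_neg_mul_abs hlam).const_mul c)
      (ae_of_all _ fun x => mul_nonneg hc_nonneg (hφ_nonneg x))]
  have h5 : ∫ x, c * φ x = c * (2 * lam⁻¹) := by
    rw [integral_const_mul, integral_exp_neg_mul_abs hlam]
  have h6 : c * (2 * lam⁻¹) ≤ lam⁻¹ := by
    have hsqrt : (2:ℝ) ≤ Real.sqrt (2 * π) := by
      nlinarith [Real.sq_sqrt (by positivity : (0:ℝ) ≤ 2 * π), Real.sqrt_nonneg (2 * π),
        Real.pi_gt_three]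
    have hs0 : (0:ℝ) < Real.sqrt (2 * π) := by linarith
    have hcs : c * Real.sqrt (2 * π) = 1 := inv_mul_cancel₀ hs0.ne'
    have hc2 : c ≤ 1 / 2 := by nlinarith
    nlinarith [inv_pos.mpr hlam]
  calc ∫ x, φ x ∂(gaussianReal 0 1)
      = (∫⁻ x, ENNReal.ofReal (φ x) ∂(gaussianReal 0 1)).toReal := h1
    _ ≤ (ENNReal.ofReal (c * (2 * lam⁻¹))).toReal := by
        apply ENNReal.toReal_mono ENNReal.ofReal_ne_top
        rw [h2, ← h5, ← h4]
        exact h3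
    _ = c * (2 * lam⁻¹) := ENNReal.toReal_ofReal
        (by positivity)
    _ ≤ lam⁻¹ := h6

lemma gauss_Icc_lower {t : ℝ} (ht0 : 0 < t) (ht : t ≤ 1 / 2) :
    t / 3 ≤ (gaussianReal 0 1 (Icc (-t) t)).toReal := by
  have hpdf_ge : ∀ x ∈ Icc (-t) t, (1:ℝ) / 6 ≤ gaussianPDFReal 0 1 x := by
    intro x hx
    unfold gaussianPDFReal
    simp only [NNReal.coe_one, mul_one, sub_zero]
    have hx2 : x ^ 2 ≤ 1 := by
      rcases hx with ⟨h1, h2⟩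
      nlinarith
    have hexp : (1:ℝ) / 2 ≤ rexp (-x ^ 2 / 2) := by
      have h1 : rexp (-(1:ℝ) / 2) ≤ rexp (-x ^ 2 / 2) := Real.exp_le_exp.mpr (by linarith)
      have h2 : rexp (-(1:ℝ) / 2) * rexp ((1:ℝ) / 2) = 1 := by
        rw [← Real.exp_add]; norm_num
      have h3 : rexp ((1:ℝ) / 2) * rexp ((1:ℝ) / 2) = rexp 1 := by
        rw [← Real.exp_add]; norm_num
      nlinarith [Real.exp_one_lt_d9, Real.exp_pos ((1:ℝ) / 2), Real.exp_pos (-(1:ℝ) / 2)]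
    have hs : Real.sqrt (2 * π) ≤ 3 := by
      nlinarith [Real.sq_sqrt (by positivity : (0:ℝ) ≤ 2 * π), Real.sqrt_nonneg (2 * π),
        Real.pi_lt_d2]
    have hs0 : (0:ℝ) < Real.sqrt (2 * π) := Real.sqrt_pos.mpr (by positivity)
    have hinv : (1:ℝ) / 3 ≤ (Real.sqrt (2 * π))⁻¹ := by
      have := inv_mul_cancel₀ hs0.ne'
      nlinarith [inv_pos.mpr hs0]
    calc (1:ℝ) / 6 = (1 / 3) * (1 / 2) := by norm_num
      _ ≤ (Real.sqrt (2 * π))⁻¹ * rexp (-x ^ 2 / 2) :=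
          mul_le_mul hinv hexp (by norm_num) (inv_nonneg.mpr (Real.sqrt_nonneg _))
  have hmono : ∫ x in Icc (-t) t, (1:ℝ) / 6 ≤ ∫ x in Icc (-t) t, gaussianPDFReal 0 1 x := by
    apply setIntegral_mono_on
    · exact (integrableOn_const_iff).mpr (Or.inr (by rw [Real.volume_Icc]; exact ENNReal.ofReal_lt_top))
    · exact (integrable_gaussianPDFReal 0 1).integrableOn
    · exact measurableSet_Icc
    · exact hpdf_ge
  have hconst : ∫ x in Icc (-t) t, (1:ℝ) / 6 = t / 3 := by
    rw [setIntegral_const, measureReal_def, Real.volume_Icc, smul_eq_mul,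
      ENNReal.toReal_ofReal (by linarith : (0:ℝ) ≤ t - -t)]
    ring
  rw [gaussianReal_apply_eq_integral 0 one_ne_zero,
    ENNReal.toReal_ofReal (setIntegral_nonneg measurableSet_Icc
      fun x _ => gaussianPDFReal_nonneg 0 1 x)]
  linarith

end auxiliary

open Real Set Filter

/-- There exist constants `c₃, c₄ > 0` such that for i.i.d. standard Gaussians,
all integers `N ≥ 1` and all `L ≥ 2N`:
`c₃·N·log(L/N) ≤ -log E[exp(-L·max_{1≤i≤N} |ξᵢ|)] ≤ c₄·N·log(L/N)`. -/
theorem stmt8 :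
    ∃ c₃ c₄ : ℝ, 0 < c₃ ∧ 0 < c₄ ∧
      ∀ (Ω : Type) [MeasurableSpace Ω] (P : Measure Ω), IsProbabilityMeasure P →
      ∀ ξ : ℕ → Ω → ℝ,
        iIndepFun ξ P →
        (∀ i, Measure.map (ξ i) P = gaussianReal 0 1) →
        ∀ (L : ℝ) (N : ℕ), 1 ≤ N → 2 * (N : ℝ) ≤ L →
          c₃ * N * Real.log (L / N) ≤
            -Real.log (∫ ω, Real.exp (-(L * ⨆ i : Fin N, |ξ i ω|)) ∂P) ∧
          -Real.log (∫ ω, Real.exp (-(L * ⨆ i : Fin N, |ξ i ω|)) ∂P) ≤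
            c₄ * N * Real.log (L / N) := by
  refine ⟨1, 5, one_pos, by norm_num, ?_⟩
  intro Ω mΩ P hP ξ hindep hmap L N hN hL
  have hN0 : (0:ℝ) < N := by exact_mod_cast Nat.pos_of_ne_zero (by omega)
  have hL0 : (0:ℝ) < L := lt_of_lt_of_le (by positivity) hL
  set lam : ℝ := L / N with hlam_def
  have hlam2 : (2:ℝ) ≤ lam := (le_div_iff₀ hN0).mpr (by linarith)
  have hlam0 : (0:ℝ) < lam := by linarith
  set t : ℝ := lam⁻¹ with ht_def
  have ht0 : 0 < t := inv_pos.mpr hlam0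
  have hthalf : t ≤ 1 / 2 := by
    rw [ht_def, show (1:ℝ)/2 = 2⁻¹ by norm_num]
    exact inv_anti₀ two_pos hlam2
  have hLt : L * t = N := by rw [ht_def, hlam_def]; field_simp
  have hlamN : lam * N = L := by rw [hlam_def]; field_simp
  -- measurable modifications
  have hAE : ∀ i, AEMeasurable (ξ i) P := by
    intro i
    by_contra h
    have h0 := hmap i
    rw [Measure.map_of_not_aemeasurable h] at h0
    exact (IsProbabilityMeasure.ne_zero (gaussianReal 0 1)) h0.symm
  set g : ℕ → Ω → ℝ := fun i => (hAE i).mk (ξ i) with hg_def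
  have hg_meas : ∀ i, Measurable (g i) := fun i => (hAE i).measurable_mk
  have hg_ae : ∀ i, ξ i =ᵐ[P] g i := fun i => (hAE i).ae_eq_mk
  have hg_map : ∀ i, Measure.map (g i) P = gaussianReal 0 1 := fun i => by
    rw [← Measure.map_congr (hg_ae i)]; exact hmap i
  have hg_indep : iIndepFun g P := iIndepFun_of_ae_eq hindep hg_ae
  haveI hNE : Nonempty (Fin N) := ⟨⟨0, by omega⟩⟩
  set M : Ω → ℝ := fun ω => ⨆ i : Fin N, |g i ω| with hM_def
  have hM_meas : Measurable M := Measurable.iSup fun i => (hg_meas i).abs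
  have hM_ge : ∀ ω (j : Fin N), |g j ω| ≤ M ω := by
    intro ω j
    exact le_ciSup (f := fun i : Fin N => |g i ω|) (Set.Finite.bddAbove (Set.finite_range _)) j
  have hM_nonneg : ∀ ω, 0 ≤ M ω := fun ω => (abs_nonneg _).trans (hM_ge ω ⟨0, by omega⟩)
  have hInt : Integrable (fun ω => rexp (-(L * M ω))) P := by
    apply Integrable.mono' (integrable_const (1:ℝ))
    · exact (Real.measurable_exp.comp ((hM_meas.const_mul L).neg)).aestronglyMeasurable
    · refine ae_of_all _ fun ω => ?_
      rw [Real.norm_eq_abs, abs_of_pos (exp_pos _)]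
      exact Real.exp_le_one_iff.mpr (by nlinarith [hM_nonneg ω])
  have hEq : (∫ ω, Real.exp (-(L * ⨆ i : Fin N, |ξ i ω|)) ∂P) = ∫ ω, rexp (-(L * M ω)) ∂P := by
    apply integral_congr_ae
    filter_upwards [ae_all_iff.mpr hg_ae] with ω hω
    have : (⨆ i : Fin N, |ξ i ω|) = ⨆ i : Fin N, |g i ω| := iSup_congr fun i => by rw [hω i]
    rw [this]
  rw [hEq]
  set E := ∫ ω, rexp (-(L * M ω)) ∂P with hE_def
  -- lower bound on E
  set A : Set Ω := ⋂ i ∈ Finset.range N, g i ⁻¹' (Icc (-t) t) with hA_def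
  have hA_meas : MeasurableSet A := by
    apply MeasurableSet.biInter (Finset.range N : Finset ℕ).countable_toSet
    exact fun i _ => (hg_meas i) measurableSet_Icc
  have hPA : P A = (gaussianReal 0 1 (Icc (-t) t)) ^ N := by
    rw [hA_def, hg_indep.meas_biInter (fun i _ => ⟨Icc (-t) t, measurableSet_Icc, rfl⟩)]
    have hfac : ∀ i ∈ Finset.range N,
        P (g i ⁻¹' Icc (-t) t) = gaussianReal 0 1 (Icc (-t) t) := fun i _ => by
      rw [← hg_map i, Measure.map_apply (hg_meas i) measurableSet_Icc]
    rw [Finset.prod_congr rfl hfac, Finset.prod_const, Finset.card_range]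
  have hPA_toReal : (t/3)^N ≤ (P A).toReal := by
    rw [hPA, ENNReal.toReal_pow]
    exact pow_le_pow_left₀ (by positivity) (gauss_Icc_lower ht0 hthalf) N
  have hElow : rexp (-(L * t)) * (t/3)^N ≤ E := by
    have hind : ∀ ω, A.indicator (fun _ => rexp (-(L * t))) ω ≤ rexp (-(L * M ω)) := by
      intro ω
      by_cases hω : ω ∈ A
      · rw [Set.indicator_of_mem hω]
        apply Real.exp_le_exp.mpr
        have hMle : M ω ≤ t := by
          apply ciSup_le
          intro i
          have hmem : g i ω ∈ Icc (-t) t := by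
            have := Set.mem_iInter₂.mp (hA_def ▸ hω) i.1 (Finset.mem_range.mpr i.2)
            exact this
          exact abs_le.mpr ⟨hmem.1, hmem.2⟩
        nlinarith
      · rw [Set.indicator_of_notMem hω]; exact (exp_pos _).le
    have h1 := integral_mono ((integrable_const _).indicator hA_meas) hInt hind
    rw [integral_indicator_const _ hA_meas, smul_eq_mul] at h1
    calc rexp (-(L * t)) * (t/3)^N ≤ rexp (-(L * t)) * (P A).toReal :=
          mul_le_mul_of_nonneg_left hPA_toReal (exp_pos _).le
      _ = (P A).toReal * rexp (-(L * t)) := mul_comm _ _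
      _ ≤ E := h1
  have hEpos : 0 < E := lt_of_lt_of_le (by positivity) hElow
  -- upper bound on E
  set φ : ℝ → ℝ := fun x => rexp (-(lam * |x|)) with hφ_def
  have hφ_meas : Measurable φ :=
    (Real.continuous_exp.comp ((continuous_const.mul continuous_abs).neg)).measurable
  have hf_indep : iIndepFun (fun i ω => φ (g i ω)) P := by
    have := hg_indep.comp (fun _ => φ) (fun _ => hφ_meas)
    simpa [Function.comp_def] using this
  have hprod := integral_prod_of_indep hf_indep (fun i => hφ_meas.comp (hg_meas i))
    (fun i ω => (exp_pos _).le) N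
  have hval : ∀ i, ∫ ω, φ (g i ω) ∂P = ∫ x, φ x ∂(gaussianReal 0 1) := fun i => by
    rw [← hg_map i, integral_map (hg_meas i).aemeasurable hφ_meas.aestronglyMeasurable]
  have hEup : E ≤ (lam⁻¹)^N := by
    have hpt : ∀ ω, rexp (-(L * M ω)) ≤ ∏ i ∈ Finset.range N, φ (g i ω) := by
      intro ω
      have hexp : ∏ i ∈ Finset.range N, φ (g i ω)
          = rexp (∑ i ∈ Finset.range N, -(lam * |g i ω|)) := by
        rw [Real.exp_sum]
      rw [hexp]
      apply Real.exp_le_exp.mpr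
      have hsum : ∑ i ∈ Finset.range N, |g i ω| ≤ N * M ω := by
        have := Finset.sum_le_card_nsmul (Finset.range N) (fun i => |g i ω|) (M ω)
          (fun i hi => hM_ge ω ⟨i, Finset.mem_range.mp hi⟩)
        simpa [Finset.card_range, nsmul_eq_mul] using this
      have hdist : ∑ i ∈ Finset.range N, -(lam * |g i ω|)
          = -(lam * ∑ i ∈ Finset.range N, |g i ω|) := by
        rw [Finset.mul_sum, ← Finset.sum_neg_distrib]
      rw [hdist]
      have h2 : lam * (∑ i ∈ Finset.range N, |g i ω|) ≤ lam * (N * M ω) :=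
        mul_le_mul_of_nonneg_left hsum hlam0.le
      have h3 : lam * ((N:ℝ) * M ω) = L * M ω := by rw [← hlamN]; ring
      linarith
    have hIntProd : Integrable (fun ω => ∏ i ∈ Finset.range N, φ (g i ω)) P := by
      apply Integrable.mono' (integrable_const (1:ℝ))
      · exact (Finset.measurable_prod _ fun i _ =>
          (hφ_meas.comp (hg_meas i))).aestronglyMeasurable
      · refine ae_of_all _ fun ω => ?_
        rw [Real.norm_eq_abs, abs_of_nonneg (Finset.prod_nonneg fun i _ => (exp_pos _).le)]
        exact Finset.prod_le_one (fun i _ => (exp_pos _).le)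
          (fun i _ => Real.exp_le_one_iff.mpr (neg_nonpos.mpr (by positivity)))
    have h2 := integral_mono hInt hIntProd hpt
    rw [hprod] at h2
    calc E ≤ ∏ i ∈ Finset.range N, ∫ ω, φ (g i ω) ∂P := h2
      _ = (∫ x, φ x ∂(gaussianReal 0 1))^N := by
          rw [Finset.prod_congr rfl fun i _ => hval i, Finset.prod_const, Finset.card_range]
      _ ≤ (lam⁻¹)^N := pow_le_pow_left₀ (integral_nonneg fun x => (exp_pos _).le)
          (gauss_exp_abs_bound hlam0) N
  constructor
  · have h := Real.log_le_log hEpos hEup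
    rw [Real.log_pow, Real.log_inv] at h
    have hgoal : (1:ℝ) * N * Real.log lam = N * Real.log lam := by ring
    rw [hgoal]
    have : (N:ℝ) * -Real.log lam = -(N * Real.log lam) := by ring
    rw [this] at h
    linarith
  · have h := Real.log_le_log (by positivity) hElow
    rw [Real.log_mul (exp_pos _).ne' (by positivity), Real.log_exp, Real.log_pow, hLt] at h
    have hlt : Real.log (t/3) = -(Real.log lam) - Real.log 3 := by
      rw [Real.log_div ht0.ne' (by norm_num), ht_def, Real.log_inv]
    rw [hlt] at h
    have hlog2 : Real.log 2 ≤ Real.log lam := Real.log_le_log two_pos hlam2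
    have hlog4 : Real.log 4 = 2 * Real.log 2 := by
      rw [show (4:ℝ) = 2^2 by norm_num, Real.log_pow]; push_cast; ring
    have h1 : (1:ℝ) ≤ 2 * Real.log 2 := by
      rw [← hlog4]
      calc (1:ℝ) = Real.log (rexp 1) := (Real.log_exp 1).symm
        _ ≤ Real.log 4 := Real.log_le_log (exp_pos 1) (by nlinarith [Real.exp_one_lt_d9])
    have h3 : Real.log 3 ≤ 2 * Real.log 2 := by
      rw [← hlog4]
      exact Real.log_le_log (by norm_num) (by norm_num)
    have key : (1:ℝ) + Real.log 3 ≤ 4 * Real.log lam := by linarith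
    have key2 : (N:ℝ) * (1 + Real.log 3) ≤ N * (4 * Real.log lam) :=
      mul_le_mul_of_nonneg_left key hN0.le
    nlinarith [h, key2]
end

section
/- Let ξ₁, ξ₂, … be i.i.d. standard Gaussian random variables. There exist constants c̃₃, c̃₄ > 0 such that for all L > 0 and all integers N with L/2 ≤ N ≤ 2L, c̃₃·L ≤ −log E[exp(−L·max_{1≤i≤N} |ξᵢ|)] ≤ c̃₄·L. -/
open MeasureTheory ProbabilityTheory Filter

noncomputable section Stmt9Aux

/-- standard gaussian -/
def stdG : Measure ℝ := gaussianReal 0 1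

instance : IsProbabilityMeasure stdG := by unfold stdG; infer_instance

lemma stdG_pos_of_volume_pos {s : Set ℝ} (hs : MeasureTheory.volume s ≠ 0) : stdG s ≠ 0 := by
  intro h
  exact hs ((gaussianReal_absolutelyContinuous' 0 (one_ne_zero)) h)

lemma integrable_exp_abs {t : ℝ} (ht : t ≤ 0) :
    Integrable (fun x : ℝ => Real.exp (t * |x|)) stdG := by
  refine Integrable.mono' (integrable_const 1)
    ((Real.continuous_exp.comp (continuous_const.mul continuous_abs)).aestronglyMeasurable)
    (ae_of_all _ fun x => ?_)
  rw [Real.norm_eq_abs, abs_of_pos (Real.exp_pos _)]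
  exact Real.exp_le_one_iff.2 (mul_nonpos_of_nonpos_of_nonneg ht (abs_nonneg x))

/-- The constant q -/
def qc : ℝ := ∫ x, Real.exp (-(1/2) * |x|) ∂stdG

lemma qc_pos : 0 < qc := by
  rw [qc, integral_pos_iff_support_of_nonneg (fun x => (Real.exp_pos _).le)
    (integrable_exp_abs (by norm_num))]
  have : Function.support (fun x : ℝ => Real.exp (-(1/2) * |x|)) = Set.univ := by
    ext x; simp [Function.mem_support, (Real.exp_pos _).ne']
  rw [this]
  simp

lemma qc_lt_one : qc < 1 := by
  have hint : Integrable (fun x : ℝ => Real.exp (-(1/2) * |x|)) stdG :=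
    integrable_exp_abs (by norm_num)
  have h1 : (0:ℝ) < ∫ x, (1 - Real.exp (-(1/2) * |x|)) ∂stdG := by
    rw [integral_pos_iff_support_of_nonneg]
    · have hsupp : Function.support (fun x : ℝ => 1 - Real.exp (-(1/2) * |x|)) = {0}ᶜ := by
        ext x
        simp only [Function.mem_support, Set.mem_compl_iff, Set.mem_singleton_iff]
        constructor
        · rintro h rfl; simp at h
        · intro hx h
          have : Real.exp (-(1/2) * |x|) = 1 := by linarith
          rw [Real.exp_eq_one_iff] at this
          have : |x| = 0 := by
            rcases mul_eq_zero.1 this with h | h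
            · norm_num at h
            · exact h
          exact hx (abs_eq_zero.1 this)
      rw [hsupp]
      refine pos_iff_ne_zero.2 (stdG_pos_of_volume_pos ?_)
      intro h
      have hsub : Set.Icc (1:ℝ) 2 ⊆ ({0}ᶜ : Set ℝ) := by
        intro x hx
        simp only [Set.mem_compl_iff, Set.mem_singleton_iff]
        intro hx0
        rw [hx0] at hx
        exact absurd hx.1 (by norm_num)
      have := measure_mono_null hsub h
      rw [Real.volume_Icc] at this
      norm_num at this
    · refine fun x => ?_
      have hle : Real.exp (-(1/2) * |x|) ≤ 1 :=
        Real.exp_le_one_iff.2 (mul_nonpos_of_nonpos_of_nonneg (by norm_num) (abs_nonneg x))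
      simp only [Pi.zero_apply]
      linarith
    · exact (integrable_const 1).sub hint
  have h2 : ∫ x, (1 - Real.exp (-(1/2) * |x|)) ∂stdG = 1 - qc := by
    rw [integral_sub (integrable_const 1) hint]
    simp [qc]
  linarith [h2 ▸ h1]

/-- The constant p -/
def pc : ℝ := (stdG {x : ℝ | |x| ≤ 1}).toReal

lemma measurableSet_B : MeasurableSet {x : ℝ | |x| ≤ 1} :=
  measurableSet_le measurable_abs measurable_const

lemma pc_pos : 0 < pc := by
  rw [pc, ENNReal.toReal_pos_iff]
  constructor
  · refine pos_iff_ne_zero.2 (stdG_pos_of_volume_pos ?_)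
    have : Set.Icc (-1:ℝ) 1 ⊆ {x : ℝ | |x| ≤ 1} := by
      intro x hx; simp only [Set.mem_setOf_eq, abs_le]; exact ⟨hx.1, hx.2⟩
    intro h
    have := measure_mono_null this h
    rw [Real.volume_Icc] at this
    norm_num at this
  · exact lt_of_le_of_lt (measure_mono (Set.subset_univ _)) (by simp)

lemma pc_le_one : pc ≤ 1 := by
  rw [pc]
  refine ENNReal.toReal_le_of_le_ofReal zero_le_one ?_
  have h := (measure_mono (Set.subset_univ ({x : ℝ | |x| ≤ 1})) : stdG _ ≤ stdG Set.univ)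
  simpa using h

lemma iIndepFun_congr {Ω : Type} [MeasurableSpace Ω] {P : Measure Ω} {f g : ℕ → Ω → ℝ}
    (h : iIndepFun f P) (hfg : ∀ i, f i =ᵐ[P] g i) :
    iIndepFun g P := by
  rw [iIndepFun_iff_measure_inter_preimage_eq_mul] at h ⊢
  intro S sets hS
  have hall : ∀ᵐ ω ∂P, ∀ i, f i ω = g i ω := ae_all_iff.2 hfg
  have h1 : ∀ i, P (g i ⁻¹' sets i) = P (f i ⁻¹' sets i) := fun i =>
    measure_congr (by
      filter_upwards [hfg i] with ω hω
      show (g i ω ∈ sets i) = (f i ω ∈ sets i)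
      rw [hω])
  have h2 : P (⋂ i ∈ S, g i ⁻¹' sets i) = P (⋂ i ∈ S, f i ⁻¹' sets i) :=
    measure_congr (by
      filter_upwards [hall] with ω hω
      show (ω ∈ ⋂ i ∈ S, g i ⁻¹' sets i) = (ω ∈ ⋂ i ∈ S, f i ⁻¹' sets i)
      simp only [Set.mem_iInter, Set.mem_preimage, hω])
  rw [h2, h S hS]
  exact Finset.prod_congr rfl fun i _ => (h1 i).symm

lemma measurable_sup_abs {Ω : Type} [MeasurableSpace Ω] {N : ℕ} (hN : 0 < N)
    (η : ℕ → Ω → ℝ) (hη : ∀ i, Measurable (η i)) :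
    Measurable (fun ω => ⨆ i : Fin N, |η i ω|) := by
  haveI : Nonempty (Fin N) := Fin.pos_iff_nonempty.1 hN
  have heq : (fun ω => ⨆ i : Fin N, |η i ω|)
      = Finset.univ.sup' Finset.univ_nonempty (fun i : Fin N => fun ω => |η i ω|) := by
    funext ω
    rw [← Finset.sup'_univ_eq_ciSup]
    exact (Finset.sup'_apply (C := fun _ : Ω => ℝ) Finset.univ_nonempty (fun i : Fin N => fun ω => |η i ω|) ω).symm
  rw [heq]
  exact Finset.measurable_sup' Finset.univ_nonempty fun i _ => (hη i).abs

end Stmt9Aux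

/-- There exist constants `c̃₃, c̃₄ > 0` such that for i.i.d. standard Gaussians,
all `L > 0` and all integers `N` with `L/2 ≤ N ≤ 2L`:
`c̃₃·L ≤ -log E[exp(-L·max_{1≤i≤N} |ξᵢ|)] ≤ c̃₄·L`. -/
theorem stmt9 :
    ∃ c₃ c₄ : ℝ, 0 < c₃ ∧ 0 < c₄ ∧
      ∀ (Ω : Type) [MeasurableSpace Ω] (P : Measure Ω), IsProbabilityMeasure P →
      ∀ ξ : ℕ → Ω → ℝ,
        iIndepFun ξ P →
        (∀ i, Measure.map (ξ i) P = gaussianReal 0 1) →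
        ∀ (L : ℝ) (N : ℕ), 0 < L → L / 2 ≤ (N : ℝ) → (N : ℝ) ≤ 2 * L →
          c₃ * L ≤ -Real.log (∫ ω, Real.exp (-(L * ⨆ i : Fin N, |ξ i ω|)) ∂P) ∧
          -Real.log (∫ ω, Real.exp (-(L * ⨆ i : Fin N, |ξ i ω|)) ∂P) ≤ c₄ * L := by
  refine ⟨(-Real.log qc)/2, 1 - 2 * Real.log pc, ?_, ?_, ?_⟩
  · have := Real.log_neg qc_pos qc_lt_one; linarith
  · have := Real.log_nonpos pc_pos.le pc_le_one; linarith
  intro Ω _ P hP ξ hindep hmap L N hL hLN hNL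
  have hNR : (0:ℝ) < N := lt_of_lt_of_le (by linarith) hLN
  have hNpos : 0 < N := by exact_mod_cast hNR
  haveI : Nonempty (Fin N) := Fin.pos_iff_nonempty.1 hNpos
  have hae : ∀ i, AEMeasurable (ξ i) P := by
    intro i
    refine aemeasurable_of_map_neZero ?_
    rw [hmap i]
    exact ⟨IsProbabilityMeasure.ne_zero _⟩
  set η : ℕ → Ω → ℝ := fun i => (hae i).mk (ξ i) with hη_def
  have hηm : ∀ i, Measurable (η i) := fun i => (hae i).measurable_mk
  have hηe : ∀ i, ξ i =ᵐ[P] η i := fun i => (hae i).ae_eq_mk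
  have hηmap : ∀ i, Measure.map (η i) P = stdG := fun i => by
    rw [← Measure.map_congr (hηe i), hmap i]; rfl
  have hηindep : iIndepFun η P := iIndepFun_congr hindep hηe
  have hall : ∀ᵐ ω ∂P, ∀ i, ξ i ω = η i ω := ae_all_iff.2 hηe
  set S : Ω → ℝ := fun ω => ⨆ i : Fin N, |η i ω| with hS_def
  have hS_meas : Measurable S := measurable_sup_abs hNpos η hηm
  have hbdd : ∀ ω, BddAbove (Set.range fun i : Fin N => |η i ω|) :=
    fun ω => (Set.finite_range _).bddAbove
  have hle : ∀ ω (i : Fin N), |η i ω| ≤ S ω := fun ω i => le_ciSup (hbdd ω) i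
  have hS0 : ∀ ω, 0 ≤ S ω := fun ω => (abs_nonneg _).trans (hle ω ⟨0, hNpos⟩)
  have hIcongr : ∫ ω, Real.exp (-(L * ⨆ i : Fin N, |ξ i ω|)) ∂P
      = ∫ ω, Real.exp (-(L * S ω)) ∂P := by
    refine integral_congr_ae ?_
    filter_upwards [hall] with ω hω
    simp only [hS_def, hω]
  have hFint : Integrable (fun ω => Real.exp (-(L * S ω))) P := by
    refine Integrable.mono' (integrable_const 1)
      (((hS_meas.const_mul L).neg.exp).aestronglyMeasurable) (ae_of_all _ fun ω => ?_)
    rw [Real.norm_eq_abs, abs_of_pos (Real.exp_pos _)]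
    exact Real.exp_le_one_iff.2 (neg_nonpos.2 (mul_nonneg hL.le (hS0 ω)))
  set t : ℝ := -(L / N) with ht_def
  have ht_neg : t ≤ 0 := neg_nonpos.2 (div_nonneg hL.le hNR.le)
  set v : ℝ := ∫ x, Real.exp (t * |x|) ∂stdG with hv_def
  have hsum_meas : Measurable (fun ω => ∑ i ∈ Finset.range N, |η i ω|) :=
    Finset.measurable_sum _ fun i _ => (hηm i).abs
  have hGint : Integrable (fun ω => Real.exp (t * ∑ i ∈ Finset.range N, |η i ω|)) P := by
    refine Integrable.mono' (integrable_const 1)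
      ((hsum_meas.const_mul t).exp.aestronglyMeasurable) (ae_of_all _ fun ω => ?_)
    rw [Real.norm_eq_abs, abs_of_pos (Real.exp_pos _)]
    exact Real.exp_le_one_iff.2 (mul_nonpos_of_nonpos_of_nonneg ht_neg
      (Finset.sum_nonneg fun i _ => abs_nonneg _))
  have hptwise : ∀ ω, Real.exp (-(L * S ω))
      ≤ Real.exp (t * ∑ i ∈ Finset.range N, |η i ω|) := by
    intro ω
    apply Real.exp_le_exp.2
    have hsum : ∑ i ∈ Finset.range N, |η i ω| ≤ N * S ω := by
      have := Finset.sum_le_card_nsmul (Finset.range N) (fun i => |η i ω|) (S ω)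
        (fun i hi => hle ω ⟨i, Finset.mem_range.1 hi⟩)
      simpa [Finset.card_range, nsmul_eq_mul] using this
    have h1 : (L/N) * (∑ i ∈ Finset.range N, |η i ω|) ≤ (L/N) * (N * S ω) :=
      mul_le_mul_of_nonneg_left hsum (by positivity)
    have h2 : (L/N) * ((N:ℝ) * S ω) = L * S ω := by
      field_simp
    have h23 : (L/(N:ℝ)) * (∑ i ∈ Finset.range N, |η i ω|) ≤ L * S ω := h2 ▸ h1
    rw [ht_def, neg_mul]
    exact neg_le_neg h23
  have habs_indep : iIndepFun (fun i => fun ω => |η i ω|) P :=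
    hηindep.comp (fun _ => (|·|)) (fun _ => measurable_abs)
  have hprod : ∫ ω, Real.exp (t * ∑ i ∈ Finset.range N, |η i ω|) ∂P = v ^ N := by
    have hmgf := habs_indep.mgf_sum (t := t) (fun i => (hηm i).abs) (Finset.range N)
    have hL1 : ∫ ω, Real.exp (t * ∑ i ∈ Finset.range N, |η i ω|) ∂P
        = mgf (∑ i ∈ Finset.range N, fun ω => |η i ω|) P t := by
      rw [mgf]
      refine integral_congr_ae (ae_of_all _ fun ω => ?_)
      simp [Finset.sum_apply]
    have hterm : ∀ i, mgf (fun ω => |η i ω|) P t = v := by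
      intro i
      have hcont : Continuous fun x : ℝ => Real.exp (t * |x|) :=
        Real.continuous_exp.comp (continuous_const.mul continuous_abs)
      have hv2 : v = ∫ ω, Real.exp (t * |η i ω|) ∂P := by
        rw [hv_def, ← hηmap i]
        exact integral_map (hηm i).aemeasurable hcont.aestronglyMeasurable
      rw [mgf, hv2]
    rw [hL1, hmgf, Finset.prod_congr rfl (fun i _ => hterm i), Finset.prod_const,
      Finset.card_range]
  have hv_le : v ≤ qc := by
    rw [hv_def, qc]
    refine integral_mono (integrable_exp_abs ht_neg) (integrable_exp_abs (by norm_num))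
      fun x => ?_
    apply Real.exp_le_exp.2
    apply mul_le_mul_of_nonneg_right _ (abs_nonneg x)
    have hhalf : (1:ℝ)/2 ≤ L / N := by
      rw [div_le_div_iff₀ (by norm_num) hNR]
      linarith
    rw [ht_def]
    linarith
  have hv_nonneg : 0 ≤ v := integral_nonneg fun x => (Real.exp_pos _).le
  have hI_le : ∫ ω, Real.exp (-(L * S ω)) ∂P ≤ qc ^ N := by
    calc ∫ ω, Real.exp (-(L * S ω)) ∂P
        ≤ ∫ ω, Real.exp (t * ∑ i ∈ Finset.range N, |η i ω|) ∂P :=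
          integral_mono hFint hGint hptwise
      _ = v ^ N := hprod
      _ ≤ qc ^ N := pow_le_pow_left₀ hv_nonneg hv_le N
  set B : Set ℝ := {x : ℝ | |x| ≤ 1} with hB_def
  set A : Set Ω := ⋂ i ∈ Finset.range N, η i ⁻¹' B with hA_def
  have hA_meas : MeasurableSet A :=
    MeasurableSet.iInter fun i => MeasurableSet.iInter fun _ => (hηm i) measurableSet_B
  have hPA : P A = (stdG B) ^ N := by
    rw [hA_def, hηindep.meas_biInter (fun i _ => ⟨B, measurableSet_B, rfl⟩)]
    have hterm : ∀ i, P (η i ⁻¹' B) = stdG B := fun i => by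
      rw [← hηmap i, Measure.map_apply (hηm i) measurableSet_B]
    rw [Finset.prod_congr rfl fun i _ => hterm i, Finset.prod_const, Finset.card_range]
  have hPA_toReal : (P A).toReal = pc ^ N := by
    rw [hPA, ENNReal.toReal_pow]; rfl
  have hAineq : ∀ ω ∈ A, Real.exp (-L) ≤ Real.exp (-(L * S ω)) := by
    intro ω hω
    apply Real.exp_le_exp.2
    have hS1 : S ω ≤ 1 := by
      refine ciSup_le fun i => ?_
      have hmem := Set.mem_iInter₂.1 hω (i : ℕ) (Finset.mem_range.2 i.2)
      exact hmem
    have := mul_le_of_le_one_right hL.le hS1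
    linarith
  have hI_ge : Real.exp (-L) * pc ^ N ≤ ∫ ω, Real.exp (-(L * S ω)) ∂P := by
    calc Real.exp (-L) * pc ^ N = Real.exp (-L) * (P A).toReal := by rw [hPA_toReal]
      _ ≤ ∫ ω in A, Real.exp (-(L * S ω)) ∂P :=
          by have := setIntegral_ge_of_const_le hA_meas (measure_ne_top _ _) hAineq hFint.integrableOn
             rw [smul_eq_mul, mul_comm] at this; exact this
      _ ≤ ∫ ω, Real.exp (-(L * S ω)) ∂P :=
          setIntegral_le_integral hFint (ae_of_all _ fun ω => (Real.exp_pos _).le)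
  rw [hIcongr]
  set I : ℝ := ∫ ω, Real.exp (-(L * S ω)) ∂P with hI_def
  have hI_pos : 0 < I := lt_of_lt_of_le (mul_pos (Real.exp_pos _) (pow_pos pc_pos N)) hI_ge
  have hlogq : Real.log qc < 0 := Real.log_neg qc_pos qc_lt_one
  have hlogp : Real.log pc ≤ 0 := Real.log_nonpos pc_pos.le pc_le_one
  constructor
  · have h1 : Real.log I ≤ Real.log (qc ^ N) := Real.log_le_log hI_pos hI_le
    rw [Real.log_pow] at h1
    have h2 : (N:ℝ) * Real.log qc ≤ (L/2) * Real.log qc :=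
      mul_le_mul_of_nonpos_right hLN hlogq.le
    nlinarith
  · have hpr : pc ^ N = pc ^ ((N:ℝ)) := (Real.rpow_natCast pc N).symm
    have h4 : pc ^ ((2:ℝ) * L) ≤ pc ^ ((N:ℝ)) :=
      Real.rpow_le_rpow_of_exponent_ge pc_pos pc_le_one hNL
    have h6 : Real.exp (-L + Real.log pc * (2*L)) ≤ I := by
      rw [Real.exp_add]
      calc Real.exp (-L) * Real.exp (Real.log pc * (2*L))
          = Real.exp (-L) * pc ^ ((2:ℝ)*L) := by rw [← Real.rpow_def_of_pos pc_pos]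
        _ ≤ Real.exp (-L) * pc ^ N := by
            rw [hpr]; exact mul_le_mul_of_nonneg_left h4 (Real.exp_pos _).le
        _ ≤ I := hI_ge
    have h7 : -L + Real.log pc * (2*L) ≤ Real.log I := (Real.le_log_iff_exp_le hI_pos).2 h6
    nlinarith
end

section
/- For every α > 0, as L → ∞ one has log ∫_0^∞ exp(−y − L·y^{−α}) dy ∼ −C_α·L^{1/(1+α)}, where C_α = (1+α)·α^{−α/(1+α)} and f ∼ g means the ratio tends to 1. -/
open MeasureTheory Filter

namespace Stmt11Aux

noncomputable def m (α L : ℝ) : ℝ := (1 + α) * α ^ (-α / (1 + α)) * L ^ (1 / (1 + α))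

lemma m_le (α : ℝ) (hα : 0 < α) {L y : ℝ} (hL : 0 < L) (hy : 0 < y) :
    m α L ≤ y + L * y ^ (-α) := by
  have h1 : (0:ℝ) < 1 + α := by linarith
  set w₁ := α / (1 + α) with hw₁def
  set w₂ := 1 / (1 + α) with hw₂def
  have hw₁ : 0 ≤ w₁ := by positivity
  have hw₂ : 0 ≤ w₂ := by positivity
  have hw : w₁ + w₂ = 1 := by rw [hw₁def, hw₂def]; field_simp; ring
  have hyα : 0 ≤ y ^ (-α) := Real.rpow_nonneg hy.le _
  have hp₁ : 0 ≤ (1 + α) / α * y := by positivity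
  have hp₂ : 0 ≤ (1 + α) * (L * y ^ (-α)) := by positivity
  have key := Real.geom_mean_le_arith_mean2_weighted hw₁ hw₂ hp₁ hp₂ hw
  have hrhs : w₁ * ((1 + α) / α * y) + w₂ * ((1 + α) * (L * y ^ (-α)))
      = y + L * y ^ (-α) := by
    rw [hw₁def, hw₂def]; field_simp
  have e1 : ((1 + α) / α * y) ^ w₁ = (1 + α) ^ w₁ * α ^ (-w₁) * y ^ w₁ := by
    rw [Real.mul_rpow (by positivity) hy.le, Real.div_rpow h1.le hα.le,
      Real.rpow_neg hα.le, div_eq_mul_inv]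
  have e2 : ((1 + α) * (L * y ^ (-α))) ^ w₂
      = (1 + α) ^ w₂ * L ^ w₂ * y ^ (-α * w₂) := by
    rw [Real.mul_rpow h1.le (by positivity), Real.mul_rpow hL.le hyα,
      Real.rpow_mul hy.le]
    ring
  have hlhs : ((1 + α) / α * y) ^ w₁ * ((1 + α) * (L * y ^ (-α))) ^ w₂ = m α L := by
    rw [e1, e2]
    have e3 : (1 + α) ^ w₁ * α ^ (-w₁) * y ^ w₁ * ((1 + α) ^ w₂ * L ^ w₂ * y ^ (-α * w₂))
        = ((1 + α) ^ w₁ * (1 + α) ^ w₂) * α ^ (-w₁) * L ^ w₂ * (y ^ w₁ * y ^ (-α * w₂)) := by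
      ring
    rw [e3, ← Real.rpow_add h1, hw, Real.rpow_one, ← Real.rpow_add hy]
    have e4 : w₁ + -α * w₂ = 0 := by rw [hw₁def, hw₂def]; field_simp; ring
    rw [e4, Real.rpow_zero, mul_one, m]
    have e5 : -w₁ = -α / (1 + α) := by rw [hw₁def]; ring
    rw [e5, hw₂def]
  rw [hlhs, hrhs] at key
  exact key

lemma crit_eq (α : ℝ) (hα : 0 < α) {L : ℝ} (hL : 0 < L) :
    (α * L) ^ (1 / (1 + α)) + L * ((α * L) ^ (1 / (1 + α))) ^ (-α) = m α L := by
  have h1 : (0:ℝ) < 1 + α := by linarith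
  have hαL : (0:ℝ) < α * L := by positivity
  have A : ((α * L) ^ (1 / (1 + α))) ^ (-α)
      = α ^ (-α / (1 + α)) * L ^ (-α / (1 + α)) := by
    rw [← Real.rpow_mul hαL.le]
    have : 1 / (1 + α) * -α = -α / (1 + α) := by ring
    rw [this, Real.mul_rpow hα.le hL.le]
  have B : L * L ^ (-α / (1 + α)) = L ^ (1 / (1 + α)) := by
    have hb : (1:ℝ) / (1 + α) = 1 + -α / (1 + α) := by field_simp; ring
    rw [hb, Real.rpow_add hL, Real.rpow_one]
  have C : α ^ (1 / (1 + α)) = α * α ^ (-α / (1 + α)) := by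
    have hb : (1:ℝ) / (1 + α) = 1 + -α / (1 + α) := by field_simp; ring
    rw [hb, Real.rpow_add hα, Real.rpow_one]
  rw [A, Real.mul_rpow hα.le hL.le, C, m]
  have : α * α ^ (-α / (1 + α)) * L ^ (1 / (1 + α))
      + L * (α ^ (-α / (1 + α)) * L ^ (-α / (1 + α)))
      = α * α ^ (-α / (1 + α)) * L ^ (1 / (1 + α))
      + α ^ (-α / (1 + α)) * (L * L ^ (-α / (1 + α))) := by ring
  rw [this, B]
  ring

lemma integ (α : ℝ) (hα : 0 < α) {L : ℝ} (hL : 0 ≤ L) :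
    IntegrableOn (fun y : ℝ => Real.exp (-y - L * y ^ (-α))) (Set.Ioi 0) := by
  have h := exp_neg_integrableOn_Ioi 0 (one_pos : (0:ℝ) < 1)
  refine h.mono' ?_ ?_
  · apply Measurable.aestronglyMeasurable
    fun_prop
  · filter_upwards [ae_restrict_mem measurableSet_Ioi] with y hy
    rw [Real.norm_eq_abs, Real.abs_exp]
    apply Real.exp_le_exp.2
    have h0 : 0 ≤ L * y ^ (-α) :=
      mul_nonneg hL (Real.rpow_nonneg (le_of_lt hy) _)
    nlinarith [h0]

lemma m_tendsto (α : ℝ) (hα : 0 < α) : Tendsto (m α) atTop atTop := by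
  have h1 : (0:ℝ) < 1 + α := by linarith
  have hC : 0 < (1 + α) * α ^ (-α / (1 + α)) := by positivity
  have := (tendsto_rpow_atTop (y := 1 / (1 + α)) (by positivity)).const_mul_atTop hC
  exact this

end Stmt11Aux

open Stmt11Aux Set

/-- For every `α > 0`, as `L → ∞`:
`log ∫_0^∞ exp(-y - L·y^(-α)) dy ∼ -C_α·L^(1/(1+α))` with
`C_α = (1+α)·α^(-α/(1+α))`. -/
theorem stmt11 (α : ℝ) (hα : 0 < α) :
    Tendsto
      (fun L : ℝ =>
        Real.log (∫ y in Set.Ioi (0 : ℝ), Real.exp (-y - L * y ^ (-α))) /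
          (-((1 + α) * α ^ (-α / (1 + α)) * L ^ (1 / (1 + α)))))
      atTop (nhds 1) := by
  have h1 : (0:ℝ) < 1 + α := by linarith
  rw [Metric.tendsto_nhds]
  intro ε hε
  -- choose θ = 1 - ε'
  set ε' : ℝ := min ε 1 / 2 with hε'def
  have hε'pos : 0 < ε' := by
    have := lt_min hε one_pos
    positivity
  have hε'le : ε' ≤ ε / 2 := by
    have : min ε 1 ≤ ε := min_le_left _ _
    rw [hε'def]; linarith
  have hε'lt1 : ε' < 1 := by
    have : min ε 1 ≤ 1 := min_le_right _ _
    rw [hε'def]; linarith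
  set θ : ℝ := 1 - ε' with hθdef
  have hθpos : 0 < θ := by rw [hθdef]; linarith
  have hθlt1 : θ < 1 := by rw [hθdef]; linarith
  set K : ℝ := ∫ y in Set.Ioi (0:ℝ), Real.exp (-(1 - θ) * y) with hKdef
  have hKint : IntegrableOn (fun y : ℝ => Real.exp (-(1 - θ) * y)) (Set.Ioi 0) :=
    exp_neg_integrableOn_Ioi 0 (by linarith : (0:ℝ) < 1 - θ)
  have hKpos : 0 < K := by
    rw [hKdef]
    refine (setIntegral_pos_iff_support_of_nonneg_ae ?_ hKint).mpr ?_
    · filter_upwards with y using (Real.exp_pos _).le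
    · have : (Function.support fun y : ℝ => Real.exp (-(1 - θ) * y)) = Set.univ := by
        ext y; simp [Function.support, Real.exp_ne_zero]
      rw [this, Set.univ_inter]
      simp [Real.volume_Ioi]
  set c : ℝ := |Real.log K| with hcdef
  have hc0 : 0 ≤ c := abs_nonneg _
  set M : ℝ := (2 + 2 * c) / ε + 1 with hMdef
  have hM0 : 0 < M := by positivity
  have hεM : 2 + 2 * c + ε ≤ ε * M := by
    rw [hMdef]
    have : ε * ((2 + 2 * c) / ε + 1) = 2 + 2 * c + ε := by field_simp
    linarith [this.ge]
  filter_upwards [(m_tendsto α hα).eventually_ge_atTop M, eventually_gt_atTop (0:ℝ)]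
    with L hmL hL
  set mm : ℝ := m α L with hmmdef
  have hmm0 : 0 < mm := lt_of_lt_of_le hM0 hmL
  have hεm : 2 + 2 * c + ε ≤ ε * mm :=
    le_trans hεM (by nlinarith)
  set I : ℝ := ∫ y in Set.Ioi (0:ℝ), Real.exp (-y - L * y ^ (-α)) with hIdef
  -- lower bound on I
  set y₀ : ℝ := (α * L) ^ (1 / (1 + α)) with hy₀def
  have hy₀pos : 0 < y₀ := Real.rpow_pos_of_pos (by positivity) _
  have hIlow : Real.exp (-(mm + 1)) ≤ I := by
    have hsub : Set.Ioc y₀ (y₀ + 1) ⊆ Set.Ioi (0:ℝ) := fun x hx => lt_trans hy₀pos hx.1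
    have hstep1 : Real.exp (-(mm + 1)) * (volume (Set.Ioc y₀ (y₀ + 1))).toReal
        ≤ ∫ y in Set.Ioc y₀ (y₀ + 1), Real.exp (-y - L * y ^ (-α)) := by
      apply setIntegral_ge_of_const_le_real measurableSet_Ioc
      · exact ((measure_Ioc_lt_top)).ne
      · intro x hx
        apply Real.exp_le_exp.2
        have hxpos : 0 < x := lt_trans hy₀pos hx.1
        have hx1 : x ≤ y₀ + 1 := hx.2
        have hx2 : x ^ (-α) ≤ y₀ ^ (-α) :=
          Real.rpow_le_rpow_of_nonpos hy₀pos hx.1.le (by linarith)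
        have hx3 : L * x ^ (-α) ≤ L * y₀ ^ (-α) :=
          mul_le_mul_of_nonneg_left hx2 hL.le
        have hcrit : y₀ + L * y₀ ^ (-α) = mm := by
          rw [hmmdef, hy₀def]; exact crit_eq α hα hL
        nlinarith
      · exact (integ α hα hL.le).mono_set hsub
    have hstep2 : (∫ y in Set.Ioc y₀ (y₀ + 1), Real.exp (-y - L * y ^ (-α))) ≤ I := by
      rw [hIdef]
      apply setIntegral_mono_set (integ α hα hL.le)
      · filter_upwards with y using (Real.exp_pos _).le
      · exact HasSubset.Subset.eventuallyLE hsub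
    have hvol : (volume (Set.Ioc y₀ (y₀ + 1))).toReal = 1 := by
      rw [Real.volume_Ioc]
      norm_num
    rw [hvol, mul_one] at hstep1
    linarith
  have hIpos : 0 < I := lt_of_lt_of_le (Real.exp_pos _) hIlow
  -- upper bound on I
  have hIup : I ≤ Real.exp (-(θ * mm)) * K := by
    have hrw : Real.exp (-(θ * mm)) * K
        = ∫ y in Set.Ioi (0:ℝ), Real.exp (-(θ * mm)) * Real.exp (-(1 - θ) * y) := by
      rw [hKdef, MeasureTheory.integral_const_mul]
    rw [hIdef, hrw]
    apply setIntegral_mono_on (integ α hα hL.le) (hKint.const_mul _) measurableSet_Ioi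
    intro y hy
    rw [← Real.exp_add]
    apply Real.exp_le_exp.2
    have hmin : mm ≤ y + L * y ^ (-α) := m_le α hα hL hy
    have h0 : 0 ≤ L * y ^ (-α) := mul_nonneg hL.le (Real.rpow_nonneg (le_of_lt hy) _)
    nlinarith
  -- log bounds
  have hlog_low : -(mm + 1) ≤ Real.log I := (Real.le_log_iff_exp_le hIpos).2 hIlow
  have hlog_up : Real.log I ≤ -(θ * mm) + Real.log K := by
    have := Real.log_le_log hIpos hIup
    rwa [Real.log_mul (Real.exp_ne_zero _) hKpos.ne', Real.log_exp] at this
  -- conclude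
  rw [Real.dist_eq]
  have hmexpr : -((1 + α) * α ^ (-α / (1 + α)) * L ^ (1 / (1 + α))) = -mm := by
    rw [hmmdef, m]
  rw [hmexpr]
  have heq : (Real.log I + mm) / (-mm) = Real.log I / (-mm) - 1 := by
    rw [add_div, div_neg, div_neg, div_self hmm0.ne']
    ring
  rw [← heq, abs_div, abs_neg, abs_of_pos hmm0, div_lt_iff₀ hmm0, abs_lt]
  have hlogK : Real.log K ≤ c := le_abs_self _
  have hε'm : ε' * mm ≤ ε / 2 * mm := mul_le_mul_of_nonneg_right hε'le hmm0.le
  have h2 : θ * mm = mm - ε' * mm := by rw [hθdef]; ring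
  have h3 : ε / 2 * mm = ε * mm / 2 := by ring
  constructor
  · linarith
  · linarith
end

section
/- For every α > 0 there exist constants 0 < k₁ ≤ k₂ < ∞ such that as δ → 0⁺: if α > 1, then k₁·δ^{1/α} ≤ −log ∫_0^∞ exp(−y − δ·y^{−α}) dy ≤ k₂·δ^{1/α}; if α = 1, then k₁·δ·log(1/δ) ≤ −log ∫_0^∞ exp(−y − δ/y) dy ≤ k₂·δ·log(1/δ); if 0 < α < 1, then k₁·δ ≤ −log ∫_0^∞ exp(−y − δ·y^{−α}) dy ≤ k₂·δ. -/
open MeasureTheory Filter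

section
open MeasureTheory Set Filter

namespace Stmt12Aux

lemma g_eq (y t : ℝ) : Real.exp (-y) - Real.exp (-y - t)
    = Real.exp (-y) * (1 - Real.exp (-t)) := by
  rw [show -y - t = -y + -t by ring, Real.exp_add]; ring

lemma one_sub_exp_le {t : ℝ} : 1 - Real.exp (-t) ≤ t := by
  have := Real.add_one_le_exp (-t); linarith

lemma half_le_one_sub_exp {t : ℝ} (h0 : 0 ≤ t) (h1 : t ≤ 1) :
    t / 2 ≤ 1 - Real.exp (-t) := by
  have h := Real.add_one_le_exp t
  have h2 : Real.exp (-t) * Real.exp t = 1 := by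
    rw [← Real.exp_add]; simp
  nlinarith [Real.exp_pos (-t), Real.exp_pos t]

lemma hexp_int : IntegrableOn (fun y : ℝ => Real.exp (-y)) (Ioi 0) := by
  simpa using exp_neg_integrableOn_Ioi 0 one_pos

lemma hint {f : ℝ → ℝ} (hm : Measurable f) (h0 : ∀ y ∈ Ioi (0:ℝ), 0 ≤ f y)
    (h1 : ∀ y ∈ Ioi (0:ℝ), f y ≤ Real.exp (-y)) : IntegrableOn f (Ioi 0) := by
  refine Integrable.mono hexp_int hm.aestronglyMeasurable.restrict ?_
  filter_upwards [ae_restrict_mem measurableSet_Ioi] with y hy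
  rw [Real.norm_eq_abs, Real.norm_eq_abs, abs_of_nonneg (h0 y hy),
    abs_of_nonneg (Real.exp_nonneg _)]
  exact h1 y hy

lemma bridge {f : ℝ → ℝ} (hf : IntegrableOn f (Ioi 0))
    {L U : ℝ} (hL : L ≤ ∫ y in Ioi (0:ℝ), (Real.exp (-y) - f y))
    (hU : (∫ y in Ioi (0:ℝ), (Real.exp (-y) - f y)) ≤ U) (hL0 : 0 ≤ L) (hU2 : U ≤ 1/2) :
    L ≤ -Real.log (∫ y in Ioi (0:ℝ), f y) ∧
      -Real.log (∫ y in Ioi (0:ℝ), f y) ≤ 2 * U := by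
  set I := ∫ y in Ioi (0:ℝ), f y with hI
  have hJ : (∫ y in Ioi (0:ℝ), (Real.exp (-y) - f y)) = 1 - I := by
    rw [integral_sub hexp_int hf, integral_exp_neg_Ioi_zero]
  rw [hJ] at hL hU
  have hIpos : 0 < I := by linarith
  have h1 : Real.log I ≤ I - 1 := Real.log_le_sub_one_of_pos hIpos
  have h2 : -Real.log I ≤ 2 * (1 - I) := by
    have := Real.log_le_sub_one_of_pos (inv_pos.mpr hIpos)
    rw [Real.log_inv] at this
    have hinv : I⁻¹ ≤ 2 := by
      rw [inv_le_comm₀ hIpos (by norm_num)]; linarith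
    nlinarith [mul_inv_cancel₀ hIpos.ne']
  constructor
  · linarith
  · linarith

lemma J_split {g : ℝ → ℝ} {c : ℝ} (hg : IntegrableOn g (Ioi c)) {a : ℝ} (ha : c ≤ a) :
    ∫ y in Ioi c, g y = (∫ y in Ioc c a, g y) + ∫ y in Ioi a, g y := by
  rw [← Ioc_union_Ioi_eq_Ioi ha,
    setIntegral_union Ioc_disjoint_Ioi_same measurableSet_Ioi
      (hg.mono_set Ioc_subset_Ioi_self) (hg.mono_set (Ioi_subset_Ioi ha))]

lemma J_lower {g h : ℝ → ℝ} (hg : IntegrableOn g (Ioi 0))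
    (hg0 : ∀ y ∈ Ioi (0:ℝ), 0 ≤ g y)
    {a b : ℝ} (hab : 0 ≤ a) (hh : IntegrableOn h (Ioc a b))
    (hhle : ∀ y ∈ Ioc a b, h y ≤ g y) :
    (∫ y in Ioc a b, h y) ≤ ∫ y in Ioi (0:ℝ), g y := by
  have hsub : Ioc a b ⊆ Ioi (0:ℝ) := Ioc_subset_Ioi_self.trans (Ioi_subset_Ioi hab)
  calc (∫ y in Ioc a b, h y) ≤ ∫ y in Ioc a b, g y :=
        setIntegral_mono_on hh (hg.mono_set hsub) measurableSet_Ioc hhle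
    _ ≤ ∫ y in Ioi (0:ℝ), g y := by
        refine setIntegral_mono_set hg ?_ (HasSubset.Subset.eventuallyLE hsub)
        filter_upwards [ae_restrict_mem measurableSet_Ioi] with y hy using hg0 y hy

lemma case_gt (α : ℝ) (hα : 1 < α) :
    ∃ k₁ k₂ : ℝ, 0 < k₁ ∧ k₁ ≤ k₂ ∧
    ∀ᶠ δ in nhdsWithin (0:ℝ) (Ioi 0),
      k₁ * δ ^ (1/α) ≤ -Real.log (∫ y in Ioi (0:ℝ), Real.exp (-y - δ * y ^ (-α))) ∧
      -Real.log (∫ y in Ioi (0:ℝ), Real.exp (-y - δ * y ^ (-α))) ≤ k₂ * δ ^ (1/α) := by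
  have hα0 : 0 < α := by linarith
  set C : ℝ := 1 + 1/(α-1) with hCdef
  have hC1 : 1 ≤ C := by
    have h : 0 < 1/(α-1) := one_div_pos.mpr (by linarith)
    rw [hCdef]; linarith
  have hC0 : 0 < C := by linarith
  have hk1pos : 0 < Real.exp (-1) * (1 - Real.exp (-1)) := by
    have := Real.exp_lt_one_iff.mpr (show (-1:ℝ) < 0 by norm_num)
    have := Real.exp_pos (-1:ℝ)
    nlinarith
  refine ⟨Real.exp (-1) * (1 - Real.exp (-1)), 2*C, hk1pos, ?_, ?_⟩
  · have h1 := Real.exp_pos (-1:ℝ)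
    have h2 : Real.exp (-1:ℝ) ≤ 1 := Real.exp_le_one_iff.mpr (by norm_num)
    nlinarith
  have ht : Tendsto (fun δ : ℝ => C * δ ^ (1/α)) (nhdsWithin 0 (Ioi 0)) (nhds 0) := by
    have h0 : ContinuousAt (fun x : ℝ => x ^ (1/α)) 0 :=
      Real.continuousAt_rpow_const 0 (1/α) (Or.inr (by positivity))
    have h1 : Tendsto (fun x : ℝ => x ^ (1/α)) (nhdsWithin 0 (Ioi 0)) (nhds ((0:ℝ) ^ (1/α))) :=
      h0.tendsto.mono_left nhdsWithin_le_nhds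
    rw [Real.zero_rpow (one_div_pos.mpr hα0).ne'] at h1
    simpa using h1.const_mul C
  have hev := ht.eventually_lt_const (show (0:ℝ) < 1/4 by norm_num)
  filter_upwards [hev, Ioo_mem_nhdsGT_of_mem (show (0:ℝ) ∈ Ico (0:ℝ) 1 from ⟨le_rfl, one_pos⟩)]
    with δ h4 hδ
  obtain ⟨hδ0, hδ1⟩ := hδ
  set a : ℝ := δ ^ (1/α) with hadef
  have ha0 : 0 < a := Real.rpow_pos_of_pos hδ0 _
  have ha1 : a ≤ 1 := Real.rpow_le_one hδ0.le hδ1.le (one_div_pos.mpr hα0).le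
  have haα : a ^ α = δ := by
    rw [hadef, ← Real.rpow_mul hδ0.le, one_div_mul_cancel hα0.ne', Real.rpow_one]
  set f : ℝ → ℝ := fun y => Real.exp (-y - δ * y ^ (-α)) with hfdef
  have hfle : ∀ y ∈ Ioi (0:ℝ), f y ≤ Real.exp (-y) := by
    intro y hy
    have : 0 ≤ δ * y ^ (-α) :=
      mul_nonneg hδ0.le (Real.rpow_nonneg (le_of_lt (mem_Ioi.mp hy)) _)
    exact Real.exp_le_exp.mpr (by linarith)
  have hf : IntegrableOn f (Ioi 0) :=
    hint (by fun_prop) (fun y _ => Real.exp_nonneg _) hfle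
  set g : ℝ → ℝ := fun y => Real.exp (-y) - f y with hgdef
  have hg : IntegrableOn g (Ioi 0) := hexp_int.sub hf
  have hg0 : ∀ y ∈ Ioi (0:ℝ), 0 ≤ g y := fun y hy => sub_nonneg.2 (hfle y hy)
  -- upper bound
  have hsplit := J_split hg ha0.le
  have hpiece1 : (∫ y in Ioc (0:ℝ) a, g y) ≤ a := by
    have h1 : (∫ y in Ioc (0:ℝ) a, g y) ≤ ∫ _y in Ioc (0:ℝ) a, (1:ℝ) := by
      refine setIntegral_mono_on (hg.mono_set Ioc_subset_Ioi_self)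
        (integrableOn_const measure_Ioc_lt_top.ne) measurableSet_Ioc ?_
      intro y hy
      have h2 : Real.exp (-y) ≤ 1 := Real.exp_le_one_iff.mpr (by linarith [hy.1])
      have h3 : 0 ≤ f y := Real.exp_nonneg _
      simp only [hgdef]; linarith
    rw [setIntegral_const, Real.volume_real_Ioc_of_le (by linarith), smul_eq_mul, mul_one] at h1
    linarith
  have hrint : IntegrableOn (fun y : ℝ => y ^ (-α)) (Ioi a) :=
    integrableOn_Ioi_rpow_of_lt (by linarith) ha0
  have hpiece2 : (∫ y in Ioi a, g y) ≤ a / (α - 1) := by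
    have h1 : (∫ y in Ioi a, g y) ≤ ∫ y in Ioi a, δ * y ^ (-α) := by
      refine setIntegral_mono_on (hg.mono_set (Ioi_subset_Ioi ha0.le))
        (hrint.const_mul δ) measurableSet_Ioi ?_
      intro y hy
      have hy0 : 0 < y := lt_trans ha0 hy
      have ht0 : 0 ≤ δ * y ^ (-α) := by positivity
      have h2 : Real.exp (-y) ≤ 1 := Real.exp_le_one_iff.mpr (by linarith)
      have h3 := @one_sub_exp_le (δ * y ^ (-α))
      have h4 : 0 ≤ 1 - Real.exp (-(δ * y ^ (-α))) := by
        have := Real.exp_le_one_iff.mpr (neg_nonpos.mpr ht0); linarith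
      simp only [hgdef, hfdef]
      rw [g_eq]
      nlinarith [Real.exp_nonneg (-y)]
    have h2 : (∫ y in Ioi a, δ * y ^ (-α)) = a / (α - 1) := by
      rw [integral_const_mul, integral_Ioi_rpow_of_lt (by linarith) ha0]
      have e1 : δ * a ^ (-α + 1) = a := by
        nth_rewrite 1 [← haα]
        rw [← Real.rpow_add ha0]
        norm_num
      have e2 : (-α + 1 : ℝ) = -(α - 1) := by ring
      rw [e2] at e1 ⊢
      rw [neg_div_neg_eq, ← mul_div_assoc, e1]
    linarith
  have hJU : (∫ y in Ioi (0:ℝ), g y) ≤ C * a := by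
    rw [hsplit, hCdef]
    have hne : α - 1 ≠ 0 := ne_of_gt (by linarith)
    have : a + a / (α-1) = (1 + 1/(α-1)) * a := by field_simp
    linarith
  -- lower bound
  have hJL : Real.exp (-1) * (1 - Real.exp (-1)) * a ≤ ∫ y in Ioi (0:ℝ), g y := by
    have h1 : (∫ _y in Ioc (0:ℝ) a, (Real.exp (-1) * (1 - Real.exp (-1)))) ≤
        ∫ y in Ioi (0:ℝ), g y := by
      refine J_lower hg hg0 le_rfl (integrableOn_const measure_Ioc_lt_top.ne) ?_
      intro y hy
      obtain ⟨hy0, hya⟩ := hy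
      have h5 : a ^ (-α) ≤ y ^ (-α) := Real.rpow_le_rpow_of_nonpos hy0 hya (by linarith)
      have h6 : δ * a ^ (-α) = 1 := by
        nth_rewrite 1 [← haα]
        rw [← Real.rpow_add ha0, add_neg_cancel, Real.rpow_zero]
      have h7 : 1 ≤ δ * y ^ (-α) := by
        rw [← h6]
        exact mul_le_mul_of_nonneg_left h5 hδ0.le
      have h8 : Real.exp (-(δ * y ^ (-α))) ≤ Real.exp (-1) :=
        Real.exp_le_exp.mpr (by linarith)
      have h9 : Real.exp (-1) ≤ Real.exp (-y) := Real.exp_le_exp.mpr (by linarith)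
      simp only [hgdef, hfdef]
      rw [g_eq]
      have h10 : 0 ≤ 1 - Real.exp (-1) := by
        have := Real.exp_le_one_iff.mpr (show (-1:ℝ) ≤ 0 by norm_num); linarith
      have h11 : (0:ℝ) < Real.exp (-1) := Real.exp_pos _
      nlinarith
    rw [setIntegral_const, Real.volume_real_Ioc_of_le (by linarith), smul_eq_mul] at h1
    nlinarith
  have hU2 : C * a ≤ 1/2 := by linarith
  have := bridge hf hJL hJU (by positivity) hU2
  constructor
  · exact this.1
  · calc -Real.log (∫ y in Ioi (0:ℝ), f y) ≤ 2 * (C * a) := this.2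
      _ = 2 * C * a := by ring


lemma case_lt (α : ℝ) (hα0 : 0 < α) (hα : α < 1) :
    ∃ k₁ k₂ : ℝ, 0 < k₁ ∧ k₁ ≤ k₂ ∧
    ∀ᶠ δ in nhdsWithin (0:ℝ) (Ioi 0),
      k₁ * δ ≤ -Real.log (∫ y in Ioi (0:ℝ), Real.exp (-y - δ * y ^ (-α))) ∧
      -Real.log (∫ y in Ioi (0:ℝ), Real.exp (-y - δ * y ^ (-α))) ≤ k₂ * δ := by
  have hGint : IntegrableOn (fun y : ℝ => Real.exp (-y) * y ^ (-α)) (Ioi 0) := by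
    have h := Real.GammaIntegral_convergent (show 0 < 1 - α by linarith)
    simpa [show (1:ℝ) - α - 1 = -α from by ring] using h
  set C : ℝ := ∫ y in Ioi (0:ℝ), Real.exp (-y) * y ^ (-α) with hCdef
  set M : ℝ := max C 1 with hMdef
  have hM1 : 1 ≤ M := le_max_right _ _
  refine ⟨Real.exp (-2) / 4, 2 * M, by positivity, ?_, ?_⟩
  · have h2 : Real.exp (-2:ℝ) ≤ 1 := Real.exp_le_one_iff.mpr (by norm_num)
    linarith
  have ht : Tendsto (fun δ : ℝ => M * δ) (nhdsWithin 0 (Ioi 0)) (nhds 0) := by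
    have h1 : Tendsto (fun δ : ℝ => M * δ) (nhds 0) (nhds (M * 0)) :=
      (continuous_const.mul continuous_id).tendsto 0
    rw [mul_zero] at h1
    exact h1.mono_left nhdsWithin_le_nhds
  have hev := ht.eventually_lt_const (show (0:ℝ) < 1/4 by norm_num)
  filter_upwards [hev, Ioo_mem_nhdsGT_of_mem (show (0:ℝ) ∈ Ico (0:ℝ) 1 from ⟨le_rfl, one_pos⟩)]
    with δ h4 hδ
  obtain ⟨hδ0, hδ1⟩ := hδ
  set f : ℝ → ℝ := fun y => Real.exp (-y - δ * y ^ (-α)) with hfdef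
  have hfle : ∀ y ∈ Ioi (0:ℝ), f y ≤ Real.exp (-y) := by
    intro y hy
    have : 0 ≤ δ * y ^ (-α) :=
      mul_nonneg hδ0.le (Real.rpow_nonneg (le_of_lt (mem_Ioi.mp hy)) _)
    exact Real.exp_le_exp.mpr (by linarith)
  have hf : IntegrableOn f (Ioi 0) :=
    hint (by fun_prop) (fun y _ => Real.exp_nonneg _) hfle
  set g : ℝ → ℝ := fun y => Real.exp (-y) - f y with hgdef
  have hg : IntegrableOn g (Ioi 0) := hexp_int.sub hf
  have hg0 : ∀ y ∈ Ioi (0:ℝ), 0 ≤ g y := fun y hy => sub_nonneg.2 (hfle y hy)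
  -- upper bound
  have hJU : (∫ y in Ioi (0:ℝ), g y) ≤ M * δ := by
    have h1 : (∫ y in Ioi (0:ℝ), g y) ≤ ∫ y in Ioi (0:ℝ), δ * (Real.exp (-y) * y ^ (-α)) := by
      refine setIntegral_mono_on hg (hGint.const_mul δ) measurableSet_Ioi ?_
      intro y hy
      have hy0 : 0 < y := mem_Ioi.mp hy
      have hr0 : 0 ≤ y ^ (-α) := Real.rpow_nonneg hy0.le _
      have h3 := @one_sub_exp_le (δ * y ^ (-α))
      have h4' : 0 ≤ 1 - Real.exp (-(δ * y ^ (-α))) := by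
        have : Real.exp (-(δ * y ^ (-α))) ≤ 1 :=
          Real.exp_le_one_iff.mpr (neg_nonpos.mpr (mul_nonneg hδ0.le hr0))
        linarith
      simp only [hgdef, hfdef]
      rw [g_eq]
      nlinarith [Real.exp_nonneg (-y), Real.exp_le_one_iff.mpr (neg_nonpos.mpr hy0.le)]
    rw [integral_const_mul, ← hCdef] at h1
    have hC_le : C ≤ M := le_max_left _ _
    nlinarith
  -- lower bound
  have hJL : Real.exp (-2) / 4 * δ ≤ ∫ y in Ioi (0:ℝ), g y := by
    have h1 : (∫ _y in Ioc (1:ℝ) 2, (Real.exp (-2) * (δ / 4))) ≤ ∫ y in Ioi (0:ℝ), g y := by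
      refine J_lower hg hg0 zero_le_one (integrableOn_const measure_Ioc_lt_top.ne) ?_
      intro y hy
      obtain ⟨hy1, hy2⟩ := hy
      have hy0 : 0 < y := lt_trans one_pos hy1
      have hta : y ^ (-α) ≤ 1 :=
        Real.rpow_le_one_of_one_le_of_nonpos hy1.le (by linarith)
      have htb : (1:ℝ)/2 ≤ y ^ (-α) := by
        have b1 : (2:ℝ) ^ (-α) ≤ y ^ (-α) :=
          Real.rpow_le_rpow_of_nonpos hy0 hy2 (by linarith)
        have b2 : (2:ℝ) ^ (-1:ℝ) ≤ (2:ℝ) ^ (-α) :=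
          Real.rpow_le_rpow_of_exponent_le one_le_two (by linarith)
        rw [Real.rpow_neg_one] at b2
        norm_num at b2
        linarith
      have ht1 : δ * y ^ (-α) ≤ 1 := by nlinarith
      have ht0 : 0 ≤ δ * y ^ (-α) := by nlinarith
      have hhalf := half_le_one_sub_exp ht0 ht1
      have h9 : Real.exp (-2) ≤ Real.exp (-y) := Real.exp_le_exp.mpr (by linarith)
      have hstep : δ/4 ≤ 1 - Real.exp (-(δ * y ^ (-α))) := by
        nlinarith [mul_le_mul_of_nonneg_left htb hδ0.le]
      simp only [hgdef, hfdef]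
      rw [g_eq]
      exact mul_le_mul h9 hstep (by positivity) (Real.exp_nonneg _)
    rw [setIntegral_const, Real.volume_real_Ioc_of_le (by norm_num : (1:ℝ) ≤ 2), smul_eq_mul] at h1
    nlinarith
  have hU2 : M * δ ≤ 1/2 := by linarith
  have hb := bridge hf hJL hJU (by positivity) hU2
  exact ⟨hb.1, by linarith [hb.2]⟩

lemma case_eq :
    ∃ k₁ k₂ : ℝ, 0 < k₁ ∧ k₁ ≤ k₂ ∧
    ∀ᶠ δ in nhdsWithin (0:ℝ) (Ioi 0),
      k₁ * (δ * Real.log (1/δ)) ≤ -Real.log (∫ y in Ioi (0:ℝ), Real.exp (-y - δ / y)) ∧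
      -Real.log (∫ y in Ioi (0:ℝ), Real.exp (-y - δ / y)) ≤ k₂ * (δ * Real.log (1/δ)) := by
  refine ⟨Real.exp (-1) / 2, 6, by positivity, ?_, ?_⟩
  · have := Real.exp_le_one_iff.mpr (show (-1:ℝ) ≤ 0 by norm_num)
    linarith
  have ht : Tendsto (fun δ : ℝ => 3 * (δ * Real.log (1/δ))) (nhdsWithin 0 (Ioi 0)) (nhds 0) := by
    have t1 := tendsto_log_mul_rpow_nhdsGT_zero one_pos
    have t2 : Tendsto (fun δ : ℝ => δ * Real.log (1/δ)) (nhdsWithin 0 (Ioi 0)) (nhds 0) := by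
      have := t1.neg
      rw [neg_zero] at this
      refine this.congr' ?_
      filter_upwards [eventually_mem_nhdsWithin] with x hx
      rw [one_div, Real.log_inv, Real.rpow_one]
      ring
    have := t2.const_mul (3:ℝ)
    simpa using this
  have hev := ht.eventually_lt_const (show (0:ℝ) < 1/4 by norm_num)
  filter_upwards [hev, Ioo_mem_nhdsGT_of_mem
    (show (0:ℝ) ∈ Ico (0:ℝ) (Real.exp (-1)) from ⟨le_rfl, Real.exp_pos _⟩)]
    with δ h4 hδ
  obtain ⟨hδ0, hδe⟩ := hδ
  have hδ1 : δ < 1 := lt_trans hδe (Real.exp_lt_one_iff.mpr (by norm_num))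
  have hlog : 1 ≤ Real.log (1/δ) := by
    rw [Real.le_log_iff_exp_le (by positivity)]
    rw [le_div_iff₀ hδ0]
    have he : Real.exp (-1) * Real.exp 1 = 1 := by rw [← Real.exp_add]; norm_num
    nlinarith [Real.exp_pos 1]
  have hlog0 : 0 ≤ Real.log (1/δ) := by linarith
  set f : ℝ → ℝ := fun y => Real.exp (-y - δ / y) with hfdef
  have hfle : ∀ y ∈ Ioi (0:ℝ), f y ≤ Real.exp (-y) := by
    intro y hy
    have : 0 ≤ δ / y := div_nonneg hδ0.le (le_of_lt (mem_Ioi.mp hy))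
    exact Real.exp_le_exp.mpr (by linarith)
  have hf : IntegrableOn f (Ioi 0) :=
    hint (by fun_prop) (fun y _ => Real.exp_nonneg _) hfle
  set g : ℝ → ℝ := fun y => Real.exp (-y) - f y with hgdef
  have hg : IntegrableOn g (Ioi 0) := hexp_int.sub hf
  have hg0 : ∀ y ∈ Ioi (0:ℝ), 0 ≤ g y := fun y hy => sub_nonneg.2 (hfle y hy)
  have hinv_int : IntegrableOn (fun y : ℝ => y⁻¹) (Ioc δ 1) := by
    refine (ContinuousOn.integrableOn_Icc ?_).mono_set Ioc_subset_Icc_self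
    intro x hx
    exact (continuousAt_inv₀ (ne_of_gt (lt_of_lt_of_le hδ0 hx.1))).continuousWithinAt
  have hinv_val : (∫ y in Ioc δ 1, δ * y⁻¹) = δ * Real.log (1/δ) := by
    rw [integral_const_mul, ← intervalIntegral.integral_of_le hδ1.le,
      integral_inv_of_pos hδ0 one_pos]
  -- upper bound
  have hsplit1 := J_split hg hδ0.le
  have hsplit2 := J_split (hg.mono_set (Ioi_subset_Ioi hδ0.le)) hδ1.le
  have hpiece1 : (∫ y in Ioc (0:ℝ) δ, g y) ≤ δ := by
    have h1 : (∫ y in Ioc (0:ℝ) δ, g y) ≤ ∫ _y in Ioc (0:ℝ) δ, (1:ℝ) := by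
      refine setIntegral_mono_on (hg.mono_set Ioc_subset_Ioi_self)
        (integrableOn_const measure_Ioc_lt_top.ne) measurableSet_Ioc ?_
      intro y hy
      have h2 : Real.exp (-y) ≤ 1 := Real.exp_le_one_iff.mpr (by linarith [hy.1])
      have h3 : 0 ≤ f y := Real.exp_nonneg _
      simp only [hgdef]; linarith
    rw [setIntegral_const, Real.volume_real_Ioc_of_le (by linarith), smul_eq_mul, mul_one] at h1
    linarith
  have hpiece2 : (∫ y in Ioc δ 1, g y) ≤ δ * Real.log (1/δ) := by
    have h1 : (∫ y in Ioc δ 1, g y) ≤ ∫ y in Ioc δ 1, δ * y⁻¹ := by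
      refine setIntegral_mono_on
        (hg.mono_set (Ioc_subset_Ioi_self.trans (Ioi_subset_Ioi hδ0.le)))
        (hinv_int.const_mul δ) measurableSet_Ioc ?_
      intro y hy
      have hy0 : 0 < y := lt_trans hδ0 hy.1
      have ht0 : 0 ≤ δ / y := div_nonneg hδ0.le hy0.le
      have h2 : Real.exp (-y) ≤ 1 := Real.exp_le_one_iff.mpr (by linarith)
      have h3 := @one_sub_exp_le (δ / y)
      have h4' : 0 ≤ 1 - Real.exp (-(δ / y)) := by
        have := Real.exp_le_one_iff.mpr (neg_nonpos.mpr ht0); linarith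
      simp only [hgdef, hfdef]
      rw [g_eq, div_eq_mul_inv] at *
      nlinarith [Real.exp_nonneg (-y)]
    rw [hinv_val] at h1
    exact h1
  have hpiece3 : (∫ y in Ioi (1:ℝ), g y) ≤ δ := by
    have hexp1 : IntegrableOn (fun y : ℝ => Real.exp (-y)) (Ioi 1) := by
      simpa using exp_neg_integrableOn_Ioi 1 one_pos
    have h1 : (∫ y in Ioi (1:ℝ), g y) ≤ ∫ y in Ioi (1:ℝ), δ * Real.exp (-y) := by
      refine setIntegral_mono_on
        (hg.mono_set (Ioi_subset_Ioi (hδ0.le.trans hδ1.le)))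
        (hexp1.const_mul δ) measurableSet_Ioi ?_
      intro y hy
      have hy1 : (1:ℝ) < y := hy
      have hy0 : 0 < y := lt_trans one_pos hy1
      have ht0 : 0 ≤ δ / y := div_nonneg hδ0.le hy0.le
      have htle : δ / y ≤ δ := div_le_self hδ0.le hy1.le
      have h3 := @one_sub_exp_le (δ / y)
      have h4' : 0 ≤ 1 - Real.exp (-(δ / y)) := by
        have := Real.exp_le_one_iff.mpr (neg_nonpos.mpr ht0); linarith
      simp only [hgdef, hfdef]
      rw [g_eq]
      nlinarith [Real.exp_nonneg (-y), Real.exp_le_one_iff.mpr (neg_nonpos.mpr hy0.le)]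
    rw [integral_const_mul, integral_exp_neg_Ioi] at h1
    have : Real.exp (-1:ℝ) ≤ 1 := Real.exp_le_one_iff.mpr (by norm_num)
    nlinarith
  have hJU : (∫ y in Ioi (0:ℝ), g y) ≤ 3 * (δ * Real.log (1/δ)) := by
    have hd : δ ≤ δ * Real.log (1/δ) := by nlinarith
    rw [hsplit1, hsplit2]
    linarith
  -- lower bound
  have hJL : Real.exp (-1) / 2 * (δ * Real.log (1/δ)) ≤ ∫ y in Ioi (0:ℝ), g y := by
    have h1 : (∫ y in Ioc δ 1, (Real.exp (-1) * (δ/2)) * y⁻¹) ≤ ∫ y in Ioi (0:ℝ), g y := by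
      refine J_lower hg hg0 hδ0.le ((hinv_int.const_mul _)) ?_
      intro y hy
      obtain ⟨hyδ, hy1⟩ := hy
      have hy0 : 0 < y := lt_trans hδ0 hyδ
      have ht0 : 0 ≤ δ / y := div_nonneg hδ0.le hy0.le
      have ht1 : δ / y ≤ 1 := (div_le_one hy0).mpr hyδ.le
      have hhalf := half_le_one_sub_exp ht0 ht1
      have h9 : Real.exp (-1) ≤ Real.exp (-y) := Real.exp_le_exp.mpr (by linarith)
      have hstep : Real.exp (-1) * (δ / y / 2) ≤ Real.exp (-y) * (1 - Real.exp (-(δ / y))) :=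
        mul_le_mul h9 hhalf (by positivity) (Real.exp_nonneg _)
      simp only [hgdef, hfdef]
      rw [g_eq]
      calc Real.exp (-1) * (δ/2) * y⁻¹ = Real.exp (-1) * (δ / y / 2) := by
            field_simp
        _ ≤ _ := hstep
    have h2 : (∫ y in Ioc δ 1, (Real.exp (-1) * (δ/2)) * y⁻¹)
        = Real.exp (-1) / 2 * (δ * Real.log (1/δ)) := by
      rw [integral_const_mul, ← intervalIntegral.integral_of_le hδ1.le,
        integral_inv_of_pos hδ0 one_pos]
      ring
    rw [h2] at h1
    exact h1
  have hU2 : 3 * (δ * Real.log (1/δ)) ≤ 1/2 := by linarith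
  have hb := bridge hf hJL hJU (by positivity) hU2
  exact ⟨hb.1, by linarith [hb.2]⟩

end Stmt12Aux

end

/-- For every `α > 0` there exist `0 < k₁ ≤ k₂ < ∞` such that for all sufficiently
small `δ > 0`: if `α > 1` then `k₁·δ^(1/α) ≤ -log ∫_0^∞ e^(-y-δ y^(-α)) dy ≤ k₂·δ^(1/α)`;
if `α = 1` then the bounds are `k₁·δ·log(1/δ)` and `k₂·δ·log(1/δ)`;
if `α < 1` then the bounds are `k₁·δ` and `k₂·δ`. -/
theorem stmt12 (α : ℝ) (hα : 0 < α) :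
    ∃ k₁ k₂ : ℝ, 0 < k₁ ∧ k₁ ≤ k₂ ∧
      ∀ᶠ δ in nhdsWithin (0 : ℝ) (Set.Ioi 0),
        (1 < α →
          k₁ * δ ^ (1 / α) ≤
            -Real.log (∫ y in Set.Ioi (0 : ℝ), Real.exp (-y - δ * y ^ (-α))) ∧
          -Real.log (∫ y in Set.Ioi (0 : ℝ), Real.exp (-y - δ * y ^ (-α))) ≤
            k₂ * δ ^ (1 / α)) ∧
        (α = 1 →
          k₁ * (δ * Real.log (1 / δ)) ≤
            -Real.log (∫ y in Set.Ioi (0 : ℝ), Real.exp (-y - δ / y)) ∧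
          -Real.log (∫ y in Set.Ioi (0 : ℝ), Real.exp (-y - δ / y)) ≤
            k₂ * (δ * Real.log (1 / δ))) ∧
        (α < 1 →
          k₁ * δ ≤
            -Real.log (∫ y in Set.Ioi (0 : ℝ), Real.exp (-y - δ * y ^ (-α))) ∧
          -Real.log (∫ y in Set.Ioi (0 : ℝ), Real.exp (-y - δ * y ^ (-α))) ≤
            k₂ * δ) := by
  rcases lt_trichotomy α 1 with h | h | h
  · obtain ⟨k₁, k₂, h1, h2, h3⟩ := Stmt12Aux.case_lt α hα h
    refine ⟨k₁, k₂, h1, h2, h3.mono fun δ hδ => ?_⟩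
    exact ⟨fun hc => absurd hc (by linarith), fun hc => absurd hc (by linarith), fun _ => hδ⟩
  · obtain ⟨k₁, k₂, h1, h2, h3⟩ := Stmt12Aux.case_eq
    subst h
    refine ⟨k₁, k₂, h1, h2, h3.mono fun δ hδ => ?_⟩
    exact ⟨fun hc => absurd hc (by linarith), fun _ => hδ, fun hc => absurd hc (by linarith)⟩
  · obtain ⟨k₁, k₂, h1, h2, h3⟩ := Stmt12Aux.case_gt α h
    refine ⟨k₁, k₂, h1, h2, h3.mono fun δ hδ => ?_⟩
    exact ⟨fun _ => hδ, fun hc => absurd hc (by linarith), fun hc => absurd hc (by linarith)⟩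
end

section
/- Let V be a positive random variable and τ > 0, θ ∈ ℝ. Then log E[e^{−λV}] ≍ −λ·(log λ)^{−τ}·(log log λ)^{θ} as λ → ∞ holds if and only if log|log P(V ≤ ε)| ≍ ε^{−1/τ}·|log ε|^{θ/τ} as ε → 0⁺, where ≍ means bounded above and below by positive constant multiples. -/
open MeasureTheory Filter Real Topology

noncomputable def psiF (τ θ : ℝ) : ℝ → ℝ := fun ε => ε ^ (-1/τ) * |Real.log ε| ^ (θ/τ)
noncomputable def gF (τ θ : ℝ) : ℝ → ℝ := fun l => Real.log l ^ (-τ) * Real.log (Real.log l) ^ θ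

lemma aux_exp_mul_rpow (a q : ℝ) (ha : 0 < a) :
    Tendsto (fun u : ℝ => Real.exp (a * u) * u ^ q) atTop atTop := by
  apply tendsto_atTop_mono' _ _ (tendsto_exp_mul_div_rpow_atTop (|q|) a ha)
  filter_upwards [eventually_ge_atTop (1:ℝ)] with u hu
  rw [div_eq_mul_inv, ← Real.rpow_neg (by linarith)]
  exact mul_le_mul_of_nonneg_left
    (Real.rpow_le_rpow_of_exponent_le hu (by simpa using neg_abs_le q)) (Real.exp_pos _).le

lemma aux_lin_div (c b d : ℝ) :
    Tendsto (fun s : ℝ => (c + b * s + d * Real.log s) / s) atTop (𝓝 b) := by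
  have h1 : Tendsto (fun s : ℝ => c / s + b + d * (Real.log s / s)) atTop (𝓝 (0 + b + d * 0)) := by
    refine Tendsto.add (Tendsto.add ?_ tendsto_const_nhds) (Tendsto.const_mul d ?_)
    · exact tendsto_const_nhds.div_atTop tendsto_id
    · exact Real.isLittleO_log_id_atTop.tendsto_div_nhds_zero
  rw [show (0:ℝ) + b + d * 0 = b by ring] at h1
  refine h1.congr' ?_
  filter_upwards [eventually_gt_atTop (0:ℝ)] with s hs
  field_simp

lemma aux_g0 (τ θ : ℝ) (hτ : 0 < τ) : Tendsto (gF τ θ) atTop (𝓝 0) := by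
  unfold gF
  have ht : Tendsto (fun t : ℝ => t ^ (-τ) * Real.log t ^ θ) atTop (𝓝 0) := by
    refine ((isLittleO_log_rpow_rpow_atTop θ hτ).tendsto_div_nhds_zero).congr' ?_
    filter_upwards [eventually_gt_atTop (0:ℝ)] with t ht
    rw [div_eq_mul_inv, ← Real.rpow_neg ht.le, mul_comm]
  exact ht.comp Real.tendsto_log_atTop

lemma aux_gpos (τ θ : ℝ) : ∀ᶠ l : ℝ in atTop, 0 < gF τ θ l := by
  filter_upwards [Real.tendsto_log_atTop.eventually_gt_atTop 1] with l hl
  have h0 : (0:ℝ) < Real.log l := lt_trans one_pos hl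
  exact mul_pos (Real.rpow_pos_of_pos h0 _) (Real.rpow_pos_of_pos (Real.log_pos hl) _)

lemma aux_L1 (τ θ K : ℝ) (hτ : 0 < τ) (hK : 0 < K) :
    Tendsto (fun l : ℝ => psiF τ θ (K * gF τ θ l) / Real.log l)
      atTop (𝓝 (K ^ (-1/τ) * τ ^ (θ/τ))) := by
  simp only [psiF, gF]
  have habs : Tendsto (fun s : ℝ => |(Real.log K + (-τ) * s + θ * Real.log s) / s|)
      atTop (𝓝 τ) := by
    have := (aux_lin_div (Real.log K) (-τ) θ).abs
    rwa [abs_neg, abs_of_pos hτ] at this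
  have hpow : Tendsto (fun s : ℝ =>
      K ^ (-1/τ) * |(Real.log K + (-τ) * s + θ * Real.log s) / s| ^ (θ/τ))
      atTop (𝓝 (K ^ (-1/τ) * τ ^ (θ/τ))) :=
    (habs.rpow_const (Or.inl hτ.ne')).const_mul _
  have ht : Tendsto (fun t : ℝ =>
      (K * (t ^ (-τ) * Real.log t ^ θ)) ^ (-1/τ) *
        |Real.log (K * (t ^ (-τ) * Real.log t ^ θ))| ^ (θ/τ) / t) atTop
      (𝓝 (K ^ (-1/τ) * τ ^ (θ/τ))) := by
    refine (hpow.comp Real.tendsto_log_atTop).congr' ?_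
    filter_upwards [Real.tendsto_log_atTop.eventually_gt_atTop 1,
      eventually_gt_atTop (1:ℝ)] with t hs1 ht1
    have ht0 : (0:ℝ) < t := lt_trans one_pos ht1
    set s := Real.log t with hsdef
    have hs0 : 0 < s := lt_trans one_pos hs1
    have hx1 : 0 < t ^ (-τ) := Real.rpow_pos_of_pos ht0 _
    have hx2 : 0 < s ^ θ := Real.rpow_pos_of_pos hs0 _
    have hlog : Real.log (K * (t ^ (-τ) * s ^ θ))
        = Real.log K + (-τ) * s + θ * Real.log s := by
      rw [Real.log_mul hK.ne' (by positivity), Real.log_mul hx1.ne' hx2.ne',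
        Real.log_rpow ht0, Real.log_rpow hs0]
      ring
    have h1 : -τ * (-1/τ) = 1 := by field_simp
    have h2 : θ * (-1/τ) = -(θ/τ) := by ring
    have hr : (K * (t ^ (-τ) * s ^ θ)) ^ (-1/τ)
        = K ^ (-1/τ) * (t * s ^ (-(θ/τ))) := by
      rw [Real.mul_rpow hK.le (by positivity), Real.mul_rpow hx1.le hx2.le,
        ← Real.rpow_mul ht0.le, ← Real.rpow_mul hs0.le, h1, h2, Real.rpow_one]
    simp only [Function.comp_apply, ← hsdef]
    simp only [Function.comp_apply, hlog, hr, abs_div, abs_of_pos hs0,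
      Real.div_rpow (abs_nonneg _) hs0.le, Real.rpow_neg hs0.le]
    field_simp
  exact ht.comp Real.tendsto_log_atTop

lemma aux_hu : Tendsto (fun ε : ℝ => -Real.log ε) (𝓝[>] (0:ℝ)) atTop :=
  tendsto_neg_atBot_atTop.comp Real.tendsto_log_nhdsGT_zero

lemma aux_L2 (τ θ A : ℝ) (hτ : 0 < τ) (hA : 0 < A) :
    Tendsto (fun ε : ℝ => gF τ θ (Real.exp (A * psiF τ θ ε)) / ε)
      (𝓝[>] (0:ℝ)) (𝓝 (A ^ (-τ) * τ ^ (-θ))) := by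
  simp only [psiF, gF]
  have hlin := aux_lin_div (Real.log A) (1/τ) (θ/τ)
  have hZpos : ∀ᶠ u : ℝ in atTop,
      0 < Real.log A + (1/τ) * u + (θ/τ) * Real.log u := by
    filter_upwards [hlin.eventually_const_lt (by positivity : (0:ℝ) < 1/τ),
      eventually_gt_atTop (0:ℝ)] with u h hu0
    have := mul_pos h hu0
    rwa [div_mul_cancel₀ _ hu0.ne'] at this
  have hpowu : Tendsto (fun u : ℝ =>
      A ^ (-τ) * ((Real.log A + (1/τ) * u + (θ/τ) * Real.log u) / u) ^ θ)
      atTop (𝓝 (A ^ (-τ) * τ ^ (-θ))) := by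
    have h := (hlin.rpow_const (p := θ) (Or.inl (by positivity : (1/τ:ℝ) ≠ 0))).const_mul
      (A ^ (-τ))
    have he : ((1:ℝ)/τ) ^ θ = τ ^ (-θ) := by
      rw [one_div, ← Real.rpow_neg_one τ, ← Real.rpow_mul hτ.le]
      ring_nf
    rwa [he] at h
  refine (hpowu.comp aux_hu).congr' ?_
  filter_upwards [aux_hu.eventually hZpos, aux_hu.eventually (eventually_gt_atTop 1),
    self_mem_nhdsWithin] with ε hZ hu1 hε
  have hε0 : (0:ℝ) < ε := hε
  set u := -Real.log ε with hudef
  have hu0 : (0:ℝ) < u := lt_trans one_pos hu1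
  have hlogε : Real.log ε < 0 := by
    have h' := hu0; rw [hudef] at h'; linarith
  have habs : |Real.log ε| = u := abs_of_neg hlogε
  have hψ1 : 0 < ε ^ (-1/τ) := Real.rpow_pos_of_pos hε0 _
  have hψ2 : 0 < u ^ (θ/τ) := Real.rpow_pos_of_pos hu0 _
  have hψ : 0 < ε ^ (-1/τ) * u ^ (θ/τ) := mul_pos hψ1 hψ2
  have hlog : Real.log (A * (ε ^ (-1/τ) * u ^ (θ/τ)))
      = Real.log A + (1/τ) * u + (θ/τ) * Real.log u := by
    rw [Real.log_mul hA.ne' hψ.ne', Real.log_mul hψ1.ne' hψ2.ne',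
      Real.log_rpow hε0, Real.log_rpow hu0]
    have h : Real.log ε = -u := by simp [hudef]
    rw [h]; ring
  have h1 : -1/τ * (-τ) = 1 := by field_simp
  have h2 : θ/τ * (-τ) = -θ := by field_simp
  have hr : (A * (ε ^ (-1/τ) * u ^ (θ/τ))) ^ (-τ)
      = A ^ (-τ) * (ε * u ^ (-θ)) := by
    rw [Real.mul_rpow hA.le hψ.le, Real.mul_rpow hψ1.le hψ2.le,
      ← Real.rpow_mul hε0.le, ← Real.rpow_mul hu0.le, h1, h2, Real.rpow_one]
  simp only [Function.comp_apply, ← hudef]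
  simp only [Function.comp_apply, habs, Real.log_exp, hlog, hr,
    Real.div_rpow hZ.le hu0.le, Real.rpow_neg hu0.le]
  field_simp

lemma aux_L3 (τ θ : ℝ) (hτ : 0 < τ) :
    Tendsto (fun ε : ℝ => psiF τ θ ε / (-Real.log ε)) (𝓝[>] (0:ℝ)) atTop := by
  simp only [psiF]
  refine ((aux_exp_mul_rpow (1/τ) (θ/τ - 1) (by positivity)).comp aux_hu).congr' ?_
  filter_upwards [aux_hu.eventually (eventually_gt_atTop 1), self_mem_nhdsWithin] with ε hu1 hε
  have hε0 : (0:ℝ) < ε := hε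
  set u := -Real.log ε with hudef
  have hu0 : (0:ℝ) < u := lt_trans one_pos hu1
  have hlogε : Real.log ε < 0 := by
    have h' := hu0; rw [hudef] at h'; linarith
  have habs : |Real.log ε| = u := abs_of_neg hlogε
  have hexp : ε ^ (-1/τ) = Real.exp (1/τ * u) := by
    rw [Real.rpow_def_of_pos hε0]
    congr 1
    have h : Real.log ε = -u := by simp [hudef]
    rw [h]; ring
  have hupow : u ^ (θ/τ - 1) = u ^ (θ/τ) / u := by
    rw [Real.rpow_sub hu0, Real.rpow_one]
  simp only [Function.comp_apply, ← hudef]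
  simp only [Function.comp_apply, habs, hexp, hupow]
  ring

lemma aux_L4 (τ θ : ℝ) (hτ : 0 < τ) :
    Tendsto (psiF τ θ) (𝓝[>] (0:ℝ)) atTop := by
  unfold psiF
  refine ((aux_exp_mul_rpow (1/τ) (θ/τ) (by positivity)).comp aux_hu).congr' ?_
  filter_upwards [aux_hu.eventually (eventually_gt_atTop 1), self_mem_nhdsWithin] with ε hu1 hε
  have hε0 : (0:ℝ) < ε := hε
  set u := -Real.log ε with hudef
  have hu0 : (0:ℝ) < u := lt_trans one_pos hu1
  have hlogε : Real.log ε < 0 := by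
    have h' := hu0; rw [hudef] at h'; linarith
  have habs : |Real.log ε| = u := abs_of_neg hlogε
  have hexp : ε ^ (-1/τ) = Real.exp (1/τ * u) := by
    rw [Real.rpow_def_of_pos hε0]
    congr 1
    have h : Real.log ε = -u := by simp [hudef]
    rw [h]; ring
  simp only [Function.comp_apply, ← hudef]
  simp only [Function.comp_apply, habs, hexp]

lemma aux_L5 (τ θ : ℝ) (hτ : 0 < τ) :
    Tendsto (fun l : ℝ => l ^ ((1:ℝ)/2) * gF τ θ l) atTop atTop := by
  simp only [gF]
  have ht : Tendsto (fun t : ℝ => Real.exp ((1/2) * t) * (t ^ (-τ) * Real.log t ^ θ))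
      atTop atTop := by
    apply tendsto_atTop_mono' _ _ (aux_exp_mul_rpow (1/2) (-(τ + |θ|)) one_half_pos)
    filter_upwards [Real.tendsto_log_atTop.eventually_ge_atTop 1,
      eventually_ge_atTop (1:ℝ)] with t hs1 ht1
    have ht0 : (0:ℝ) < t := lt_of_lt_of_le one_pos ht1
    have hs0 : (0:ℝ) < Real.log t := lt_of_lt_of_le one_pos hs1
    have hlt : Real.log t ≤ t := (Real.log_le_sub_one_of_pos ht0).trans (by linarith)
    have key : t ^ (-|θ|) ≤ Real.log t ^ θ := by
      calc t ^ (-|θ|) ≤ Real.log t ^ (-|θ|) :=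
            Real.rpow_le_rpow_of_nonpos hs0 hlt (neg_nonpos.mpr (abs_nonneg _))
        _ ≤ Real.log t ^ θ :=
            Real.rpow_le_rpow_of_exponent_le hs1 (neg_abs_le θ)
    have hsplit : t ^ (-(τ + |θ|)) = t ^ (-τ) * t ^ (-|θ|) := by
      rw [← Real.rpow_add ht0]; ring_nf
    rw [hsplit]
    have h2 : t ^ (-τ) * t ^ (-|θ|) ≤ t ^ (-τ) * Real.log t ^ θ :=
      mul_le_mul_of_nonneg_left key (Real.rpow_pos_of_pos ht0 (-τ)).le
    exact mul_le_mul_of_nonneg_left h2 (Real.exp_pos _).le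
  refine (ht.comp Real.tendsto_log_atTop).congr' ?_
  filter_upwards [eventually_gt_atTop (0:ℝ)] with l hl0
  have h : l ^ ((1:ℝ)/2) = Real.exp ((1/2) * Real.log l) := by
    rw [Real.rpow_def_of_pos hl0]; ring_nf
  simp only [Function.comp_apply, h]

lemma aux_L6 (τ θ : ℝ) (hτ : 0 < τ) :
    Tendsto (fun l : ℝ => l * gF τ θ l) atTop atTop := by
  have h := (tendsto_rpow_atTop (y := (1:ℝ)/2) (by norm_num)).atTop_mul_atTop₀ (aux_L5 τ θ hτ)
  refine h.congr' ?_
  filter_upwards [eventually_ge_atTop (0:ℝ)] with l hl0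
  rw [← mul_assoc, ← Real.rpow_add' hl0 (by norm_num)]
  norm_num

section MT
variable {Ω : Type} [MeasurableSpace Ω] (P : Measure Ω) [IsProbabilityMeasure P]
  (V : Ω → ℝ) (hV : Measurable V)
include hV

lemma aux_int (l : ℝ) (hl : 0 ≤ l) (hVpos : ∀ ω, 0 ≤ V ω) :
    Integrable (fun ω => Real.exp (-(l * V ω))) P := by
  refine Integrable.mono' (integrable_const 1)
    ((hV.const_mul l).neg.exp.aestronglyMeasurable) ?_
  filter_upwards with ω
  rw [Real.norm_eq_abs, abs_of_pos (Real.exp_pos _)]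
  exact Real.exp_le_one_iff.mpr (by nlinarith [hVpos ω])

lemma aux_Lpos (l : ℝ) (hl : 0 ≤ l) (hVpos : ∀ ω, 0 ≤ V ω) :
    0 < ∫ ω, Real.exp (-(l * V ω)) ∂P := by
  rw [integral_pos_iff_support_of_nonneg (fun ω => (Real.exp_pos _).le)
    (aux_int P V hV l hl hVpos)]
  have h : (Function.support fun ω => Real.exp (-(l * V ω))) = Set.univ := by
    ext ω; simp [Function.support, (Real.exp_pos _).ne']
  rw [h]
  simp

lemma aux_Lle1 (l : ℝ) (hl : 0 ≤ l) (hVpos : ∀ ω, 0 ≤ V ω) :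
    ∫ ω, Real.exp (-(l * V ω)) ∂P ≤ 1 := by
  calc ∫ ω, Real.exp (-(l * V ω)) ∂P ≤ ∫ _ω, (1:ℝ) ∂P := by
        refine integral_mono (aux_int P V hV l hl hVpos) (integrable_const 1) fun ω => ?_
        exact Real.exp_le_one_iff.mpr (by nlinarith [hVpos ω])
    _ = 1 := by simp

lemma aux_chernoff_low (l ε : ℝ) (hl : 0 ≤ l) (hVpos : ∀ ω, 0 ≤ V ω) :
    Real.exp (-(l * ε)) * (P {ω | V ω ≤ ε}).toReal ≤ ∫ ω, Real.exp (-(l * V ω)) ∂P := by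
  have hms : MeasurableSet {ω | V ω ≤ ε} := hV measurableSet_Iic
  have h1 : ∫ ω, Set.indicator {ω | V ω ≤ ε} (fun _ => Real.exp (-(l * ε))) ω ∂P
      = Real.exp (-(l * ε)) * (P {ω | V ω ≤ ε}).toReal := by
    rw [integral_indicator_const _ hms]
    simp [mul_comm, Measure.real]
  rw [← h1]
  refine integral_mono ((integrable_const _).indicator hms) (aux_int P V hV l hl hVpos)
    fun ω => ?_
  by_cases hω : ω ∈ {ω | V ω ≤ ε}
  · rw [Set.indicator_of_mem hω]
    exact Real.exp_le_exp.mpr (by nlinarith [hω.out])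
  · rw [Set.indicator_of_notMem hω]
    exact (Real.exp_pos _).le

lemma aux_chernoff_up (l ε : ℝ) (hl : 0 ≤ l) (hVpos : ∀ ω, 0 ≤ V ω) :
    ∫ ω, Real.exp (-(l * V ω)) ∂P ≤ (P {ω | V ω ≤ ε}).toReal + Real.exp (-(l * ε)) := by
  have hms : MeasurableSet {ω | V ω ≤ ε} := hV measurableSet_Iic
  have h1 : ∫ ω, (Set.indicator {ω | V ω ≤ ε} (fun _ => (1:ℝ)) ω + Real.exp (-(l * ε))) ∂P
      = (P {ω | V ω ≤ ε}).toReal + Real.exp (-(l * ε)) := by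
    rw [integral_add ((integrable_const _).indicator hms) (integrable_const _),
      integral_indicator_const _ hms, integral_const]
    simp [Measure.real]
  rw [← h1]
  refine integral_mono (aux_int P V hV l hl hVpos)
    (((integrable_const _).indicator hms).add (integrable_const _)) fun ω => ?_
  by_cases hω : ω ∈ {ω | V ω ≤ ε}
  · rw [Set.indicator_of_mem hω]
    have h : Real.exp (-(l * V ω)) ≤ 1 := Real.exp_le_one_iff.mpr (by nlinarith [hVpos ω])
    nlinarith [(Real.exp_pos (-(l * ε))).le]
  · rw [Set.indicator_of_notMem hω]
    have hω' : ε < V ω := lt_of_not_ge hω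
    have h : Real.exp (-(l * V ω)) ≤ Real.exp (-(l * ε)) :=
      Real.exp_le_exp.mpr (by nlinarith)
    linarith

lemma aux_Flt1 (hVpos : ∀ ω, 0 < V ω) :
    ∀ᶠ ε in 𝓝[>] (0:ℝ), (P {ω | V ω ≤ ε}).toReal < 1 := by
  have hex : ∃ n : ℕ, P {ω | V ω ≤ 1/(n+1)} < 1 := by
    by_contra hc
    push_neg at hc
    have hall : ∀ n : ℕ, P {ω | V ω ≤ 1/(n+1)} = 1 := fun n =>
      le_antisymm prob_le_one (hc n)
    have hcompl : ∀ n : ℕ, P {ω | V ω ≤ 1/(n+1)}ᶜ = 0 := by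
      intro n
      have hms : MeasurableSet {ω | V ω ≤ 1/((n:ℝ)+1)} := hV measurableSet_Iic
      rw [measure_compl hms (measure_ne_top _ _), hall n]
      simp
    have hunion : P (⋃ n : ℕ, {ω | V ω ≤ 1/(n+1)}ᶜ) = 0 :=
      measure_iUnion_null hcompl
    have huniv : (⋃ n : ℕ, {ω | V ω ≤ 1/((n:ℝ)+1)}ᶜ) = Set.univ := by
      ext ω
      simp only [Set.mem_iUnion, Set.mem_compl_iff, Set.mem_setOf_eq, Set.mem_univ, iff_true,
        not_le]
      obtain ⟨n, hn⟩ := exists_nat_one_div_lt (hVpos ω)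
      exact ⟨n, hn⟩
    rw [huniv] at hunion
    simp at hunion
  obtain ⟨n, hn⟩ := hex
  have hmem : Set.Ioc (0:ℝ) (1/(n+1)) ∈ 𝓝[>] (0:ℝ) :=
    Ioc_mem_nhdsGT_of_mem ⟨le_refl _, by positivity⟩
  filter_upwards [hmem] with ε hε
  have hsub : P {ω | V ω ≤ ε} ≤ P {ω | V ω ≤ 1/(n+1)} :=
    measure_mono fun ω (h : V ω ≤ ε) => le_trans h hε.2
  have h2 : P {ω | V ω ≤ ε} < 1 := lt_of_le_of_lt hsub hn
  have h3 := (ENNReal.toReal_lt_toReal (measure_ne_top _ _) ENNReal.one_ne_top).mpr h2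
  simpa using h3

end MT
lemma aux_F_mem (x ψv : ℝ) (hx0 : 0 ≤ x) (hx1 : x ≤ 1) (hψ : 0 < ψv)
    (hb : ψv ≤ Real.log |Real.log x|) :
    0 < x ∧ x < 1 ∧ 1 < |Real.log x| := by
  have h1 : 1 < |Real.log x| := by
    by_contra hle
    push_neg at hle
    have := Real.log_nonpos (abs_nonneg _) hle
    linarith
  have hx0' : 0 < x := by
    rcases eq_or_lt_of_le hx0 with h | h
    · exfalso; rw [← h] at h1; simp [Real.log_zero] at h1; linarith
    · exact h
  have hx1' : x < 1 := by
    rcases eq_or_lt_of_le hx1 with h | h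
    · exfalso; rw [h] at h1; simp [Real.log_one] at h1; linarith
    · exact h
  exact ⟨hx0', hx1', h1⟩

set_option maxHeartbeats 1000000 in
lemma aux_dir2 {Ω : Type} [MeasurableSpace Ω] (P : Measure Ω) [IsProbabilityMeasure P]
    (V : Ω → ℝ) (hV : Measurable V) (hVpos : ∀ ω, 0 < V ω)
    (τ θ : ℝ) (hτ : 0 < τ)
    (h : ∃ c C : ℝ, 0 < c ∧ c ≤ C ∧
      ∀ᶠ ε in nhdsWithin (0 : ℝ) (Set.Ioi 0),
        c * psiF τ θ ε ≤ Real.log |Real.log ((P {ω | V ω ≤ ε}).toReal)| ∧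
        Real.log |Real.log ((P {ω | V ω ≤ ε}).toReal)| ≤ C * psiF τ θ ε) :
    ∃ c C : ℝ, 0 < c ∧ c ≤ C ∧
      ∀ᶠ l in atTop,
        c * (l * gF τ θ l) ≤ -Real.log (∫ ω, Real.exp (-(l * V ω)) ∂P) ∧
        -Real.log (∫ ω, Real.exp (-(l * V ω)) ∂P) ≤ C * (l * gF τ θ l) := by
  obtain ⟨c, C, hc, hcC, hev⟩ := h
  have hC : 0 < C := lt_of_lt_of_le hc hcC
  have hτθ : (0:ℝ) < τ ^ (θ/τ) := Real.rpow_pos_of_pos hτ _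
  have hVnn : ∀ ω, 0 ≤ V ω := fun ω => (hVpos ω).le
  set K := (4 * C * τ ^ (θ/τ)) ^ τ with hKdef
  set k := (c * τ ^ (θ/τ) / 3) ^ τ with hkdef
  have hKb : (0:ℝ) < 4 * C * τ ^ (θ/τ) := by positivity
  have hkb : (0:ℝ) < c * τ ^ (θ/τ) / 3 := by positivity
  have hK : 0 < K := Real.rpow_pos_of_pos hKb _
  have hk : 0 < k := Real.rpow_pos_of_pos hkb _
  clear_value K k
  have hKinv : K ^ (-1/τ) = (4 * C * τ ^ (θ/τ))⁻¹ := by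
    rw [hKdef, ← Real.rpow_mul hKb.le, show τ * (-1/τ) = -1 by field_simp, Real.rpow_neg_one]
  have hkinv : k ^ (-1/τ) = (c * τ ^ (θ/τ) / 3)⁻¹ := by
    rw [hkdef, ← Real.rpow_mul hkb.le, show τ * (-1/τ) = -1 by field_simp, Real.rpow_neg_one]
  have hlim1 := (aux_L1 τ θ K hτ hK).const_mul C
  have hlim2 := (aux_L1 τ θ k hτ hk).const_mul c
  have hval1 : C * (K ^ (-1/τ) * τ ^ (θ/τ)) = 1/4 := by
    rw [hKinv]; field_simp
  have hval2 : c * (k ^ (-1/τ) * τ ^ (θ/τ)) = 3 := by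
    rw [hkinv]; field_simp
  rw [hval1] at hlim1
  rw [hval2] at hlim2
  -- pull back the hypothesis
  have hgK : Tendsto (fun l => K * gF τ θ l) atTop (𝓝[>] (0:ℝ)) := by
    rw [tendsto_nhdsWithin_iff]
    refine ⟨by simpa using (aux_g0 τ θ hτ).const_mul K, ?_⟩
    filter_upwards [aux_gpos τ θ] with l hl
    exact Set.mem_Ioi.mpr (mul_pos hK hl)
  have hgk : Tendsto (fun l => k * gF τ θ l) atTop (𝓝[>] (0:ℝ)) := by
    rw [tendsto_nhdsWithin_iff]
    refine ⟨by simpa using (aux_g0 τ θ hτ).const_mul k, ?_⟩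
    filter_upwards [aux_gpos τ θ] with l hl
    exact Set.mem_Ioi.mpr (mul_pos hk hl)
  have E1 := hgK.eventually hev
  have E2 := hgk.eventually hev
  have E3 : ∀ᶠ l : ℝ in atTop, C * psiF τ θ (K * gF τ θ l) ≤ 1/2 * Real.log l := by
    filter_upwards [hlim1.eventually_lt_const (by norm_num : (1:ℝ)/4 < 1/2),
      Real.tendsto_log_atTop.eventually_gt_atTop 0] with l h1 h2
    have h1' : C * psiF τ θ (K * gF τ θ l) / Real.log l < 1/2 := by
      rwa [mul_div_assoc]
    have := (div_lt_iff₀ h2).mp h1'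
    linarith
  have E4 : ∀ᶠ l : ℝ in atTop, 2 * Real.log l ≤ c * psiF τ θ (k * gF τ θ l) := by
    filter_upwards [hlim2.eventually_const_lt (by norm_num : (2:ℝ) < 3),
      Real.tendsto_log_atTop.eventually_gt_atTop 0] with l h1 h2
    have h1' : 2 < c * psiF τ θ (k * gF τ θ l) / Real.log l := by
      rw [mul_div_assoc]; exact h1
    have := (lt_div_iff₀ h2).mp h1'
    linarith
  have E5 := (aux_L5 τ θ hτ).eventually_ge_atTop 1
  have E6 := (aux_L6 τ θ hτ).eventually_ge_atTop (2 / k * Real.log 2)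
  have E9K : ∀ᶠ l : ℝ in atTop, K * gF τ θ l < 1 := by
    have := (aux_g0 τ θ hτ).const_mul K
    simp only [mul_zero] at this
    exact this.eventually_lt_const one_pos
  have E9k : ∀ᶠ l : ℝ in atTop, k * gF τ θ l < 1 := by
    have := (aux_g0 τ θ hτ).const_mul k
    simp only [mul_zero] at this
    exact this.eventually_lt_const one_pos
  refine ⟨min (k/2) (K+1), max (k/2) (K+1), lt_min (by linarith) (by linarith),
    min_le_max, ?_⟩
  filter_upwards [E1, E2, E3, E4, E5, E6, E9K, E9k, aux_gpos τ θ,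
    Real.tendsto_log_atTop.eventually_gt_atTop 0, eventually_ge_atTop (1:ℝ)]
    with l hE1 hE2 hE3 hE4 hE5 hE6 hE9K hE9k hgpos hlog hl1
  have hl0 : (0:ℝ) < l := lt_of_lt_of_le one_pos hl1
  have hlgnn : 0 ≤ l * gF τ θ l := le_of_lt (mul_pos hl0 hgpos)
  have hL0 : 0 < ∫ ω, Real.exp (-(l * V ω)) ∂P := aux_Lpos P V hV l hl0.le hVnn
  -- ψ positivity at ε₁, ε₂
  have hψpos : ∀ ε : ℝ, 0 < ε → ε < 1 → 0 < psiF τ θ ε := by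
    intro ε h0 h1
    have hla : 0 < |Real.log ε| := abs_pos.mpr (Real.log_neg h0 h1).ne
    exact mul_pos (Real.rpow_pos_of_pos h0 _) (Real.rpow_pos_of_pos hla _)
  ----- upper bound -----
  have hε₁0 : 0 < K * gF τ θ l := mul_pos hK hgpos
  obtain ⟨hup_lo, hup_hi⟩ := hE1
  obtain ⟨hF10, hF11, habs1⟩ := aux_F_mem _ _ ENNReal.toReal_nonneg
    (by simpa using ENNReal.toReal_mono ENNReal.one_ne_top prob_le_one)
    (mul_pos hc (hψpos _ hε₁0 hE9K)) hup_lo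
  have hlogF1 : Real.log ((P {ω | V ω ≤ K * gF τ θ l}).toReal) < 0 := Real.log_neg hF10 hF11
  have habsF1 : |Real.log ((P {ω | V ω ≤ K * gF τ θ l}).toReal)|
      = -Real.log ((P {ω | V ω ≤ K * gF τ θ l}).toReal) := abs_of_neg hlogF1
  have hG1pos : 0 < -Real.log ((P {ω | V ω ≤ K * gF τ θ l}).toReal) := by
    rw [habsF1] at habs1; linarith
  have hG1le : -Real.log ((P {ω | V ω ≤ K * gF τ θ l}).toReal) ≤ l * gF τ θ l := by
    have h1 : -Real.log ((P {ω | V ω ≤ K * gF τ θ l}).toReal)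
        ≤ Real.exp (C * psiF τ θ (K * gF τ θ l)) := by
      rw [← Real.exp_log hG1pos]
      exact Real.exp_le_exp.mpr (by rw [← habsF1]; exact hup_hi)
    have h2 : Real.exp (C * psiF τ θ (K * gF τ θ l)) ≤ Real.exp (1/2 * Real.log l) :=
      Real.exp_le_exp.mpr hE3
    have h3 : Real.exp (1/2 * Real.log l) = l ^ ((1:ℝ)/2) := by
      rw [Real.rpow_def_of_pos hl0, mul_comm]
    have h4 : l ^ ((1:ℝ)/2) ≤ l * gF τ θ l := by
      have h5 := mul_le_mul_of_nonneg_left hE5 (Real.rpow_nonneg hl0.le ((1:ℝ)/2))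
      have hid : l ^ ((1:ℝ)/2) * (l ^ ((1:ℝ)/2) * gF τ θ l) = l * gF τ θ l := by
        rw [← mul_assoc, ← Real.rpow_add hl0]; norm_num
      rw [hid, mul_one] at h5
      exact h5
    linarith [h1, h2.trans_eq h3, h4]
  have hupper : -Real.log (∫ ω, Real.exp (-(l * V ω)) ∂P) ≤ (K+1) * (l * gF τ θ l) := by
    have hcl := aux_chernoff_low P V hV l (K * gF τ θ l) hl0.le hVnn
    have hlog1 : Real.log (Real.exp (-(l * (K * gF τ θ l)))
        * (P {ω | V ω ≤ K * gF τ θ l}).toReal) ≤ Real.log (∫ ω, Real.exp (-(l * V ω)) ∂P) :=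
      Real.log_le_log (by positivity) hcl
    rw [Real.log_mul (Real.exp_pos _).ne' hF10.ne', Real.log_exp] at hlog1
    have hring2 : (K+1) * (l * gF τ θ l) = l * (K * gF τ θ l) + l * gF τ θ l := by ring
    linarith [hlog1, hG1le, hring2]
  ----- lower bound -----
  have hε₂0 : 0 < k * gF τ θ l := mul_pos hk hgpos
  obtain ⟨hlo_lo, hlo_hi⟩ := hE2
  obtain ⟨hF20, hF21, habs2⟩ := aux_F_mem _ _ ENNReal.toReal_nonneg
    (by simpa using ENNReal.toReal_mono ENNReal.one_ne_top prob_le_one)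
    (mul_pos hc (hψpos _ hε₂0 hE9k)) hlo_lo
  have hlogF2 : Real.log ((P {ω | V ω ≤ k * gF τ θ l}).toReal) < 0 := Real.log_neg hF20 hF21
  have habsF2 : |Real.log ((P {ω | V ω ≤ k * gF τ θ l}).toReal)|
      = -Real.log ((P {ω | V ω ≤ k * gF τ θ l}).toReal) := abs_of_neg hlogF2
  have hG2pos : 0 < -Real.log ((P {ω | V ω ≤ k * gF τ θ l}).toReal) := by
    rw [habsF2] at habs2; linarith
  -- G₂ ≥ l * l ≥ l * ε₂
  have hG2ge : l * (k * gF τ θ l) ≤ -Real.log ((P {ω | V ω ≤ k * gF τ θ l}).toReal) := by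
    have h1 : Real.exp (2 * Real.log l)
        ≤ -Real.log ((P {ω | V ω ≤ k * gF τ θ l}).toReal) := by
      rw [← Real.exp_log hG2pos]
      refine Real.exp_le_exp.mpr ?_
      rw [← habsF2]
      linarith [hE4, hlo_lo]
    have h2 : Real.exp (2 * Real.log l) = l * l := by
      rw [two_mul, Real.exp_add, Real.exp_log hl0]
    have h3 : l * (k * gF τ θ l) ≤ l * l :=
      mul_le_mul_of_nonneg_left (le_trans hE9k.le hl1) hl0.le
    linarith [h1, h3, h2 ▸ h1]
  have hlower : (k/2) * (l * gF τ θ l) ≤ -Real.log (∫ ω, Real.exp (-(l * V ω)) ∂P) := by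
    have hcu := aux_chernoff_up P V hV l (k * gF τ θ l) hl0.le hVnn
    -- F₂ ≤ exp(-(l ε₂))
    have hF2le : (P {ω | V ω ≤ k * gF τ θ l}).toReal ≤ Real.exp (-(l * (k * gF τ θ l))) := by
      rw [← Real.exp_log hF20]
      exact Real.exp_le_exp.mpr (by linarith [hG2ge])
    have hsum : ∫ ω, Real.exp (-(l * V ω)) ∂P ≤ 2 * Real.exp (-(l * (k * gF τ θ l))) := by
      linarith [hcu, hF2le]
    have hlog2 : Real.log (∫ ω, Real.exp (-(l * V ω)) ∂P)
        ≤ Real.log 2 + -(l * (k * gF τ θ l)) := by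
      have := Real.log_le_log hL0 hsum
      rwa [Real.log_mul two_ne_zero (Real.exp_pos _).ne', Real.log_exp] at this
    have hlog2' : Real.log 2 ≤ (k/2) * (l * gF τ θ l) := by
      have := mul_le_mul_of_nonneg_left hE6 (by linarith : (0:ℝ) ≤ k/2)
      have hid : k/2 * (2/k * Real.log 2) = Real.log 2 := by
        field_simp
      linarith [hid ▸ this]
    have hring2 : l * (k * gF τ θ l) = 2 * ((k/2) * (l * gF τ θ l)) := by ring
    linarith [hlog2, hlog2', hring2]
  constructor
  · calc min (k/2) (K+1) * (l * gF τ θ l) ≤ (k/2) * (l * gF τ θ l) :=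
        mul_le_mul_of_nonneg_right (min_le_left _ _) hlgnn
      _ ≤ _ := hlower
  · calc -Real.log (∫ ω, Real.exp (-(l * V ω)) ∂P) ≤ (K+1) * (l * gF τ θ l) := hupper
      _ ≤ max (k/2) (K+1) * (l * gF τ θ l) :=
        mul_le_mul_of_nonneg_right (le_max_right _ _) hlgnn
set_option maxHeartbeats 1000000 in
lemma aux_dir1 {Ω : Type} [MeasurableSpace Ω] (P : Measure Ω) [IsProbabilityMeasure P]
    (V : Ω → ℝ) (hV : Measurable V) (hVpos : ∀ ω, 0 < V ω)
    (τ θ : ℝ) (hτ : 0 < τ)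
    (h : ∃ c C : ℝ, 0 < c ∧ c ≤ C ∧
      ∀ᶠ l in atTop,
        c * (l * gF τ θ l) ≤ -Real.log (∫ ω, Real.exp (-(l * V ω)) ∂P) ∧
        -Real.log (∫ ω, Real.exp (-(l * V ω)) ∂P) ≤ C * (l * gF τ θ l)) :
    ∃ c C : ℝ, 0 < c ∧ c ≤ C ∧
      ∀ᶠ ε in nhdsWithin (0 : ℝ) (Set.Ioi 0),
        c * psiF τ θ ε ≤ Real.log |Real.log ((P {ω | V ω ≤ ε}).toReal)| ∧
        Real.log |Real.log ((P {ω | V ω ≤ ε}).toReal)| ≤ C * psiF τ θ ε := by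
  obtain ⟨c, C, hc, hcC, hev⟩ := h
  have hC : 0 < C := lt_of_lt_of_le hc hcC
  have hVnn : ∀ ω, 0 ≤ V ω := fun ω => (hVpos ω).le
  have hτθ : (0:ℝ) < τ ^ (-θ) := Real.rpow_pos_of_pos hτ _
  -- F ε > 0 for all ε > 0
  have hFpos : ∀ ε : ℝ, 0 < ε → 0 < (P {ω | V ω ≤ ε}).toReal := by
    intro ε hε
    by_contra h0
    have hzero : (P {ω | V ω ≤ ε}).toReal = 0 :=
      le_antisymm (not_lt.mp h0) ENNReal.toReal_nonneg
    have hP0 : P {ω | V ω ≤ ε} = 0 := by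
      rcases (ENNReal.toReal_eq_zero_iff _).mp hzero with h1 | h1
      · exact h1
      · exact absurd h1 (measure_ne_top _ _)
    have hae : ∀ᵐ ω ∂P, ¬ (V ω ≤ ε) := by
      have := measure_eq_zero_iff_ae_notMem.mp hP0
      filter_upwards [this] with ω hω
      exact hω
    have hgsm : ∀ᶠ l : ℝ in atTop, gF τ θ l < ε / C :=
      (aux_g0 τ θ hτ).eventually_lt_const (by positivity)
    obtain ⟨l, hevl, hgl, hl1⟩ := (hev.and (hgsm.and (eventually_ge_atTop (1:ℝ)))).exists
    have hl0 : (0:ℝ) < l := lt_of_lt_of_le one_pos hl1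
    have hL0 : 0 < ∫ ω, Real.exp (-(l * V ω)) ∂P := aux_Lpos P V hV l hl0.le hVnn
    have hLle : ∫ ω, Real.exp (-(l * V ω)) ∂P ≤ Real.exp (-(l * ε)) := by
      have hb : ∀ᵐ ω ∂P, Real.exp (-(l * V ω)) ≤ Real.exp (-(l * ε)) := by
        filter_upwards [hae] with ω hω
        have : ε < V ω := lt_of_not_ge hω
        exact Real.exp_le_exp.mpr (by nlinarith)
      have := integral_mono_ae (aux_int P V hV l hl0.le hVnn) (integrable_const _) hb
      simpa using this
    have hlogL : l * ε ≤ -Real.log (∫ ω, Real.exp (-(l * V ω)) ∂P) := by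
      have := Real.log_le_log hL0 hLle
      rw [Real.log_exp] at this
      linarith
    have hlt : C * (l * gF τ θ l) < l * ε := by
      have h1 : C * gF τ θ l < ε := by
        have := (lt_div_iff₀ hC).mp hgl
        linarith
      have h2 := mul_lt_mul_of_pos_left h1 hl0
      have h3 : C * (l * gF τ θ l) = l * (C * gF τ θ l) := by ring
      linarith
    linarith [hevl.2, hlogL, hlt]
  -- constants
  set A := (8 * C * τ ^ (-θ)) ^ (1/τ) with hAdef
  set a := (c * τ ^ (-θ) / 4) ^ (1/τ) with hadef
  have hAb : (0:ℝ) < 8 * C * τ ^ (-θ) := by positivity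
  have hab : (0:ℝ) < c * τ ^ (-θ) / 4 := by positivity
  have hA : 0 < A := Real.rpow_pos_of_pos hAb _
  have ha : 0 < a := Real.rpow_pos_of_pos hab _
  have hAinv : A ^ (-τ) = (8 * C * τ ^ (-θ))⁻¹ := by
    rw [hAdef, ← Real.rpow_mul hAb.le, show 1/τ * (-τ) = -1 by field_simp, Real.rpow_neg_one]
  have hainv : a ^ (-τ) = (c * τ ^ (-θ) / 4)⁻¹ := by
    rw [hadef, ← Real.rpow_mul hab.le, show 1/τ * (-τ) = -1 by field_simp, Real.rpow_neg_one]
  clear_value A a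
  have hlimA := (aux_L2 τ θ A hτ hA).const_mul C
  have hlima := (aux_L2 τ θ a hτ ha).const_mul c
  have hvalA : C * (A ^ (-τ) * τ ^ (-θ)) = 1/8 := by
    rw [hAinv]; field_simp
  have hvala : c * (a ^ (-τ) * τ ^ (-θ)) = 4 := by
    rw [hainv]; field_simp
  rw [hvalA] at hlimA
  rw [hvala] at hlima
  -- eventual bounds
  have E_A : ∀ᶠ ε : ℝ in 𝓝[>] (0:ℝ),
      C * gF τ θ (Real.exp (A * psiF τ θ ε)) ≤ ε / 4 := by
    filter_upwards [hlimA.eventually_lt_const (by norm_num : (1:ℝ)/8 < 1/4),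
      self_mem_nhdsWithin] with ε h1 hε
    have hε0 : (0:ℝ) < ε := hε
    have h1' : C * gF τ θ (Real.exp (A * psiF τ θ ε)) / ε < 1/4 := by
      rw [mul_div_assoc]; exact h1
    have := (div_lt_iff₀ hε0).mp h1'
    linarith
  have E_a : ∀ᶠ ε : ℝ in 𝓝[>] (0:ℝ),
      3 * ε ≤ c * gF τ θ (Real.exp (a * psiF τ θ ε)) := by
    filter_upwards [hlima.eventually_const_lt (by norm_num : (3:ℝ) < 4),
      self_mem_nhdsWithin] with ε h1 hε
    have hε0 : (0:ℝ) < ε := hε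
    have h1' : 3 < c * gF τ θ (Real.exp (a * psiF τ θ ε)) / ε := by
      rw [mul_div_assoc]; exact h1
    have := (lt_div_iff₀ hε0).mp h1'
    linarith
  have hlamA : Tendsto (fun ε : ℝ => Real.exp (A * psiF τ θ ε)) (𝓝[>] (0:ℝ)) atTop :=
    Real.tendsto_exp_atTop.comp ((aux_L4 τ θ hτ).const_mul_atTop hA)
  have hlama : Tendsto (fun ε : ℝ => Real.exp (a * psiF τ θ ε)) (𝓝[>] (0:ℝ)) atTop :=
    Real.tendsto_exp_atTop.comp ((aux_L4 τ θ hτ).const_mul_atTop ha)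
  have EevA := hlamA.eventually hev
  have Eeva := hlama.eventually hev
  have E3A : ∀ᶠ ε : ℝ in 𝓝[>] (0:ℝ), 2 * (-Real.log ε) ≤ A * psiF τ θ ε := by
    filter_upwards [(aux_L3 τ θ hτ).eventually_ge_atTop (2/A),
      aux_hu.eventually (eventually_gt_atTop 0)] with ε h1 h2
    have h3 := (div_le_div_iff₀ hA h2).mp h1
    linarith [h3]
  have E3a : ∀ᶠ ε : ℝ in 𝓝[>] (0:ℝ), 2 * (-Real.log ε) ≤ a * psiF τ θ ε := by
    filter_upwards [(aux_L3 τ θ hτ).eventually_ge_atTop (2/a),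
      aux_hu.eventually (eventually_gt_atTop 0)] with ε h1 h2
    have h3 := (div_le_div_iff₀ ha h2).mp h1
    linarith [h3]
  have EψA : ∀ᶠ ε : ℝ in 𝓝[>] (0:ℝ), 2/A ≤ psiF τ θ ε :=
    (aux_L4 τ θ hτ).eventually_ge_atTop (2/A)
  have Eψ0 : ∀ᶠ ε : ℝ in 𝓝[>] (0:ℝ), 0 < psiF τ θ ε :=
    (aux_L4 τ θ hτ).eventually_gt_atTop 0
  have EFlt := aux_Flt1 P V hV hVpos
  have Eu : ∀ᶠ ε : ℝ in 𝓝[>] (0:ℝ), 0 < -Real.log ε :=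
    aux_hu.eventually (eventually_gt_atTop 0)
  refine ⟨min (a/2) A, max (a/2) A, lt_min (by linarith) hA, min_le_max, ?_⟩
  filter_upwards [EevA, Eeva, E_A, E_a, E3A, E3a, EψA, Eψ0, EFlt, Eu, self_mem_nhdsWithin]
    with ε hEevA hEeva hE_A hE_a hE3A hE3a hEψA hEψ0 hEFlt hEu hEε
  have hε0 : (0:ℝ) < ε := hEε
  have hF0 := hFpos ε hε0
  have hlogF : Real.log ((P {ω | V ω ≤ ε}).toReal) < 0 := Real.log_neg hF0 hEFlt
  have habsF : |Real.log ((P {ω | V ω ≤ ε}).toReal)|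
      = -Real.log ((P {ω | V ω ≤ ε}).toReal) := abs_of_neg hlogF
  have hGpos : 0 < -Real.log ((P {ω | V ω ≤ ε}).toReal) := by linarith
  have hlogε : Real.log ε < 0 := by linarith
  have hlam1 : (0:ℝ) < Real.exp (A * psiF τ θ ε) := Real.exp_pos _
  have hlam2 : (0:ℝ) < Real.exp (a * psiF τ θ ε) := Real.exp_pos _
  have hL₁ : 0 < ∫ ω, Real.exp (-(Real.exp (A * psiF τ θ ε) * V ω)) ∂P :=
    aux_Lpos P V hV _ hlam1.le hVnn
  have hL₂ : 0 < ∫ ω, Real.exp (-(Real.exp (a * psiF τ θ ε) * V ω)) ∂P :=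
    aux_Lpos P V hV _ hlam2.le hVnn
  -- λ₁ ε is large
  have hlamexp : Real.exp (A * psiF τ θ ε / 2) ≤ Real.exp (A * psiF τ θ ε) * ε := by
    nth_rewrite 3 [← Real.exp_log hε0]
    rw [← Real.exp_add]
    exact Real.exp_le_exp.mpr (by linarith)
  have hlamlog2 : 2 * Real.log 2 ≤ Real.exp (A * psiF τ θ ε) * ε := by
    have h1 : (2:ℝ) * Real.log 2 ≤ Real.exp 1 := by
      have := Real.log_two_lt_d9
      have := Real.exp_one_gt_d9
      linarith
    have h2 : Real.exp 1 ≤ Real.exp (A * psiF τ θ ε / 2) := by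
      refine Real.exp_le_exp.mpr ?_
      have h3 := mul_le_mul_of_nonneg_left hEψA hA.le
      have h4 : A * (2/A) = 2 := by field_simp
      linarith
    linarith [hlamexp]
  ----- upper bound : log G ≤ A ψ -----
  have hCg : C * (Real.exp (A * psiF τ θ ε) * gF τ θ (Real.exp (A * psiF τ θ ε)))
      ≤ Real.exp (A * psiF τ θ ε) * (ε/4) := by
    have := mul_le_mul_of_nonneg_left hE_A hlam1.le
    have hr : C * (Real.exp (A * psiF τ θ ε) * gF τ θ (Real.exp (A * psiF τ θ ε)))
        = Real.exp (A * psiF τ θ ε) * (C * gF τ θ (Real.exp (A * psiF τ θ ε))) := by ring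
    linarith
  have hminle : min (-Real.log ((P {ω | V ω ≤ ε}).toReal)) (Real.exp (A * psiF τ θ ε) * ε)
      ≤ Real.log 2 + Real.exp (A * psiF τ θ ε) * (ε/4) := by
    have hcu := aux_chernoff_up P V hV (Real.exp (A * psiF τ θ ε)) ε hlam1.le hVnn
    have hFexp : (P {ω | V ω ≤ ε}).toReal ≤ Real.exp
        (-(min (-Real.log ((P {ω | V ω ≤ ε}).toReal)) (Real.exp (A * psiF τ θ ε) * ε))) := by
      have h0 : (P {ω | V ω ≤ ε}).toReal = Real.exp (Real.log ((P {ω | V ω ≤ ε}).toReal)) :=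
        (Real.exp_log hF0).symm
      nth_rewrite 1 [h0]
      refine Real.exp_le_exp.mpr ?_
      have := min_le_left (-Real.log ((P {ω | V ω ≤ ε}).toReal))
        (Real.exp (A * psiF τ θ ε) * ε)
      linarith
    have hEexp : Real.exp (-(Real.exp (A * psiF τ θ ε) * ε)) ≤ Real.exp
        (-(min (-Real.log ((P {ω | V ω ≤ ε}).toReal)) (Real.exp (A * psiF τ θ ε) * ε))) := by
      refine Real.exp_le_exp.mpr ?_
      have := min_le_right (-Real.log ((P {ω | V ω ≤ ε}).toReal))
        (Real.exp (A * psiF τ θ ε) * ε)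
      linarith
    have hsum : ∫ ω, Real.exp (-(Real.exp (A * psiF τ θ ε) * V ω)) ∂P ≤ 2 * Real.exp
        (-(min (-Real.log ((P {ω | V ω ≤ ε}).toReal)) (Real.exp (A * psiF τ θ ε) * ε))) := by
      linarith
    have hlogsum := Real.log_le_log hL₁ hsum
    rw [Real.log_mul two_ne_zero (Real.exp_pos _).ne', Real.log_exp] at hlogsum
    linarith [hEevA.2, hCg]
  have hGlelam : -Real.log ((P {ω | V ω ≤ ε}).toReal) ≤ Real.exp (A * psiF τ θ ε) * ε := by
    rcases le_total (-Real.log ((P {ω | V ω ≤ ε}).toReal)) (Real.exp (A * psiF τ θ ε) * ε)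
      with h1 | h1
    · exact h1
    · exfalso
      rw [min_eq_right h1] at hminle
      have hlog2pos : (0:ℝ) < Real.log 2 := Real.log_pos one_lt_two
      linarith
  have hupper : Real.log |Real.log ((P {ω | V ω ≤ ε}).toReal)| ≤ A * psiF τ θ ε := by
    rw [habsF]
    have h1 := Real.log_le_log hGpos hGlelam
    rw [Real.log_mul hlam1.ne' hε0.ne', Real.log_exp] at h1
    linarith
  ----- lower bound : (a/2) ψ ≤ log G -----
  have hcg : Real.exp (a * psiF τ θ ε) * (3 * ε)
      ≤ c * (Real.exp (a * psiF τ θ ε) * gF τ θ (Real.exp (a * psiF τ θ ε))) := by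
    have := mul_le_mul_of_nonneg_left hE_a hlam2.le
    have hr : c * (Real.exp (a * psiF τ θ ε) * gF τ θ (Real.exp (a * psiF τ θ ε)))
        = Real.exp (a * psiF τ θ ε) * (c * gF τ θ (Real.exp (a * psiF τ θ ε))) := by ring
    linarith
  have hGge : 2 * (Real.exp (a * psiF τ θ ε) * ε) ≤
      -Real.log ((P {ω | V ω ≤ ε}).toReal) := by
    have hcl := aux_chernoff_low P V hV (Real.exp (a * psiF τ θ ε)) ε hlam2.le hVnn
    have hlog1 := Real.log_le_log (by positivity) hcl
    rw [Real.log_mul (Real.exp_pos _).ne' hF0.ne', Real.log_exp] at hlog1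
    have h2 := hEeva.1
    have hr : Real.exp (a * psiF τ θ ε) * (3 * ε) = 3 * (Real.exp (a * psiF τ θ ε) * ε) := by
      ring
    nlinarith [hcg, hlog1, h2]
  have hlower : (a/2) * psiF τ θ ε ≤ Real.log |Real.log ((P {ω | V ω ≤ ε}).toReal)| := by
    rw [habsF]
    have hlame0 : 0 < Real.exp (a * psiF τ θ ε) * ε := mul_pos hlam2 hε0
    have h1 : Real.log (Real.exp (a * psiF τ θ ε) * ε)
        ≤ Real.log (-Real.log ((P {ω | V ω ≤ ε}).toReal)) :=
      Real.log_le_log hlame0 (by linarith)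
    rw [Real.log_mul hlam2.ne' hε0.ne', Real.log_exp] at h1
    linarith [hE3a, h1]
  constructor
  · calc min (a/2) A * psiF τ θ ε ≤ (a/2) * psiF τ θ ε :=
        mul_le_mul_of_nonneg_right (min_le_left _ _) hEψ0.le
      _ ≤ _ := hlower
  · calc Real.log |Real.log ((P {ω | V ω ≤ ε}).toReal)| ≤ A * psiF τ θ ε := hupper
      _ ≤ max (a/2) A * psiF τ θ ε :=
        mul_le_mul_of_nonneg_right (le_max_right _ _) hEψ0.le
/-- Tauberian equivalence: for a positive random variable `V`, `τ > 0`, `θ ∈ ℝ`,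
`-log E[e^(-λV)] ≍ λ (log λ)^(-τ) (log log λ)^θ` as `λ → ∞` if and only if
`log|log P(V ≤ ε)| ≍ ε^(-1/τ) |log ε|^(θ/τ)` as `ε → 0⁺`. -/
theorem stmt13 (Ω : Type) [MeasurableSpace Ω] (P : Measure Ω) [IsProbabilityMeasure P]
    (V : Ω → ℝ) (hV : Measurable V) (hVpos : ∀ ω, 0 < V ω)
    (τ θ : ℝ) (hτ : 0 < τ) :
    (∃ c C : ℝ, 0 < c ∧ c ≤ C ∧
      ∀ᶠ l in atTop,
        c * (l * Real.log l ^ (-τ) * Real.log (Real.log l) ^ θ) ≤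
          -Real.log (∫ ω, Real.exp (-(l * V ω)) ∂P) ∧
        -Real.log (∫ ω, Real.exp (-(l * V ω)) ∂P) ≤
          C * (l * Real.log l ^ (-τ) * Real.log (Real.log l) ^ θ)) ↔
    (∃ c C : ℝ, 0 < c ∧ c ≤ C ∧
      ∀ᶠ ε in nhdsWithin (0 : ℝ) (Set.Ioi 0),
        c * (ε ^ (-1 / τ) * |Real.log ε| ^ (θ / τ)) ≤
          Real.log |Real.log ((P {ω | V ω ≤ ε}).toReal)| ∧
        Real.log |Real.log ((P {ω | V ω ≤ ε}).toReal)| ≤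
          C * (ε ^ (-1 / τ) * |Real.log ε| ^ (θ / τ))) := by
  constructor
  · intro h
    obtain ⟨c, C, h1, h2, h3⟩ := aux_dir1 P V hV hVpos τ θ hτ (by
      obtain ⟨c, C, h1, h2, h3⟩ := h
      refine ⟨c, C, h1, h2, ?_⟩
      filter_upwards [h3] with l hl
      simpa [gF, ← mul_assoc] using hl)
    exact ⟨c, C, h1, h2, by filter_upwards [h3] with ε hε; simpa [psiF] using hε⟩
  · intro h
    obtain ⟨c, C, h1, h2, h3⟩ := aux_dir2 P V hV hVpos τ θ hτ (by
      obtain ⟨c, C, h1, h2, h3⟩ := h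
      refine ⟨c, C, h1, h2, ?_⟩
      filter_upwards [h3] with ε hε
      simpa [psiF] using hε)
    exact ⟨c, C, h1, h2, by filter_upwards [h3] with l hl; simpa [gF, ← mul_assoc] using hl⟩
end
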